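/- arXiv:1903.07569 — 7 statements merged into one kernel-verified Lean document; each statement's English description precedes it below -/
import Mathlib

section
/- For the poset [m]^n with the componentwise order, the maximum size S(m,n) of an antichain equals the sum over j from 0 to floor(g/m) of (-1)^j * C(n,j) * C(n-1+g-m*j, n-1), where g = floor(n(m-1)/2). -/
open Finset
namespace Sander

def wt {n : ℕ} (x : Fin n → ℕ) : ℕ := ∑ i, x i
def box (m n : ℕ) : Finset (Fin n → ℕ) := Finset.Icc 1 (fun _ => m)

lemma mem_box {m n : ℕ} {x : Fin n → ℕ} : x ∈ box m n ↔ ∀ i, 1 ≤ x i ∧ x i ≤ m := by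
  simp [box, Finset.mem_Icc, Pi.le_def, forall_and]

lemma wt_snoc {n : ℕ} (z : Fin n → ℕ) (t : ℕ) :
    wt (Fin.snoc z t : Fin (n+1) → ℕ) = wt z + t := by
  simp [wt, Fin.sum_univ_castSucc]

lemma snoc_le_snoc {n : ℕ} {z z' : Fin n → ℕ} {t t' : ℕ} (h : z ≤ z') (h' : t ≤ t') :
    (Fin.snoc z t : Fin (n+1) → ℕ) ≤ Fin.snoc z' t' := by
  intro i
  induction i using Fin.lastCases with
  | last => simpa
  | cast i => simpa using h i

lemma mem_box_snoc {m n : ℕ} {z : Fin n → ℕ} {t : ℕ} :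
    (Fin.snoc z t : Fin (n+1) → ℕ) ∈ box m (n+1) ↔ z ∈ box m n ∧ 1 ≤ t ∧ t ≤ m := by
  simp only [mem_box]
  constructor
  · intro h
    exact ⟨fun i => by simpa using h i.castSucc, by simpa using h (Fin.last n)⟩
  · rintro ⟨h1, h2⟩ i
    induction i using Fin.lastCases with
    | last => simpa
    | cast i => simpa using h1 i

structure SCD (m n : ℕ) where
  lo : (Fin n → ℕ) → ℕ
  c : (Fin n → ℕ) → ℕ → (Fin n → ℕ)
  lo2 : ∀ x ∈ box m n, 2 * lo x ≤ n * (m + 1)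
  mem : ∀ x ∈ box m n, ∀ k, lo x ≤ k → k ≤ n * (m + 1) - lo x → c x k ∈ box m n
  wtc : ∀ x ∈ box m n, ∀ k, lo x ≤ k → k ≤ n * (m + 1) - lo x → wt (c x k) = k
  mono : ∀ x ∈ box m n, ∀ k, lo x ≤ k → k + 1 ≤ n * (m + 1) - lo x → c x k ≤ c x (k + 1)
  self : ∀ x ∈ box m n, c x (wt x) = x
  lo_le_w : ∀ x ∈ box m n, lo x ≤ wt x
  w_le : ∀ x ∈ box m n, wt x ≤ n * (m + 1) - lo x
  clo : ∀ x ∈ box m n, ∀ k, lo x ≤ k → k ≤ n * (m + 1) - lo x → lo (c x k) = lo x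
  cc : ∀ x ∈ box m n, ∀ k, lo x ≤ k → k ≤ n * (m + 1) - lo x →
      ∀ k', lo x ≤ k' → k' ≤ n * (m + 1) - lo x → c (c x k) k' = c x k'

lemma box_succ {m n : ℕ} {x : Fin (n+1) → ℕ} (hx : x ∈ box m (n+1)) :
    Fin.init x ∈ box m n ∧ 1 ≤ x (Fin.last n) ∧ x (Fin.last n) ≤ m ∧
      wt x = wt (Fin.init x) + x (Fin.last n) := by
  have hx' : (Fin.snoc (Fin.init x) (x (Fin.last n)) : Fin (n+1) → ℕ) ∈ box m (n+1) := by
    rw [Fin.snoc_init_self]; exact hx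
  have h := mem_box_snoc.mp hx'
  refine ⟨h.1, h.2.1, h.2.2, ?_⟩
  conv_lhs => rw [← Fin.snoc_init_self x]
  rw [wt_snoc]

variable {m n : ℕ}

def SCD.I (D : SCD m n) (x : Fin (n+1) → ℕ) : ℕ :=
  min (wt (Fin.init x) - D.lo (Fin.init x)) (m - x (Fin.last n))

def SCD.LO (D : SCD m n) (x : Fin (n+1) → ℕ) : ℕ := D.lo (Fin.init x) + D.I x + 1

def SCD.CH (D : SCD m n) (x : Fin (n+1) → ℕ) (k : ℕ) : Fin (n+1) → ℕ :=
  if k ≤ D.lo (Fin.init x) + m then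
    Fin.snoc (D.c (Fin.init x) (D.lo (Fin.init x) + D.I x)) (k - D.lo (Fin.init x) - D.I x)
  else Fin.snoc (D.c (Fin.init x) (k - m + D.I x)) (m - D.I x)

lemma SCD.step_chain_elt (D : SCD m n) {x : Fin (n+1) → ℕ} (hx : x ∈ box m (n+1)) {k : ℕ}
    (hk1 : D.LO x ≤ k) (hk2 : k ≤ (n+1) * (m+1) - D.LO x) :
    D.lo (Fin.init (D.CH x k)) = D.lo (Fin.init x) ∧ D.I (D.CH x k) = D.I x ∧
      (∀ j, D.lo (Fin.init x) ≤ j → j ≤ n * (m+1) - D.lo (Fin.init x) →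
        D.c (Fin.init (D.CH x k)) j = D.c (Fin.init x) j) := by
  obtain ⟨hy, ht1, htm, hwx⟩ := box_succ hx
  have ha2 := D.lo2 _ hy
  have haw := D.lo_le_w _ hy
  have hwN := D.w_le _ hy
  have hN' : (n+1) * (m+1) = n * (m+1) + m + 1 := by ring
  have hI : D.I x = min (wt (Fin.init x) - D.lo (Fin.init x)) (m - x (Fin.last n)) := rfl
  rw [SCD.LO] at hk1 hk2
  by_cases hk : k ≤ D.lo (Fin.init x) + m
  · have hCH : D.CH x k = Fin.snoc (D.c (Fin.init x) (D.lo (Fin.init x) + D.I x))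
        (k - D.lo (Fin.init x) - D.I x) := by rw [SCD.CH, if_pos hk]
    refine ⟨?_, ?_, ?_⟩
    · rw [hCH, Fin.init_snoc]
      exact D.clo _ hy _ (by omega) (by omega)
    · rw [hCH]
      conv_lhs => rw [SCD.I]
      rw [Fin.init_snoc, Fin.snoc_last, D.clo _ hy _ (by omega) (by omega),
        D.wtc _ hy _ (by omega) (by omega)]
      omega
    · intro j hj1 hj2
      rw [hCH, Fin.init_snoc]
      exact D.cc _ hy _ (by omega) (by omega) j hj1 hj2
  · have hCH : D.CH x k = Fin.snoc (D.c (Fin.init x) (k - m + D.I x)) (m - D.I x) := by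
      rw [SCD.CH, if_neg hk]
    refine ⟨?_, ?_, ?_⟩
    · rw [hCH, Fin.init_snoc]
      exact D.clo _ hy _ (by omega) (by omega)
    · rw [hCH]
      conv_lhs => rw [SCD.I]
      rw [Fin.init_snoc, Fin.snoc_last, D.clo _ hy _ (by omega) (by omega),
        D.wtc _ hy _ (by omega) (by omega)]
      omega
    · intro j hj1 hj2
      rw [hCH, Fin.init_snoc]
      exact D.cc _ hy _ (by omega) (by omega) j hj1 hj2

def SCD.step (D : SCD m n) : SCD m (n+1) where
  lo := D.LO
  c := D.CH
  lo2 := by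
    intro x hx
    obtain ⟨hy, ht1, htm, hwx⟩ := box_succ hx
    have ha2 := D.lo2 _ hy
    have haw := D.lo_le_w _ hy
    have hwN := D.w_le _ hy
    have hN' : (n+1) * (m+1) = n * (m+1) + m + 1 := by ring
    have hI : D.I x = min (wt (Fin.init x) - D.lo (Fin.init x)) (m - x (Fin.last n)) := rfl
    rw [SCD.LO]
    omega
  mem := by
    intro x hx k hk1 hk2
    obtain ⟨hy, ht1, htm, hwx⟩ := box_succ hx
    have ha2 := D.lo2 _ hy
    have haw := D.lo_le_w _ hy
    have hwN := D.w_le _ hy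
    have hN' : (n+1) * (m+1) = n * (m+1) + m + 1 := by ring
    have hI : D.I x = min (wt (Fin.init x) - D.lo (Fin.init x)) (m - x (Fin.last n)) := rfl
    rw [SCD.LO] at hk1 hk2
    by_cases hk : k ≤ D.lo (Fin.init x) + m
    · rw [SCD.CH, if_pos hk]
      exact mem_box_snoc.mpr ⟨D.mem _ hy _ (by omega) (by omega), by omega, by omega⟩
    · rw [SCD.CH, if_neg hk]
      exact mem_box_snoc.mpr ⟨D.mem _ hy _ (by omega) (by omega), by omega, by omega⟩
  wtc := by
    intro x hx k hk1 hk2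
    obtain ⟨hy, ht1, htm, hwx⟩ := box_succ hx
    have ha2 := D.lo2 _ hy
    have haw := D.lo_le_w _ hy
    have hwN := D.w_le _ hy
    have hN' : (n+1) * (m+1) = n * (m+1) + m + 1 := by ring
    have hI : D.I x = min (wt (Fin.init x) - D.lo (Fin.init x)) (m - x (Fin.last n)) := rfl
    rw [SCD.LO] at hk1 hk2
    by_cases hk : k ≤ D.lo (Fin.init x) + m
    · rw [SCD.CH, if_pos hk, wt_snoc, D.wtc _ hy _ (by omega) (by omega)]
      omega
    · rw [SCD.CH, if_neg hk, wt_snoc, D.wtc _ hy _ (by omega) (by omega)]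
      omega
  mono := by
    intro x hx k hk1 hk2
    obtain ⟨hy, ht1, htm, hwx⟩ := box_succ hx
    have ha2 := D.lo2 _ hy
    have haw := D.lo_le_w _ hy
    have hwN := D.w_le _ hy
    have hN' : (n+1) * (m+1) = n * (m+1) + m + 1 := by ring
    have hI : D.I x = min (wt (Fin.init x) - D.lo (Fin.init x)) (m - x (Fin.last n)) := rfl
    rw [SCD.LO] at hk1 hk2
    by_cases hk' : k + 1 ≤ D.lo (Fin.init x) + m
    · rw [SCD.CH, SCD.CH, if_pos hk', if_pos (by omega)]
      exact snoc_le_snoc le_rfl (by omega)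
    · by_cases hk : k ≤ D.lo (Fin.init x) + m
      · -- corner : k = lo + m
        rw [SCD.CH, SCD.CH, if_pos hk, if_neg hk']
        have h1 : k + 1 - m + D.I x = D.lo (Fin.init x) + D.I x + 1 := by omega
        have h2 : k - D.lo (Fin.init x) - D.I x = m - D.I x := by omega
        rw [h1, h2]
        exact snoc_le_snoc (D.mono _ hy _ (by omega) (by omega)) le_rfl
      · rw [SCD.CH, SCD.CH, if_neg hk, if_neg hk']
        have h1 : k + 1 - m + D.I x = (k - m + D.I x) + 1 := by omega
        rw [h1]
        exact snoc_le_snoc (D.mono _ hy _ (by omega) (by omega)) le_rfl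
  self := by
    intro x hx
    obtain ⟨hy, ht1, htm, hwx⟩ := box_succ hx
    have ha2 := D.lo2 _ hy
    have haw := D.lo_le_w _ hy
    have hwN := D.w_le _ hy
    have hI : D.I x = min (wt (Fin.init x) - D.lo (Fin.init x)) (m - x (Fin.last n)) := rfl
    by_cases hk : wt x ≤ D.lo (Fin.init x) + m
    · rw [SCD.CH, if_pos hk]
      have h1 : D.lo (Fin.init x) + D.I x = wt (Fin.init x) := by omega
      have h2 : wt x - D.lo (Fin.init x) - D.I x = x (Fin.last n) := by omega
      rw [h1, h2, D.self _ hy, Fin.snoc_init_self]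
    · rw [SCD.CH, if_neg hk]
      have h1 : wt x - m + D.I x = wt (Fin.init x) := by omega
      have h2 : m - D.I x = x (Fin.last n) := by omega
      rw [h1, h2, D.self _ hy, Fin.snoc_init_self]
  lo_le_w := by
    intro x hx
    obtain ⟨hy, ht1, htm, hwx⟩ := box_succ hx
    have haw := D.lo_le_w _ hy
    have hI : D.I x = min (wt (Fin.init x) - D.lo (Fin.init x)) (m - x (Fin.last n)) := rfl
    rw [SCD.LO]
    omega
  w_le := by
    intro x hx
    obtain ⟨hy, ht1, htm, hwx⟩ := box_succ hx
    have haw := D.lo_le_w _ hy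
    have hwN := D.w_le _ hy
    have ha2 := D.lo2 _ hy
    have hN' : (n+1) * (m+1) = n * (m+1) + m + 1 := by ring
    have hI : D.I x = min (wt (Fin.init x) - D.lo (Fin.init x)) (m - x (Fin.last n)) := rfl
    rw [SCD.LO]
    omega
  clo := by
    intro x hx k hk1 hk2
    obtain ⟨h1, h2, h3⟩ := D.step_chain_elt hx hk1 hk2
    show D.LO (D.CH x k) = D.LO x
    rw [SCD.LO, SCD.LO, h1, h2]
  cc := by
    intro x hx k hk1 hk2 k' hk1' hk2'
    obtain ⟨hy, ht1, htm, hwx⟩ := box_succ hx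
    have ha2 := D.lo2 _ hy
    have haw := D.lo_le_w _ hy
    have hwN := D.w_le _ hy
    have hN' : (n+1) * (m+1) = n * (m+1) + m + 1 := by ring
    have hI : D.I x = min (wt (Fin.init x) - D.lo (Fin.init x)) (m - x (Fin.last n)) := rfl
    obtain ⟨h1, h2, h3⟩ := D.step_chain_elt hx hk1 hk2
    rw [SCD.LO] at hk1 hk2 hk1' hk2'
    show D.CH (D.CH x k) k' = D.CH x k'
    conv_lhs => rw [SCD.CH]
    conv_rhs => rw [SCD.CH]
    rw [h1, h2]
    by_cases hkk : k' ≤ D.lo (Fin.init x) + m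
    · rw [if_pos hkk, if_pos hkk, h3 _ (by omega) (by omega)]
    · rw [if_neg hkk, if_neg hkk, h3 _ (by omega) (by omega)]

lemma wt_eq_zero {x : Fin 0 → ℕ} : wt x = 0 := by simp [wt]

def SCD.base (m : ℕ) : SCD m 0 where
  lo _ := 0
  c x _ := x
  lo2 _ _ := by simp
  mem x hx _ _ _ := hx
  wtc x _ k hk hk' := by show wt x = k; have h := wt_eq_zero (x := x); simp at hk'; omega
  mono _ _ _ _ h := by simp at h
  self x _ := rfl
  lo_le_w _ _ := by simp
  w_le _ _ := by simp [wt_eq_zero]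
  clo _ _ _ _ _ := rfl
  cc _ _ _ _ _ _ _ _ := rfl

lemma scd_nonempty (m n : ℕ) : Nonempty (SCD m n) := by
  induction n with
  | zero => exact ⟨SCD.base m⟩
  | succ n ih => obtain ⟨D⟩ := ih; exact ⟨D.step⟩

lemma SCD.mono' {m n : ℕ} (D : SCD m n) {x : Fin n → ℕ} (hx : x ∈ box m n) {k k' : ℕ}
    (h1 : D.lo x ≤ k) (h2 : k ≤ k') (h3 : k' ≤ n * (m + 1) - D.lo x) : D.c x k ≤ D.c x k' := by
  induction k' , h2 using Nat.le_induction with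
  | base => exact le_refl _
  | succ k' hkk ih => exact le_trans (ih (by omega)) (D.mono x hx k' (by omega) h3)

def level (m n : ℕ) : Finset (Fin n → ℕ) :=
  (box m n).filter (fun x => wt x = n + n * (m - 1) / 2)

lemma eq_of_le_of_wt_le {n : ℕ} {x y : Fin n → ℕ} (h : x ≤ y) (hw : wt y ≤ wt x) : x = y := by
  by_contra hne
  have : ∃ i, x i ≠ y i := by
    by_contra hc; push_neg at hc; exact hne (funext hc)
  obtain ⟨i, hi⟩ := this
  have : wt x < wt y :=
    Finset.sum_lt_sum (fun j _ => h j) ⟨i, Finset.mem_univ i, lt_of_le_of_ne (h i) hi⟩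
  omega

lemma antichain_card_le {m n : ℕ} (hm : 0 < m) (A : Finset (Fin n → ℕ)) (hA : A ⊆ box m n)
    (hanti : IsAntichain (· ≤ ·) (A : Set (Fin n → ℕ))) : A.card ≤ (level m n).card := by
  obtain ⟨D⟩ := scd_nonempty m n
  set mid := n + n * (m - 1) / 2 with hmid
  have hkey : 2 * mid ≤ n * (m + 1) ∧ n * (m + 1) ≤ 2 * mid + 1 := by
    have h1 : n * (m + 1) = 2 * n + n * (m - 1) := by
      have : m + 1 = 2 + (m - 1) := by omega
      rw [this]; ring
    omega
  have hrange : ∀ x ∈ box m n, D.lo x ≤ mid ∧ mid ≤ n * (m + 1) - D.lo x := by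
    intro x hx
    have := D.lo2 x hx
    omega
  apply Finset.card_le_card_of_injOn (fun x => D.c x mid)
  · intro x hx
    have hxb := hA hx
    obtain ⟨h1, h2⟩ := hrange x hxb
    exact Finset.mem_filter.mpr ⟨D.mem x hxb mid h1 h2, D.wtc x hxb mid h1 h2⟩
  · intro x hx y hy hEq
    simp only [Finset.mem_coe] at hx hy
    simp only [] at hEq
    have hxb := hA hx
    have hyb := hA hy
    obtain ⟨hx1, hx2⟩ := hrange x hxb
    obtain ⟨hy1, hy2⟩ := hrange y hyb
    -- the chains through x and y coincide
    have hmemc := D.mem x hxb mid hx1 hx2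
    have hlox : D.lo (D.c x mid) = D.lo x := D.clo x hxb mid hx1 hx2
    have hloy : D.lo (D.c y mid) = D.lo y := D.clo y hyb mid hy1 hy2
    have hlo : D.lo x = D.lo y := by rw [← hlox, ← hloy, hEq]
    have hcc : ∀ k', D.lo x ≤ k' → k' ≤ n * (m + 1) - D.lo x → D.c x k' = D.c y k' := by
      intro k' h1 h2
      have e1 : D.c (D.c x mid) k' = D.c x k' := D.cc x hxb mid hx1 hx2 k' h1 h2
      have e2 : D.c (D.c y mid) k' = D.c y k' := D.cc y hyb mid hy1 hy2 k' (by omega) (by omega)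
      rw [← e1, ← e2, hEq]
    have hxw1 := D.lo_le_w x hxb
    have hxw2 := D.w_le x hxb
    have hyw1 := D.lo_le_w y hyb
    have hyw2 := D.w_le y hyb
    have hx' : D.c x (wt x) = x := D.self x hxb
    have hy' : D.c x (wt y) = y := by
      rw [hcc (wt y) (by omega) (by omega)]; exact D.self y hyb
    have hcomp : x ≤ y ∨ y ≤ x := by
      rcases le_total (wt x) (wt y) with h | h
      · left; rw [← hx', ← hy']; exact D.mono' hxb hxw1 h (by omega)
      · right; rw [← hx', ← hy']; exact D.mono' hxb (by omega) h (by omega)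
    by_contra hne
    rcases hcomp with h | h
    · exact hanti hx hy hne h
    · exact hanti hy hx (Ne.symm hne) h


def tuples (n b : ℕ) : Finset (Fin n → ℕ) :=
  (Finset.Icc (0 : Fin n → ℕ) (fun _ => b)).filter (fun e => ∑ i, e i = b)

lemma mem_tuples {n b : ℕ} {e : Fin n → ℕ} : e ∈ tuples n b ↔ ∑ i, e i = b := by
  constructor
  · exact fun h => (Finset.mem_filter.mp h).2
  · intro h
    refine Finset.mem_filter.mpr ⟨Finset.mem_Icc.mpr ⟨fun i => Nat.zero_le _, fun i => ?_⟩, h⟩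
    calc e i ≤ ∑ j, e j := Finset.single_le_sum (fun j _ => Nat.zero_le _) (Finset.mem_univ i)
    _ = b := h

lemma tuples_succ (n b : ℕ) : tuples (n+1) b =
    (Finset.range (b+1)).biUnion
      (fun t => (tuples n (b - t)).image (fun e => (Fin.snoc e t : Fin (n+1) → ℕ))) := by
  ext x
  simp only [Finset.mem_biUnion, Finset.mem_range, Finset.mem_image, mem_tuples]
  constructor
  · intro h
    refine ⟨x (Fin.last n), ?_, Fin.init x, ?_, Fin.snoc_init_self x⟩
    · have : x (Fin.last n) ≤ ∑ i, x i :=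
        Finset.single_le_sum (fun j _ => Nat.zero_le _) (Finset.mem_univ _)
      omega
    · have hs : ∑ i, x i = ∑ i : Fin n, Fin.init x i + x (Fin.last n) := by
        rw [Fin.sum_univ_castSucc]; rfl
      omega
  · rintro ⟨t, ht, e, he, rfl⟩
    rw [Fin.sum_univ_castSucc]
    simp only [Fin.snoc_castSucc, Fin.snoc_last]
    omega

lemma card_tuples {n : ℕ} (hn : 0 < n) (b : ℕ) :
    (tuples n b).card = (n - 1 + b).choose (n - 1) := by
  induction n, hn using Nat.le_induction generalizing b with
  | base =>
    have : tuples 1 b = {fun _ => b} := by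
      ext e
      simp only [mem_tuples, Finset.mem_singleton, Fin.sum_univ_one]
      constructor
      · intro h; funext i; rw [Fin.eq_zero i]; exact h
      · intro h; rw [h]
    simp [this]
  | succ n hn ih =>
    rw [tuples_succ, Finset.card_biUnion]
    · have hterm : ∀ t ∈ Finset.range (b+1),
          ((tuples n (b - t)).image (fun e => (Fin.snoc e t : Fin (n+1) → ℕ))).card
            = (n - 1 + (b - t)).choose (n - 1) := by
        intro t _
        rw [Finset.card_image_of_injOn, ih]
        intro e _ e' _ h
        have := congrArg Fin.init h
        simpa [Fin.init_snoc] using this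
      rw [Finset.sum_congr rfl hterm]
      have hre : ∑ t ∈ Finset.range (b+1), (n - 1 + (b - t)).choose (n - 1)
          = ∑ t ∈ Finset.range (b+1), (t + (n-1)).choose (n - 1) := by
        rw [← Finset.sum_range_reflect]
        apply Finset.sum_congr rfl
        intro t ht
        simp only [Finset.mem_range] at ht
        congr 1
        omega
      rw [hre, Nat.sum_range_add_choose]
      congr 1 <;> omega
    · intro t _ t' _ htt
      apply Finset.disjoint_left.mpr
      rintro x hx hx'
      obtain ⟨e, _, rfl⟩ := Finset.mem_image.mp hx
      obtain ⟨e', _, he'⟩ := Finset.mem_image.mp hx'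
      apply htt
      have := congrArg (fun z => z (Fin.last n)) he'
      simpa [Fin.snoc_last] using this.symm

/-- inclusion–exclusion -/
lemma card_filter_lt (m n b : ℕ) (hn : 0 < n) :
    (((tuples n b).filter (fun e => ∀ i, e i < m)).card : ℤ)
      = ∑ j ∈ Finset.range (n+1), (-1 : ℤ) ^ j * (n.choose j) *
          (if m * j ≤ b then (((n - 1 + (b - m * j)).choose (n - 1) : ℕ) : ℤ) else 0) := by
  classical
  have hbad : ∀ K : Finset (Fin n),
      ((tuples n b).filter (fun e => K ⊆ Finset.univ.filter (fun i => m ≤ e i))).card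
        = if m * K.card ≤ b then (n - 1 + (b - m * K.card)).choose (n - 1) else 0 := by
    intro K
    have hKiff : ∀ e : Fin n → ℕ,
        (K ⊆ Finset.univ.filter (fun i => m ≤ e i)) ↔ ∀ i ∈ K, m ≤ e i := by
      intro e
      constructor
      · intro h i hi; simpa using h hi
      · intro h i hi; simp only [Finset.mem_filter, Finset.mem_univ, true_and]; exact h i hi
    have hsumind : ∀ c : ℕ, ∑ i : Fin n, (if i ∈ K then c else 0) = K.card * c := by
      intro c
      rw [Fintype.sum_ite_mem, Finset.sum_const, smul_eq_mul]
    have hcomm : K.card * m = m * K.card := Nat.mul_comm _ _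
    split_ifs with hmb
    · rw [← card_tuples hn (b - m * K.card)]
      apply Finset.card_bij' (fun e _ => fun i => e i - if i ∈ K then m else 0)
        (fun f _ => fun i => f i + if i ∈ K then m else 0)
      · intro e he
        rw [mem_tuples]
        obtain ⟨he1, he2⟩ := Finset.mem_filter.mp he
        rw [mem_tuples] at he1
        rw [hKiff] at he2
        have key : ∑ i : Fin n, (e i - if i ∈ K then m else 0)
            + ∑ i : Fin n, (if i ∈ K then m else 0) = ∑ i, e i := by
          rw [← Finset.sum_add_distrib]
          apply Finset.sum_congr rfl
          intro i _
          split_ifs with hi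
          · have := he2 i hi; omega
          · omega
        rw [hsumind] at key
        omega
      · intro f hf
        rw [mem_tuples] at hf
        refine Finset.mem_filter.mpr ⟨?_, ?_⟩
        · rw [mem_tuples, Finset.sum_add_distrib, hf, hsumind]
          omega
        · rw [hKiff]
          intro i hi
          simp [hi]
      · intro e he
        funext i
        dsimp only
        obtain ⟨he1, he2⟩ := Finset.mem_filter.mp he
        rw [hKiff] at he2
        split_ifs with hi
        · have := he2 i hi; omega
        · omega
      · intro f hf
        funext i
        dsimp only
        split_ifs with hi <;> omega
    · rw [Finset.card_eq_zero, Finset.filter_eq_empty_iff]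
      intro e he
      rw [mem_tuples] at he
      intro hKe
      rw [hKiff] at hKe
      have h1 : ∑ i ∈ K, e i ≤ ∑ i, e i :=
        Finset.sum_le_sum_of_subset (Finset.subset_univ K)
      have h2 : ∑ i ∈ K, m ≤ ∑ i ∈ K, e i := Finset.sum_le_sum (fun i hi => hKe i hi)
      rw [Finset.sum_const, smul_eq_mul] at h2
      omega
  -- inclusion–exclusion over the "bad" sets
  have step1 : (((tuples n b).filter (fun e => ∀ i, e i < m)).card : ℤ)
      = ∑ e ∈ tuples n b,
          (if (Finset.univ.filter (fun i => m ≤ e i)) = ∅ then (1 : ℤ) else 0) := by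
    rw [Finset.natCast_card_filter]
    apply Finset.sum_congr rfl
    intro e _
    congr 1
    simp only [eq_iff_iff]
    rw [Finset.filter_eq_empty_iff]
    simp only [Finset.mem_univ, true_implies, forall_const, Nat.not_le]
  rw [step1]
  have step2 : ∀ e : Fin n → ℕ,
      (if (Finset.univ.filter (fun i => m ≤ e i)) = ∅ then (1 : ℤ) else 0)
        = ∑ K ∈ (Finset.univ : Finset (Fin n)).powerset,
            (if K ⊆ Finset.univ.filter (fun i => m ≤ e i) then (-1 : ℤ) ^ K.card else 0) := by
    intro e
    rw [← Finset.sum_filter]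
    have : Finset.filter (fun K => K ⊆ Finset.univ.filter (fun i => m ≤ e i))
        (Finset.univ : Finset (Fin n)).powerset
          = (Finset.univ.filter (fun i => m ≤ e i)).powerset := by
      ext K
      simp [Finset.mem_powerset, Finset.mem_filter]
    rw [this, Finset.sum_powerset_neg_one_pow_card]
  rw [Finset.sum_congr rfl (fun e _ => step2 e), Finset.sum_comm]
  have step3 : ∀ K : Finset (Fin n),
      ∑ e ∈ tuples n b, (if K ⊆ Finset.univ.filter (fun i => m ≤ e i) then (-1 : ℤ) ^ K.card else 0)
        = (-1 : ℤ) ^ K.card *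
            (if m * K.card ≤ b then (((n - 1 + (b - m * K.card)).choose (n - 1) : ℕ) : ℤ) else 0) := by
    intro K
    rw [← Finset.sum_filter, Finset.sum_const, hbad K]
    split_ifs with h
    · rw [nsmul_eq_mul]; ring
    · simp
  rw [Finset.sum_congr rfl (fun K _ => step3 K)]
  -- group by cardinality
  have huniv : (Finset.univ : Finset (Fin n)).card = n := by simp
  rw [show ((Finset.univ : Finset (Fin n)).powerset)
      = (Finset.range ((Finset.univ : Finset (Fin n)).card + 1)).disjiUnion
          (fun i => Finset.powersetCard i Finset.univ)
          (show Set.PairwiseDisjoint _ (fun i => Finset.powersetCard i (Finset.univ : Finset (Fin n))) from fun i _ j _ hij => Finset.disjoint_left.mpr fun K hi hj => hij ((Finset.mem_powersetCard.mp hi).2.symm.trans (Finset.mem_powersetCard.mp hj).2))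
      from Finset.powerset_card_disjiUnion _, Finset.sum_disjiUnion, huniv]
  apply Finset.sum_congr rfl
  intro j _
  have hcardj : ∀ K ∈ Finset.powersetCard j (Finset.univ : Finset (Fin n)), K.card = j :=
    fun K hK => (Finset.mem_powersetCard.mp hK).2
  rw [Finset.sum_congr rfl (fun K hK => by rw [hcardj K hK]), Finset.sum_const,
    Finset.card_powersetCard, huniv, nsmul_eq_mul]
  push_cast
  ring

lemma sum_add_n {n : ℕ} (f : Fin n → ℕ) : ∑ i, (f i + 1) = (∑ i, f i) + n := by
  rw [Finset.sum_add_distrib, Finset.sum_const, smul_eq_mul, mul_one, Finset.card_univ,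
    Fintype.card_fin]

lemma card_level_eq {m n : ℕ} (hm : 0 < m) :
    (level m n).card = ((tuples n (n * (m-1) / 2)).filter (fun e => ∀ i, e i < m)).card := by
  have himg : (tuples n (n * (m-1) / 2)).filter (fun e => ∀ i, e i < m)
      = (level m n).image (fun x => fun i => x i - 1) := by
    ext e
    simp only [Finset.mem_filter, Finset.mem_image, mem_tuples, level, mem_box]
    constructor
    · rintro ⟨hsum, hlt⟩
      refine ⟨fun i => e i + 1, ⟨fun i => ⟨by show 1 ≤ e i + 1; omega,
        by show e i + 1 ≤ m; have := hlt i; omega⟩, ?_⟩, ?_⟩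
      · show wt (fun i => e i + 1) = _
        rw [wt, sum_add_n, hsum]
        omega
      · funext i
        simp
    · rintro ⟨x, ⟨hxb, hxw⟩, rfl⟩
      have hw : wt x = ∑ i, x i := rfl
      have h1 : ∑ i : Fin n, ((x i - 1) + 1) = ∑ i, x i :=
        Finset.sum_congr rfl (fun i _ => by have := (hxb i).1; omega)
      rw [sum_add_n] at h1
      have hrfl : (∑ i : Fin n, (fun i => x i - 1) i) = ∑ i : Fin n, (x i - 1) := rfl
      constructor
      · omega
      · intro i
        have := hxb i
        show x i - 1 < m
        omega
  rw [himg, Finset.card_image_of_injOn]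
  intro x hx y hy hxy
  simp only [Finset.mem_coe, level, Finset.mem_filter, mem_box] at hx hy
  funext i
  have h1 := congrFun hxy i
  simp only at h1
  have h2 := (hx.1 i).1
  have h3 := (hy.1 i).1
  omega

end Sander

/-- Sander's theorem: the maximum size `S(m,n)` of an antichain in `[m]^n`
(with the componentwise order) equals
`∑_{j=0}^{⌊g/m⌋} (-1)^j C(n,j) C(n-1+g-mj, n-1)` where `g = ⌊n(m-1)/2⌋`. -/
theorem sander_formula (m n : ℕ) (hm : 0 < m) (hn : 0 < n) (S : ℕ)
    (hS : IsGreatest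
      {k : ℕ | ∃ A : Finset (Fin n → ℕ),
        A ⊆ Finset.Icc 1 (fun _ => m) ∧
        IsAntichain (· ≤ ·) (A : Set (Fin n → ℕ)) ∧ A.card = k} S) :
    (S : ℤ) =
      ∑ j ∈ Finset.range (n * (m - 1) / 2 / m + 1),
        (-1 : ℤ) ^ j * (n.choose j) *
          ((n - 1 + n * (m - 1) / 2 - m * j).choose (n - 1)) := by
  classical
  obtain ⟨⟨A, hAsub, hAanti, hAcard⟩, hub⟩ := hS
  set g := n * (m - 1) / 2 with hg
  have hlevel_anti : IsAntichain (· ≤ ·) ((Sander.level m n : Finset (Fin n → ℕ)) : Set (Fin n → ℕ)) := by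
    intro x hx y hy hne hle
    simp only [Finset.mem_coe] at hx hy
    obtain ⟨_, hxw⟩ := Finset.mem_filter.mp hx
    obtain ⟨_, hyw⟩ := Finset.mem_filter.mp hy
    exact hne (Sander.eq_of_le_of_wt_le hle (by omega))
  have h2 : (Sander.level m n).card ≤ S :=
    hub ⟨Sander.level m n, fun x hx => (Finset.mem_filter.mp hx).1, hlevel_anti, rfl⟩
  have h1 : S ≤ (Sander.level m n).card := by
    rw [← hAcard]
    exact Sander.antichain_card_le hm A hAsub hAanti
  have hSlev : S = (Sander.level m n).card := le_antisymm h1 h2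
  rw [hSlev, Sander.card_level_eq hm, Sander.card_filter_lt m n (n * (m-1) / 2) hn]
  have hgm : g / m ≤ n := by
    have hgle : g ≤ n * m := by
      calc g ≤ n * (m - 1) := Nat.div_le_self _ _
      _ ≤ n * m := Nat.mul_le_mul_left n (by omega)
    calc g / m ≤ n * m / m := Nat.div_le_div_right hgle
    _ = n := Nat.mul_div_cancel n hm
  have hdivlt : ∀ j : ℕ, g / m < j → ¬ (m * j ≤ g) := by
    intro j hj hc
    have hcomm : m * j = j * m := Nat.mul_comm m j
    have h2 : j ≤ g / m := Nat.le_div_iff_mul_le hm |>.mpr (by omega)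
    omega
  calc (∑ j ∈ Finset.range (n+1), (-1 : ℤ) ^ j * (n.choose j) *
          (if m * j ≤ n * (m-1) / 2 then (((n - 1 + (n * (m-1) / 2 - m * j)).choose (n - 1) : ℕ) : ℤ) else 0))
      = ∑ j ∈ Finset.range (g / m + 1), (-1 : ℤ) ^ j * (n.choose j) *
          (if m * j ≤ n * (m-1) / 2 then (((n - 1 + (n * (m-1) / 2 - m * j)).choose (n - 1) : ℕ) : ℤ) else 0) := by
        refine (Finset.sum_subset (Finset.range_subset_range.mpr (by omega)) ?_).symm
        intro j hj hjn
        simp only [Finset.mem_range] at hj hjn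
        rw [if_neg (hdivlt j (by omega)), mul_zero]
    _ = ∑ j ∈ Finset.range (g / m + 1),
          (-1 : ℤ) ^ j * (n.choose j) * ((n - 1 + n * (m - 1) / 2 - m * j).choose (n - 1)) := by
        apply Finset.sum_congr rfl
        intro j hj
        simp only [Finset.mem_range] at hj
        have hmj : m * j ≤ g := by
          have h2 := Nat.le_div_iff_mul_le hm |>.mp (by omega : j ≤ g / m)
          have hcomm : m * j = j * m := Nat.mul_comm m j
          omega
        rw [if_pos (by omega : m * j ≤ n * (m-1) / 2)]
        have harg : n - 1 + (n * (m-1) / 2 - m * j) = n - 1 + n * (m - 1) / 2 - m * j := by omega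
        rw [harg]
end

section
/- In the product of chains ∏_{i=1}^n [m_i] with componentwise order, the set A = { x : ∑_i x_i = h }, where h = floor((n + ∑_i m_i)/2), is an antichain of maximum cardinality. -/
/-- Data of a symmetric chain decomposition of `Icc 1 m` in `Fin n → ℕ`:
`f x` is the chain through `x`, parametrized by coordinate-sum (rank),
defined on ranks `[a x, b x]`, with `a x + b x = n + ∑ m i`. -/
structure SCD (n : ℕ) (m : Fin n → ℕ) where
  f : (Fin n → ℕ) → ℕ → (Fin n → ℕ)
  a : (Fin n → ℕ) → ℕ
  b : (Fin n → ℕ) → ℕ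
  hab : ∀ x ∈ Finset.Icc 1 m, a x + b x = n + ∑ i, m i
  hax : ∀ x ∈ Finset.Icc 1 m, a x ≤ ∑ i, x i
  hxb : ∀ x ∈ Finset.Icc 1 m, ∑ i, x i ≤ b x
  mem : ∀ x ∈ Finset.Icc 1 m, ∀ r, a x ≤ r → r ≤ b x → f x r ∈ Finset.Icc 1 m
  sum : ∀ x ∈ Finset.Icc 1 m, ∀ r, a x ≤ r → r ≤ b x → ∑ i, f x r i = r
  self : ∀ x ∈ Finset.Icc 1 m, f x (∑ i, x i) = x
  mono : ∀ x ∈ Finset.Icc 1 m, ∀ r r', a x ≤ r → r ≤ r' → r' ≤ b x → f x r ≤ f x r'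
  coh : ∀ x ∈ Finset.Icc 1 m, ∀ r, a x ≤ r → r ≤ b x →
      f (f x r) = f x ∧ a (f x r) = a x ∧ b (f x r) = b x

namespace SCD

/-- membership in the box, head/tail version -/
lemma mem_Icc_iff {n : ℕ} {m x : Fin (n + 1) → ℕ} :
    x ∈ Finset.Icc 1 m ↔
      1 ≤ x 0 ∧ x 0 ≤ m 0 ∧ Fin.tail x ∈ Finset.Icc 1 (Fin.tail m) := by
  simp only [Finset.mem_Icc, Pi.le_def, Pi.one_apply, Fin.forall_fin_succ, Fin.tail]
  tauto

lemma sum_eq {n : ℕ} (x : Fin (n + 1) → ℕ) :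
    ∑ i, x i = x 0 + ∑ i, Fin.tail x i := by
  rw [Fin.sum_univ_succ]; rfl

variable {n : ℕ} {m : Fin (n + 1) → ℕ}

/-- which subchain of the product an element belongs to -/
def t (D : SCD n (Fin.tail m)) (x : Fin (n + 1) → ℕ) : ℕ :=
  if x 0 + ∑ i, Fin.tail x i ≤ D.b (Fin.tail x) + 1 then x 0 - 1
  else D.b (Fin.tail x) - ∑ i, Fin.tail x i

lemma t_def (D : SCD n (Fin.tail m)) (x : Fin (n + 1) → ℕ) :
    D.t x = if x 0 + ∑ i, Fin.tail x i ≤ D.b (Fin.tail x) + 1 then x 0 - 1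
      else D.b (Fin.tail x) - ∑ i, Fin.tail x i := rfl

/-- the chain map for the product -/
def F (D : SCD n (Fin.tail m)) (x : Fin (n + 1) → ℕ) (r : ℕ) : Fin (n + 1) → ℕ :=
  if r ≤ D.b (Fin.tail x) + 1 then
    Fin.cons (D.t x + 1) (D.f (Fin.tail x) (r - (D.t x + 1)))
  else
    Fin.cons (r - (D.b (Fin.tail x) - D.t x)) (D.f (Fin.tail x) (D.b (Fin.tail x) - D.t x))

lemma F_def (D : SCD n (Fin.tail m)) (x : Fin (n + 1) → ℕ) (r : ℕ) :
    D.F x r = if r ≤ D.b (Fin.tail x) + 1 then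
      Fin.cons (D.t x + 1) (D.f (Fin.tail x) (r - (D.t x + 1)))
    else
      Fin.cons (r - (D.b (Fin.tail x) - D.t x))
        (D.f (Fin.tail x) (D.b (Fin.tail x) - D.t x)) := rfl

def A (D : SCD n (Fin.tail m)) (x : Fin (n + 1) → ℕ) : ℕ :=
  D.a (Fin.tail x) + D.t x + 1

def B (D : SCD n (Fin.tail m)) (x : Fin (n + 1) → ℕ) : ℕ :=
  D.b (Fin.tail x) + m 0 - D.t x

lemma tail_mem {x : Fin (n + 1) → ℕ} (hx : x ∈ Finset.Icc 1 m) :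
    Fin.tail x ∈ Finset.Icc 1 (Fin.tail m) :=
  (mem_Icc_iff.mp hx).2.2

/-- basic bounds on `t` -/
lemma t_bounds (D : SCD n (Fin.tail m)) {x : Fin (n + 1) → ℕ}
    (hx : x ∈ Finset.Icc 1 m) :
    D.t x + 1 ≤ m 0 ∧ D.a (Fin.tail x) + D.t x ≤ D.b (Fin.tail x) ∧
      D.a (Fin.tail x) + D.t x + 1 ≤ x 0 + ∑ i, Fin.tail x i ∧
      x 0 + ∑ i, Fin.tail x i ≤ D.b (Fin.tail x) + m 0 - D.t x := by
  obtain ⟨h1, h2, hz⟩ := mem_Icc_iff.mp hx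
  have ha := D.hax _ hz
  have hb := D.hxb _ hz
  rw [t_def]
  split <;> omega

/-- extension of the chain-parameter equality: `F` depends only on the data below -/
lemma F_param {x y : Fin (n + 1) → ℕ} (D : SCD n (Fin.tail m))
    (h1 : D.f (Fin.tail y) = D.f (Fin.tail x))
    (h2 : D.b (Fin.tail y) = D.b (Fin.tail x)) (h3 : D.t y = D.t x) :
    D.F y = D.F x := by
  funext r
  rw [F_def, F_def, h1, h2, h3]

/-- the inductive step: extend an SCD by one more coordinate -/
def step {n : ℕ} (m : Fin (n + 1) → ℕ) (D : SCD n (Fin.tail m)) : SCD (n + 1) m where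
  f := D.F
  a := D.A
  b := D.B
  hab := by
    intro x hx
    obtain ⟨ht1, ht2, ht3, ht4⟩ := t_bounds D hx
    have hab := D.hab _ (tail_mem hx)
    have hsm := sum_eq m
    unfold A B
    omega
  hax := by
    intro x hx
    obtain ⟨ht1, ht2, ht3, ht4⟩ := t_bounds D hx
    have hsx := sum_eq x
    unfold A
    omega
  hxb := by
    intro x hx
    obtain ⟨ht1, ht2, ht3, ht4⟩ := t_bounds D hx
    have hsx := sum_eq x
    unfold B
    omega
  mem := by
    intro x hx r har hrb
    obtain ⟨ht1, ht2, ht3, ht4⟩ := t_bounds D hx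
    have hz := tail_mem hx
    unfold A at har; unfold B at hrb
    by_cases h : r ≤ D.b (Fin.tail x) + 1
    · rw [F_def, if_pos h, mem_Icc_iff, Fin.cons_zero, Fin.tail_cons]
      exact ⟨by omega, by omega, D.mem _ hz _ (by omega) (by omega)⟩
    · rw [F_def, if_neg h, mem_Icc_iff, Fin.cons_zero, Fin.tail_cons]
      exact ⟨by omega, by omega, D.mem _ hz _ (by omega) (by omega)⟩
  sum := by
    intro x hx r har hrb
    obtain ⟨ht1, ht2, ht3, ht4⟩ := t_bounds D hx
    have hz := tail_mem hx
    unfold A at har; unfold B at hrb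
    by_cases h : r ≤ D.b (Fin.tail x) + 1
    · rw [F_def, if_pos h, Fin.sum_cons, D.sum _ hz _ (by omega) (by omega)]
      omega
    · rw [F_def, if_neg h, Fin.sum_cons, D.sum _ hz _ (by omega) (by omega)]
      omega
  self := by
    intro x hx
    obtain ⟨h1, h2, hz⟩ := mem_Icc_iff.mp hx
    have ha := D.hax _ hz
    have hb := D.hxb _ hz
    rw [sum_eq x, F_def, t_def]
    by_cases h : x 0 + ∑ i, Fin.tail x i ≤ D.b (Fin.tail x) + 1
    · rw [if_pos h, if_pos h]
      have e1 : x 0 - 1 + 1 = x 0 := by omega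
      rw [e1]
      have e2 : x 0 + ∑ i, Fin.tail x i - x 0 = ∑ i, Fin.tail x i := by omega
      rw [e2, D.self _ hz, Fin.cons_self_tail]
    · rw [if_neg h, if_neg h]
      have e1 : D.b (Fin.tail x) - (D.b (Fin.tail x) - ∑ i, Fin.tail x i)
          = ∑ i, Fin.tail x i := by omega
      rw [e1, D.self _ hz]
      have e2 : x 0 + ∑ i, Fin.tail x i - ∑ i, Fin.tail x i = x 0 := by omega
      rw [e2, Fin.cons_self_tail]
  mono := by
    intro x hx r r' har hrr hrb
    obtain ⟨ht1, ht2, ht3, ht4⟩ := t_bounds D hx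
    have hz := tail_mem hx
    unfold A at har; unfold B at hrb
    by_cases h : r ≤ D.b (Fin.tail x) + 1 <;>
      by_cases h' : r' ≤ D.b (Fin.tail x) + 1
    · rw [F_def, F_def, if_pos h, if_pos h', Fin.cons_le_cons]
      exact ⟨le_refl _, D.mono _ hz _ _ (by omega) (by omega) (by omega)⟩
    · rw [F_def, F_def, if_pos h, if_neg h', Fin.cons_le_cons]
      exact ⟨by omega, D.mono _ hz _ _ (by omega) (by omega) (by omega)⟩
    · omega
    · rw [F_def, F_def, if_neg h, if_neg h', Fin.cons_le_cons]
      exact ⟨by omega, le_refl _⟩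
  coh := by
    intro x hx r har hrb
    obtain ⟨ht1, ht2, ht3, ht4⟩ := t_bounds D hx
    have hz := tail_mem hx
    unfold A at har; unfold B at hrb
    by_cases h : r ≤ D.b (Fin.tail x) + 1
    · have hsa : D.a (Fin.tail x) ≤ r - (D.t x + 1) := by omega
      have hsb : r - (D.t x + 1) ≤ D.b (Fin.tail x) := by omega
      have hFx : D.F x r
          = Fin.cons (D.t x + 1) (D.f (Fin.tail x) (r - (D.t x + 1))) := by
        rw [F_def, if_pos h]
      have htail : Fin.tail (D.F x r) = D.f (Fin.tail x) (r - (D.t x + 1)) := by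
        rw [hFx, Fin.tail_cons]
      have hhead : (D.F x r) 0 = D.t x + 1 := by rw [hFx, Fin.cons_zero]
      obtain ⟨hcf, hca, hcb⟩ := D.coh _ hz _ hsa hsb
      have hsum : ∑ i, D.f (Fin.tail x) (r - (D.t x + 1)) i = r - (D.t x + 1) :=
        D.sum _ hz _ hsa hsb
      have htt : D.t (D.F x r) = D.t x := by
        rw [t_def, htail, hhead, hsum, hcb, if_pos (by omega)]
        omega
      refine ⟨F_param D (by rw [htail, hcf]) (by rw [htail, hcb]) htt, ?_, ?_⟩
      · unfold A; rw [htail, htt, hca]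
      · unfold B; rw [htail, htt, hcb]
    · have hsa : D.a (Fin.tail x) ≤ D.b (Fin.tail x) - D.t x := by omega
      have hsb : D.b (Fin.tail x) - D.t x ≤ D.b (Fin.tail x) := by omega
      have hFx : D.F x r = Fin.cons (r - (D.b (Fin.tail x) - D.t x))
          (D.f (Fin.tail x) (D.b (Fin.tail x) - D.t x)) := by
        rw [F_def, if_neg h]
      have htail : Fin.tail (D.F x r)
          = D.f (Fin.tail x) (D.b (Fin.tail x) - D.t x) := by
        rw [hFx, Fin.tail_cons]
      have hhead : (D.F x r) 0 = r - (D.b (Fin.tail x) - D.t x) := by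
        rw [hFx, Fin.cons_zero]
      obtain ⟨hcf, hca, hcb⟩ := D.coh _ hz _ hsa hsb
      have hsum : ∑ i, D.f (Fin.tail x) (D.b (Fin.tail x) - D.t x) i
          = D.b (Fin.tail x) - D.t x := D.sum _ hz _ hsa hsb
      have htt : D.t (D.F x r) = D.t x := by
        rw [t_def, htail, hhead, hsum, hcb, if_neg (by omega)]
        omega
      refine ⟨F_param D (by rw [htail, hcf]) (by rw [htail, hcb]) htt, ?_, ?_⟩
      · unfold A; rw [htail, htt, hca]
      · unfold B; rw [htail, htt, hcb]

/-- An SCD exists for every box. -/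
def scd : ∀ (n : ℕ) (m : Fin n → ℕ), SCD n m
  | 0, _ => {
      f := fun x _ => x
      a := fun _ => 0
      b := fun _ => 0
      hab := by intro x _; simp
      hax := by intro x _; simp
      hxb := by intro x _; simp
      mem := by intro x hx r _ _; exact hx
      sum := by
        intro x _ r h1 h2
        have h2' : r ≤ 0 := h2
        have : r = 0 := by omega
        subst this
        simp
      self := by intro x _; rfl
      mono := by intro x _ r r' _ _ _; exact le_refl _
      coh := by intro x _ r _ _; exact ⟨rfl, rfl, rfl⟩ }
  | n + 1, m => step m (scd n (Fin.tail m))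

end SCD

/-- In the product of chains `∏_i [m i]` with the componentwise order, the set of
elements whose coordinate sum equals `h = ⌊(n + ∑ m i)/2⌋` is an antichain of
maximum cardinality. -/
theorem middle_layer_is_max_antichain (n : ℕ) (hn : 0 < n) (m : Fin n → ℕ)
    (hm : ∀ i, 0 < m i) :
    IsAntichain (· ≤ ·)
      (((Finset.Icc (1 : Fin n → ℕ) m).filter
        (fun x => ∑ i, x i = (n + ∑ i, m i) / 2) : Finset (Fin n → ℕ)) :
          Set (Fin n → ℕ)) ∧
    ∀ B : Finset (Fin n → ℕ), B ⊆ Finset.Icc (1 : Fin n → ℕ) m →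
      IsAntichain (· ≤ ·) (B : Set (Fin n → ℕ)) →
      B.card ≤ ((Finset.Icc (1 : Fin n → ℕ) m).filter
        (fun x => ∑ i, x i = (n + ∑ i, m i) / 2)).card := by
  set h : ℕ := (n + ∑ i, m i) / 2 with hh
  constructor
  · -- elements of equal coordinate sum are incomparable unless equal
    intro x hx y hy hne hle
    simp only [Finset.coe_filter, Set.mem_setOf_eq] at hx hy
    obtain ⟨_, hx2⟩ := hx
    obtain ⟨_, hy2⟩ := hy
    refine hne (funext fun i => le_antisymm (hle i) ?_)
    by_contra hlt
    push_neg at hlt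
    have : ∑ i, x i < ∑ i, y i :=
      Finset.sum_lt_sum (fun j _ => hle j) ⟨i, Finset.mem_univ i, hlt⟩
    omega
  · intro B hB hanti
    obtain D := SCD.scd n m
    -- map each element of B to the rank-h point of its chain
    apply Finset.card_le_card_of_injOn (fun x => D.f x h)
    · intro x hxB
      have hx := hB hxB
      have hax := D.hax x hx
      have hxb := D.hxb x hx
      have hab := D.hab x hx
      have h1 : D.a x ≤ h := by omega
      have h2 : h ≤ D.b x := by omega
      simp only [Finset.mem_filter]
      exact (Finset.mem_filter.mpr ⟨D.mem x hx h h1 h2, D.sum x hx h h1 h2⟩ :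
        D.f x h ∈ (Finset.Icc (1 : Fin n → ℕ) m).filter (fun x => ∑ i, x i = h))
    · intro x hxB' y hyB' heq'
      have hxB : x ∈ B := hxB'
      have hyB : y ∈ B := hyB'
      have heq : D.f x h = D.f y h := heq'
      have hx := hB hxB
      have hy := hB hyB
      have haxx := D.hax x hx; have hxbx := D.hxb x hx; have habx := D.hab x hx
      have haxy := D.hax y hy; have hxby := D.hxb y hy; have haby := D.hab y hy
      have h1x : D.a x ≤ h := by omega
      have h2x : h ≤ D.b x := by omega
      have h1y : D.a y ≤ h := by omega
      have h2y : h ≤ D.b y := by omega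
      obtain ⟨hfx, hax, hbx⟩ := D.coh x hx h h1x h2x
      obtain ⟨hfy, hay, hby⟩ := D.coh y hy h h1y h2y
      have hfeq : D.f x = D.f y := by rw [← hfx, ← hfy, heq]
      have haeq : D.a x = D.a y := by rw [← hax, ← hay, heq]
      have hbeq : D.b x = D.b y := by rw [← hbx, ← hby, heq]
      have hxc : x = D.f x (∑ i, x i) := (D.self x hx).symm
      have hyc : y = D.f x (∑ i, y i) := by rw [hfeq]; exact (D.self y hy).symm
      by_contra hne
      rcases le_total (∑ i, x i) (∑ i, y i) with hst | hst
      · refine absurd ?_ (hanti hxB' hyB' hne)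
        calc x = D.f x (∑ i, x i) := hxc
          _ ≤ D.f x (∑ i, y i) := D.mono x hx _ _ haxx hst (by omega)
          _ = y := hyc.symm
      · refine absurd ?_ (hanti hyB' hxB' (Ne.symm hne))
        calc y = D.f x (∑ i, y i) := hyc
          _ ≤ D.f x (∑ i, x i) := D.mono x hx _ _ (by omega) hst hxbx
          _ = x := hxc.symm
end

section
/- If n(m+1) is even, then S(m,n) = m^{n-1} - 2 * ∑_{r=n-1}^{h-m-1} ∑_{i=0}^{floor((r-n+1)/(m-1))} (-1)^i * C(n-1,i) * C(r-i*m-1, r-i*m-n+1), where h = n(m+1)/2. -/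
/-- The binomial coefficient `C(a,b)` for integer arguments, interpreted as `0`
when `b < 0` or `a < b`. -/
def iChoose (a b : ℤ) : ℤ := if b < 0 ∨ a < b then 0 else (a.toNat.choose b.toNat : ℤ)

namespace SCD


def lo (m : ℕ) : (n : ℕ) → (Fin n → ℕ) → ℕ
  | 0, _ => 0
  | n+1, x =>
    let x' := Fin.init x
    let l := lo m n x'
    let L := n*(m+1) - 2*l
    let u := (∑ i, x' i) - l
    let v := x (Fin.last n) - 1
    l + (if u + v ≤ L then v else L - u) + 1

def G (m : ℕ) : (n : ℕ) → (Fin n → ℕ) → ℕ → (Fin n → ℕ)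
  | 0, x, _ => x
  | n+1, x, ρ =>
    let x' := Fin.init x
    let l := lo m n x'
    let L := n*(m+1) - 2*l
    let u := (∑ i, x' i) - l
    let v := x (Fin.last n) - 1
    let i := if u + v ≤ L then v else L - u
    let δ := ρ - (l + i + 1)
    if δ ≤ L - i then Fin.snoc (G m n x' (l + δ)) (i+1)
    else Fin.snoc (G m n x' (l + (L - i))) (i + 1 + (δ - (L - i)))

lemma lo_succ (m n : ℕ) (x : Fin (n+1) → ℕ) :
    lo m (n+1) x = lo m n (Fin.init x) +
      (if ((∑ i, Fin.init x i) - lo m n (Fin.init x)) + (x (Fin.last n) - 1)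
            ≤ n*(m+1) - 2 * lo m n (Fin.init x)
        then x (Fin.last n) - 1
        else (n*(m+1) - 2 * lo m n (Fin.init x)) - ((∑ i, Fin.init x i) - lo m n (Fin.init x)))
      + 1 := rfl

lemma G_def (m n : ℕ) (x : Fin (n+1) → ℕ) (ρ : ℕ) :
    G m (n+1) x ρ =
      (let x' := Fin.init x
       let l := lo m n x'
       let L := n*(m+1) - 2*l
       let u := (∑ i, x' i) - l
       let v := x (Fin.last n) - 1
       let i := if u + v ≤ L then v else L - u
       let δ := ρ - (l + i + 1)
       if δ ≤ L - i then Fin.snoc (G m n x' (l + δ)) (i+1)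
       else Fin.snoc (G m n x' (l + (L - i))) (i + 1 + (δ - (L - i)))) := rfl

lemma lo_eval (m n : ℕ) (x : Fin (n+1) → ℕ) {l u v L i : ℕ}
    (hl : lo m n (Fin.init x) = l)
    (hr : (∑ j, Fin.init x j) = l + u)
    (hL : n*(m+1) = 2*l + L)
    (ht : x (Fin.last n) = v + 1)
    (hi : (if u + v ≤ L then v else L - u) = i) :
    lo m (n+1) x = l + i + 1 := by
  rw [lo_succ, hl, hr, hL, ht]
  simp only [Nat.add_sub_cancel_left, Nat.add_sub_cancel]
  rw [hi]

lemma G_eval (m n : ℕ) (x : Fin (n+1) → ℕ) {l u v L i δ ρ : ℕ}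
    (hl : lo m n (Fin.init x) = l)
    (hr : (∑ j, Fin.init x j) = l + u)
    (hL : n*(m+1) = 2*l + L)
    (ht : x (Fin.last n) = v + 1)
    (hi : (if u + v ≤ L then v else L - u) = i)
    (hρ : ρ - (l + i + 1) = δ) :
    G m (n+1) x ρ =
      (if δ ≤ L - i then Fin.snoc (G m n (Fin.init x) (l + δ)) (i+1)
       else Fin.snoc (G m n (Fin.init x) (l + (L - i))) (i + 1 + (δ - (L - i)))) := by
  rw [G_def]
  simp only [hl, hr, hL, ht, Nat.add_sub_cancel_left, Nat.add_sub_cancel, hi, hρ]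



def InCube (m : ℕ) {n : ℕ} (x : Fin n → ℕ) : Prop := ∀ j, 1 ≤ x j ∧ x j ≤ m

lemma sum_snoc {n : ℕ} (a : Fin n → ℕ) (b : ℕ) :
    (∑ i, Fin.snoc a b i) = (∑ i, a i) + b := by
  rw [Fin.sum_univ_castSucc]
  simp

lemma inCube_snoc {m n : ℕ} {a : Fin n → ℕ} {b : ℕ} (ha : InCube m a) (hb1 : 1 ≤ b)
    (hb2 : b ≤ m) : InCube m (Fin.snoc a b) := by
  intro j
  refine Fin.lastCases ?_ ?_ j
  · simpa using ⟨hb1, hb2⟩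
  · intro k; simpa using ha k

lemma snoc_le_snoc {n : ℕ} {a a' : Fin n → ℕ} {b b' : ℕ} (ha : a ≤ a') (hb : b ≤ b') :
    (Fin.snoc a b : Fin (n+1) → ℕ) ≤ Fin.snoc a' b' := by
  rw [Pi.le_def]
  intro j
  refine Fin.lastCases ?_ ?_ j
  · simpa using hb
  · intro k; simpa using ha k

theorem main (m : ℕ) (hm : 1 ≤ m) : ∀ (n : ℕ) (x : Fin n → ℕ), InCube m x →
    (lo m n x ≤ ∑ i, x i) ∧ ((∑ i, x i) + lo m n x ≤ n*(m+1)) ∧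
    (G m n x (∑ i, x i) = x) ∧
    (∀ ρ, lo m n x ≤ ρ → ρ + lo m n x ≤ n*(m+1) →
      InCube m (G m n x ρ) ∧ (∑ i, G m n x ρ i) = ρ ∧ lo m n (G m n x ρ) = lo m n x ∧
      ∀ σ, G m n (G m n x ρ) σ = G m n x σ) ∧
    (∀ ρ, lo m n x ≤ ρ → (ρ+1) + lo m n x ≤ n*(m+1) → G m n x ρ ≤ G m n x (ρ+1)) := by
  intro n
  induction n with
  | zero =>
    intro x hx
    have hs : (∑ i, x i) = 0 := by simp
    refine ⟨le_of_eq rfl, by simp [hs, lo], rfl, ?_, ?_⟩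
    · intro ρ h1 h2
      have : ρ = 0 := by simpa [lo] using h2
      subst this
      exact ⟨fun j => j.elim0, by simp, rfl, fun σ => rfl⟩
    · intro ρ h1 h2
      simp [lo] at h2
  | succ n IH =>
    intro x hx
    have hx' : InCube m (Fin.init x) := fun j => hx j.castSucc
    obtain ⟨h1, h2, h3, h4, h5⟩ := IH (Fin.init x) hx'
    have hlast := hx (Fin.last n)
    obtain ⟨l, hl⟩ : ∃ l, lo m n (Fin.init x) = l := ⟨_, rfl⟩
    rw [hl] at h1 h2 h4 h5
    obtain ⟨u, hu⟩ : ∃ u, (∑ i, Fin.init x i) = l + u := ⟨(∑ i, Fin.init x i) - l, by omega⟩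
    rw [hu] at h1 h2 h3
    obtain ⟨L, hL⟩ : ∃ L, n*(m+1) = 2*l + L := ⟨n*(m+1) - 2*l, by omega⟩
    rw [hL] at h2
    obtain ⟨v, hv⟩ : ∃ v, x (Fin.last n) = v + 1 := ⟨x (Fin.last n) - 1, by omega⟩
    have hvm : v + 1 ≤ m := by omega
    have huL : u ≤ L := by omega
    obtain ⟨i, hi⟩ : ∃ i, (if u + v ≤ L then v else L - u) = i := ⟨_, rfl⟩
    have hi' : (u + v ≤ L ∧ i = v) ∨ (L < u + v ∧ i = L - u) := by
      rcases le_or_gt (u + v) L with hc | hc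
      · exact Or.inl ⟨hc, by rw [← hi, if_pos hc]⟩
      · exact Or.inr ⟨hc, by rw [← hi, if_neg (not_le.mpr hc)]⟩
    have hsum : (∑ j, x j) = l + u + (v + 1) := by
      have hh : (∑ i, Fin.init x i) + x (Fin.last n) = l + u + (v + 1) := by rw [hu, hv]
      rw [Fin.sum_univ_castSucc, ← hh]
      simp [Fin.init]
    have hNM : (n+1)*(m+1) = 2*l + L + (m+1) := by rw [add_one_mul, hL]
    have hlo : lo m (n+1) x = l + i + 1 := lo_eval m n x hl hu hL hv hi
    refine ⟨?_, ?_, ?_, ?_, ?_⟩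
    · -- lo ≤ rank
      rw [hlo, hsum]; omega
    · -- rank + lo ≤ (n+1)(m+1)
      rw [hlo, hsum, hNM]; omega
    · -- G x (rank x) = x
      rw [hsum]
      rw [G_eval m n x hl hu hL hv hi (show l + u + (v+1) - (l + i + 1) = u + v - i by omega)]
      rcases hi' with ⟨hc, hieq⟩ | ⟨hc, hieq⟩
      · rw [if_pos (by omega)]
        rw [show l + (u + v - i) = l + u from by omega, h3,
          show i + 1 = v + 1 from by omega, ← hv, Fin.snoc_init_self]
      · rw [if_neg (by omega)]
        rw [show l + (L - i) = l + u from by omega, h3,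
          show i + 1 + ((u + v - i) - (L - i)) = v + 1 from by omega, ← hv, Fin.snoc_init_self]
    · -- clause 4
      intro ρ hρ1 hρ2
      rw [hlo] at hρ1 hρ2
      rw [hNM] at hρ2
      obtain ⟨δ, hδ⟩ : ∃ δ, ρ - (l + i + 1) = δ := ⟨_, rfl⟩
      have hG := G_eval m n x hl hu hL hv hi hδ
      rw [hlo, hG]
      rcases le_or_gt δ (L - i) with hd | hd
      · rw [if_pos hd]
        obtain ⟨c1, c2, c3, c4⟩ := h4 (l + δ) (by omega) (by omega)
        refine ⟨inCube_snoc c1 (by omega) (by omega), ?_, ?_, ?_⟩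
        · rw [sum_snoc, c2]; omega
        · refine lo_eval m n _ (u := δ) (v := i) ?_ ?_ hL ?_ ?_
          · rw [Fin.init_snoc]; exact c3
          · rw [Fin.init_snoc]; exact c2
          · rw [Fin.snoc_last]
          · rw [if_pos (by omega)]
        · intro σ
          rw [G_eval m n _ (u := δ) (v := i) (i := i) (by rw [Fin.init_snoc]; exact c3)
              (by rw [Fin.init_snoc]; exact c2)
              hL (by rw [Fin.snoc_last]) (by rw [if_pos (by omega)]) rfl,
            G_eval m n x hl hu hL hv hi rfl]
          simp only [Fin.init_snoc, c4]
      · rw [if_neg (by omega)]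
        obtain ⟨c1, c2, c3, c4⟩ := h4 (l + (L - i)) (by omega) (by omega)
        refine ⟨inCube_snoc c1 (by omega) (by omega), ?_, ?_, ?_⟩
        · rw [sum_snoc, c2]; omega
        · refine lo_eval m n _ (u := L - i) (v := i + (δ - (L - i))) ?_ ?_ hL ?_ ?_
          · rw [Fin.init_snoc]; exact c3
          · rw [Fin.init_snoc]; exact c2
          · rw [Fin.snoc_last]
            omega
          · rw [if_neg (by omega)]
            omega
        · intro σ
          rw [G_eval m n _ (u := L - i) (v := i + (δ - (L - i))) (i := i)
              (by rw [Fin.init_snoc]; exact c3)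
              (by rw [Fin.init_snoc]; exact c2) hL (by rw [Fin.snoc_last]; omega)
              (by rw [if_neg (by omega)]; omega) rfl,
            G_eval m n x hl hu hL hv hi rfl]
          simp only [Fin.init_snoc, c4]
    · -- clause 5 : step monotone
      intro ρ hρ1 hρ2
      rw [hlo] at hρ1 hρ2
      rw [hNM] at hρ2
      obtain ⟨δ, hδ⟩ : ∃ δ, ρ - (l + i + 1) = δ := ⟨_, rfl⟩
      rw [G_eval m n x hl hu hL hv hi hδ,
        G_eval m n x (ρ := ρ + 1) hl hu hL hv hi (show ρ + 1 - (l + i + 1) = δ + 1 by omega)]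
      rcases le_or_gt (δ + 1) (L - i) with hd | hd
      · rw [if_pos (by omega), if_pos hd]
        refine snoc_le_snoc ?_ le_rfl
        rw [show l + (δ + 1) = (l + δ) + 1 from rfl]
        exact h5 (l + δ) (by omega) (by omega)
      · rcases le_or_gt δ (L - i) with hd2 | hd2
        · rw [if_pos hd2, if_neg (by omega)]
          rw [show L - i = δ from by omega]
          exact snoc_le_snoc le_rfl (by omega)
        · rw [if_neg (by omega), if_neg (by omega)]
          exact snoc_le_snoc le_rfl (by omega)



lemma G_mono (m : ℕ) (hm : 1 ≤ m) {n : ℕ} (w : Fin n → ℕ) (hw : InCube m w) {ρ ρ' : ℕ}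
    (h1 : lo m n w ≤ ρ) (h2 : ρ ≤ ρ') (h3 : ρ' + lo m n w ≤ n*(m+1)) :
    G m n w ρ ≤ G m n w ρ' := by
  obtain ⟨-, -, -, -, h5⟩ := main m hm n w hw
  induction ρ', h2 using Nat.le_induction with
  | base => exact le_rfl
  | succ ρ'' hle ih => exact le_trans (ih (by omega)) (h5 ρ'' (by omega) (by omega))

lemma G_middle (m : ℕ) (hm : 1 ≤ m) {n h : ℕ} (heq : 2*h = n*(m+1)) (x : Fin n → ℕ)
    (hx : InCube m x) :
    InCube m (G m n x h) ∧ (∑ i, G m n x h i) = h := by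
  obtain ⟨h1, h2, -, h4, -⟩ := main m hm n x hx
  obtain ⟨c1, c2, -, -⟩ := h4 h (by omega) (by omega)
  exact ⟨c1, c2⟩

lemma comparable_of_G_eq (m : ℕ) (hm : 1 ≤ m) {n h : ℕ} (heq : 2*h = n*(m+1))
    {x y : Fin n → ℕ} (hx : InCube m x) (hy : InCube m y)
    (hxy : G m n x h = G m n y h) : x ≤ y ∨ y ≤ x := by
  obtain ⟨hx1, hx2, hx3, hx4, -⟩ := main m hm n x hx
  obtain ⟨hy1, hy2, hy3, hy4, -⟩ := main m hm n y hy
  obtain ⟨cx1, cx2, cx3, cx4⟩ := hx4 h (by omega) (by omega)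
  obtain ⟨cy1, cy2, cy3, cy4⟩ := hy4 h (by omega) (by omega)
  set z := G m n x h with hz
  have hzy : z = G m n y h := hxy
  have hxz : x = G m n z (∑ i, x i) := by rw [cx4]; exact hx3.symm
  have hyz : y = G m n z (∑ i, y i) := by rw [hzy, cy4]; exact hy3.symm
  have hlz : lo m n z = lo m n x := cx3
  have hlz' : lo m n z = lo m n y := by rw [hzy]; exact cy3
  rcases le_total (∑ i, x i) (∑ i, y i) with hc | hc
  · left
    rw [hxz, hyz]
    exact G_mono m hm z cx1 (by omega) hc (by omega)
  · right
    rw [hxz, hyz]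
    exact G_mono m hm z cx1 (by omega) hc (by omega)






def cube (m n : ℕ) : Finset (Fin n → ℕ) := Finset.Icc 1 (fun _ => m)

def layer (m n : ℕ) (r : ℤ) : Finset (Fin n → ℕ) :=
  (cube m n).filter (fun x => (∑ i, (x i : ℤ)) = r)


lemma mem_cube {m n : ℕ} {x : Fin n → ℕ} : x ∈ cube m n ↔ InCube m x := by
  simp only [cube, Finset.mem_Icc, Pi.le_def, InCube]
  constructor
  · rintro ⟨h1, h2⟩ j; exact ⟨h1 j, h2 j⟩
  · intro h; exact ⟨fun j => (h j).1, fun j => (h j).2⟩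

lemma card_cube (m n : ℕ) : (cube m n).card = m ^ n := by
  rw [cube, Pi.card_Icc]
  simp [Nat.card_Icc]

lemma mem_layer {m n : ℕ} {r : ℤ} {x : Fin n → ℕ} :
    x ∈ layer m n r ↔ InCube m x ∧ (∑ i, (x i : ℤ)) = r := by
  rw [layer, Finset.mem_filter, mem_cube]

lemma layer_zero (m : ℕ) (r : ℤ) :
    ((layer m 0 r).card : ℤ) = if r = 0 then 1 else 0 := by
  rcases eq_or_ne r 0 with h | h
  · subst h
    rw [if_pos rfl]
    norm_num
    rw [Finset.card_eq_one]
    refine ⟨fun i => i.elim0, ?_⟩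
    ext x
    simp only [mem_layer, Finset.mem_singleton]
    constructor
    · intro _; ext i; exact i.elim0
    · rintro rfl; exact ⟨fun j => j.elim0, by simp⟩
  · rw [if_neg h]
    norm_cast
    rw [Finset.card_eq_zero]
    ext x
    simp only [mem_layer, Finset.notMem_empty, iff_false, not_and]
    intro _
    simpa using h ∘ Eq.symm ∘ (by simp : (∑ i : Fin 0, (x i : ℤ)) = 0).symm.trans
  
lemma sum_snoc_int {n : ℕ} (a : Fin n → ℕ) (b : ℕ) :
    (∑ i, ((Fin.snoc a b : Fin (n+1) → ℕ) i : ℤ)) = (∑ i, (a i : ℤ)) + b := by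
  rw [Fin.sum_univ_castSucc]
  simp

lemma layer_succ_card (m n : ℕ) (r : ℤ) :
    (layer m (n+1) r).card = ∑ j ∈ Finset.Icc 1 m, (layer m n (r - j)).card := by
  have hdecomp : layer m (n+1) r =
      (Finset.Icc 1 m).biUnion
        (fun j => (layer m n (r - j)).image (fun a => Fin.snoc a j)) := by
    ext x
    simp only [Finset.mem_biUnion, Finset.mem_image, Finset.mem_Icc, mem_layer]
    constructor
    · rintro ⟨hx, hs⟩
      refine ⟨x (Fin.last n), ⟨(hx (Fin.last n)).1, (hx (Fin.last n)).2⟩,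
        Fin.init x, ⟨fun j => hx j.castSucc, ?_⟩, Fin.snoc_init_self x⟩
      have := sum_snoc_int (Fin.init x) (x (Fin.last n))
      rw [Fin.snoc_init_self] at this
      rw [← hs, this]
      push_cast
      ring
    · rintro ⟨j, hj, a, ⟨ha, hsa⟩, rfl⟩
      constructor
      · intro k
        refine Fin.lastCases ?_ ?_ k
        · simpa using hj
        · intro k; simpa using ha k
      · rw [sum_snoc_int, hsa]; ring
  rw [hdecomp, Finset.card_biUnion, ]
  · refine Finset.sum_congr rfl fun j hj => ?_
    rw [Finset.card_image_of_injective]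
    intro a b hab
    have := congrArg Fin.init hab
    simpa using this
  · intro j1 h1 j2 h2 hne
    simp only [Finset.disjoint_left, Finset.mem_image]
    rintro x ⟨a, _, rfl⟩ ⟨b, _, hba⟩
    apply hne
    have := congrArg (fun f => f (Fin.last n)) hba
    simpa using this.symm


lemma layer_succ_card' (m n : ℕ) (r : ℤ) :
    (layer m (n+1) r).card = ∑ j ∈ Finset.Icc (1:ℤ) (m:ℤ), (layer m n (r - j)).card := by
  rw [layer_succ_card]
  refine Finset.sum_nbij' (i := fun j => (j:ℤ)) (j := fun j => j.toNat) ?_ ?_ ?_ ?_ ?_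
  · intro x hx
    simp only [Finset.mem_Icc] at *
    omega
  · intro x hx
    simp only [Finset.mem_Icc] at *
    omega
  · intro x hx
    simp
  · intro x hx
    simp only [Finset.mem_Icc] at hx
    show ((x.toNat : ℕ) : ℤ) = x
    omega
  · intro x hx
    rfl

lemma layer_symm (m n : ℕ) (hm : 1 ≤ m) (r : ℤ) :
    (layer m n r).card = (layer m n (n*(m+1) - r)).card := by
  have key : ∀ (s : ℤ), ∀ x ∈ layer m n s, (fun i => m + 1 - x i) ∈ layer m n (n*(m+1) - s) := by
    intro s x hx
    rw [mem_layer] at hx ⊢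
    obtain ⟨h1, h2⟩ := hx
    constructor
    · intro j
      have := h1 j
      show 1 ≤ m + 1 - x j ∧ m + 1 - x j ≤ m
      omega
    · have hcast : ∀ j, ((m + 1 - x j : ℕ) : ℤ) = (m : ℤ) + 1 - (x j : ℤ) := by
        intro j
        have := h1 j
        omega
      calc (∑ i, ((m + 1 - x i : ℕ) : ℤ)) = ∑ i : Fin n, ((m:ℤ) + 1 - x i) := by
            exact Finset.sum_congr rfl fun i _ => hcast i
        _ = n * (m+1) - s := by
            rw [Finset.sum_sub_distrib, h2]
            simp only [Finset.sum_const, Finset.card_univ, Fintype.card_fin, nsmul_eq_mul]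
  refine Finset.card_nbij' (fun x => fun i => m + 1 - x i) (fun x => fun i => m + 1 - x i)
    (key r) ?_ ?_ ?_
  · have := key (n*(m+1) - r)
    exact fun x hx => by simpa using this x hx
  · intro x hx
    rw [Finset.mem_coe, mem_layer] at hx
    funext i
    have := hx.1 i
    simp only
    omega
  · intro x hx
    rw [Finset.mem_coe, mem_layer] at hx
    funext i
    have := hx.1 i
    simp only
    omega

lemma layer_total (m n : ℕ) :
    ∑ r ∈ Finset.Icc (n : ℤ) (n*m), (layer m n r).card = m ^ n := by
  rw [← card_cube m n]
  rw [Finset.card_eq_sum_card_fiberwise (f := fun x => ∑ i, (x i : ℤ))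
    (t := Finset.Icc (n : ℤ) (n*m))]
  · rfl
  · intro x hx
    rw [Finset.mem_coe, mem_cube] at hx
    rw [Finset.mem_coe, Finset.mem_Icc]
    constructor
    · calc (n : ℤ) = ∑ _i : Fin n, (1:ℤ) := by simp
        _ ≤ ∑ i, (x i : ℤ) := Finset.sum_le_sum (fun i _ => by exact_mod_cast (hx i).1)
    · calc (∑ i, (x i : ℤ)) ≤ ∑ _i : Fin n, (m:ℤ) :=
          Finset.sum_le_sum (fun i _ => by exact_mod_cast (hx i).2)
        _ = n*m := by simp [mul_comm]


lemma iChoose_pascal {a b : ℤ} (hab : b < a) :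
    iChoose a b = iChoose (a-1) (b-1) + iChoose (a-1) b := by
  unfold iChoose
  rcases lt_or_ge b 0 with hb | hb
  · rw [if_pos (Or.inl hb), if_pos (Or.inl (by omega)), if_pos (Or.inl hb)]
    ring
  rcases eq_or_lt_of_le hb with hb0 | hb1
  · rw [if_neg (by omega), if_pos (Or.inl (by omega)), if_neg (by omega)]
    simp [← hb0]
  · rw [if_neg (by omega), if_neg (by omega), if_neg (by omega)]
    have ha : a.toNat = (a-1).toNat + 1 := by omega
    have hbn : b.toNat = (b-1).toNat + 1 := by omega
    rw [ha, hbn, Nat.choose_succ_succ]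
    push_cast
    ring

/-- number of compositions of `s` into `k` positive (unbounded) parts. -/
def c (k : ℕ) (s : ℤ) : ℤ := iChoose (s-1) (s-k)

lemma c_pascal (k : ℕ) (hk : 2 ≤ k) (s : ℤ) : c k s = c (k-1) (s-1) + c k (s-1) := by
  unfold c
  have h1 : ((k - 1 : ℕ) : ℤ) = (k : ℤ) - 1 := by
    have : 1 ≤ k := by omega
    push_cast [this]
    ring
  have hk2 : (2 : ℤ) ≤ (k : ℤ) := by exact_mod_cast hk
  rw [iChoose_pascal (a := s - 1) (b := s - k) (by omega)]
  rw [show s - 1 - 1 = (s-1) - 1 from by ring, show s - (k:ℤ) - 1 = (s-1) - k from by ring,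
    h1]
  rw [show s - 1 - ((k:ℤ) - 1) = s - k from by ring]
  ring

lemma c_window (k : ℕ) (hk : 2 ≤ k) (M : ℕ) (s : ℤ) :
    c k s = (∑ j ∈ Finset.Icc (1:ℤ) (M:ℤ), c (k-1) (s - j)) + c k (s - M) := by
  induction M with
  | zero => simp
  | succ M IH =>
    have hins : Finset.Icc (1:ℤ) ((M:ℤ)+1) = insert ((M:ℤ)+1) (Finset.Icc (1:ℤ) (M:ℤ)) := by
      ext j
      simp only [Finset.mem_Icc, Finset.mem_insert]
      omega
    push_cast
    rw [hins, Finset.sum_insert (by simp), IH]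
    have := c_pascal k hk (s - M)
    rw [show s - (M:ℤ) - 1 = s - ((M:ℤ)+1) from by ring] at this
    rw [this]
    ring

/-- inclusion–exclusion formula for the number of compositions with parts in `[1,m]`. -/
def E (m k : ℕ) (r : ℤ) : ℤ :=
  ∑ i ∈ Finset.range (k+1), (-1:ℤ)^i * (k.choose i) * c k (r - i*m)

lemma E_succ (m k : ℕ) (hk : 1 ≤ k) (r : ℤ) :
    E m (k+1) r = ∑ j ∈ Finset.Icc (1:ℤ) (m:ℤ), E m k (r - j) := by
  have hwin : ∀ s : ℤ, c (k+1) s = (∑ j ∈ Finset.Icc (1:ℤ) (m:ℤ), c k (s - j)) + c (k+1) (s - m) := by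
    intro s
    have := c_window (k+1) (by omega) m s
    simpa using this
  -- A : sum with C(k,i), B : shifted sum
  set A := ∑ i ∈ Finset.range (k+1), (-1:ℤ)^i * (k.choose i) * c (k+1) (r - i*m) with hA
  set B := ∑ i ∈ Finset.range (k+1), (-1:ℤ)^i * (k.choose i) * c (k+1) (r - i*m - m) with hB
  set f' : ℕ → ℤ := fun i => (-1:ℤ)^i * (k.choose i) * c (k+1) (r - (i:ℤ)*m) with hf'
  have hAf : A = ∑ i ∈ Finset.range (k+1), f' i := rfl
  have step1 : E m (k+1) r = A - B := by
    rw [E, Finset.sum_range_succ']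
    have hterm : ∀ i ∈ Finset.range (k+1),
        (-1:ℤ)^(i+1) * (((k+1).choose (i+1) : ℕ) : ℤ) * c (k+1) (r - ((i+1:ℕ):ℤ)*m)
        = -((-1:ℤ)^i * (k.choose i) * c (k+1) (r - (i:ℤ)*m - m)) + f' (i+1) := by
      intro i _
      rw [Nat.choose_succ_succ, hf']
      have : ((i+1:ℕ):ℤ)*(m:ℤ) = (i:ℤ)*m + m := by push_cast; ring
      rw [this]
      push_cast
      ring_nf
      rw [show (1 + i) = i.succ from by omega]
      ring
    rw [Finset.sum_congr rfl hterm, Finset.sum_add_distrib]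
    have hng : ∑ i ∈ Finset.range (k+1),
        -((-1:ℤ)^i * (k.choose i) * c (k+1) (r - (i:ℤ)*m - m)) = -B := by
      rw [hB, ← Finset.sum_neg_distrib]
    have hsh : ∑ i ∈ Finset.range (k+1), f' (i+1) = A - f' 0 := by
      have e1 : ∑ i ∈ Finset.range (k+2), f' i
          = ∑ i ∈ Finset.range (k+1), f' (i+1) + f' 0 := Finset.sum_range_succ' f' (k+1)
      have e2 : ∑ i ∈ Finset.range (k+2), f' i = A + f' (k+1) := by
        rw [Finset.sum_range_succ, hAf]
      have e3 : f' (k+1) = 0 := by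
        rw [hf']
        simp [Nat.choose_succ_self]
      rw [e3, add_zero] at e2
      omega
    have hf0 : (-1:ℤ)^0 * (((k+1).choose 0 : ℕ):ℤ) * c (k+1) (r - ((0:ℕ):ℤ)*m) = f' 0 := by
      rw [hf']
      norm_num
    rw [hng, hsh, hf0]
    ring
  rw [step1]
  have step2 : A = (∑ j ∈ Finset.Icc (1:ℤ) (m:ℤ), E m k (r - j)) + B := by
    rw [hA]
    have : ∀ i ∈ Finset.range (k+1), (-1:ℤ)^i * (k.choose i) * c (k+1) (r - i*m)
        = (∑ j ∈ Finset.Icc (1:ℤ) (m:ℤ), (-1:ℤ)^i * (k.choose i) * c k (r - i*m - j))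
          + (-1:ℤ)^i * (k.choose i) * c (k+1) (r - i*m - m) := by
      intro i _
      rw [hwin (r - i*m), mul_add, Finset.mul_sum]
    rw [Finset.sum_congr rfl this, Finset.sum_add_distrib]
    congr 1
    rw [Finset.sum_comm]
    refine Finset.sum_congr rfl fun j _ => ?_
    rw [E]
    refine Finset.sum_congr rfl fun i _ => ?_
    rw [show r - i*m - j = r - j - i*m from by ring]
  rw [step2]
  ring


lemma c_one (s : ℤ) : c 1 s = if 1 ≤ s then 1 else 0 := by
  unfold c iChoose
  rcases lt_or_ge s 1 with h|h
  · rw [if_pos (by left; push_cast; omega), if_neg (by omega)]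
  · rw [if_neg (by push_cast; omega), if_pos h]
    have : s - ((1:ℕ):ℤ) = s - 1 := by push_cast; ring
    rw [this, Nat.choose_self]
    norm_num

lemma sum_Icc_natCast (f : ℤ → ℤ) (a b : ℕ) :
    ∑ j ∈ Finset.Icc a b, f (j:ℤ) = ∑ j ∈ Finset.Icc (a:ℤ) (b:ℤ), f j := by
  refine Finset.sum_nbij' (i := fun j => (j:ℤ)) (j := fun j => j.toNat) ?_ ?_ ?_ ?_ ?_
  · intro x hx
    simp only [Finset.mem_Icc] at *
    omega
  · intro x hx
    simp only [Finset.mem_Icc] at *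
    omega
  · intro x hx
    simp
  · intro x hx
    simp only [Finset.mem_Icc] at hx
    show ((x.toNat : ℕ) : ℤ) = x
    omega
  · intro x hx
    rfl

lemma card_layer_eq_E (m : ℕ) (hm : 1 ≤ m) :
    ∀ k, 1 ≤ k → ∀ r : ℤ, ((layer m k r).card : ℤ) = E m k r := by
  intro k
  induction k with
  | zero => omega
  | succ k IH =>
    intro _ r
    rcases Nat.eq_zero_or_pos k with rfl | hk
    · -- base case k+1 = 1
      have lhs : ((layer m 1 r).card : ℤ) = if 1 ≤ r ∧ r ≤ m then 1 else 0 := by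
        rw [layer_succ_card']
        push_cast
        have : ∀ j ∈ Finset.Icc (1:ℤ) (m:ℤ), ((layer m 0 (r - j)).card : ℤ)
            = if j = r then 1 else 0 := by
          intro j _
          rw [layer_zero]
          congr 1
          simp only [eq_iff_iff]
          omega
        rw [Finset.sum_congr rfl this, Finset.sum_ite_eq' (Finset.Icc (1:ℤ) (m:ℤ)) r]
        simp only [Finset.mem_Icc]
      have rhs : E m 1 r = (if 1 ≤ r then 1 else 0) - (if 1 ≤ r - m then 1 else 0) := by
        rw [E, Finset.sum_range_succ, Finset.sum_range_succ, Finset.sum_range_zero]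
        simp only [Nat.choose_self, Nat.choose_zero_right, pow_zero, pow_one, Nat.cast_one]
        rw [c_one, c_one]
        push_cast
        rw [show r - 0*(m:ℤ) = r from by ring, show r - 1*(m:ℤ) = r - m from by ring]
        ring
      rw [lhs, rhs]
      have hm' : (1:ℤ) ≤ (m:ℤ) := by exact_mod_cast hm
      split_ifs <;> omega
    · rw [layer_succ_card']
      push_cast
      rw [Finset.sum_congr rfl (fun j _ => IH hk (r - j)), E_succ m k hk r]

lemma sum_Icc_split (f : ℤ → ℤ) (a b c : ℤ) (hab : a ≤ b+1) (hbc : b ≤ c) :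
    ∑ s ∈ Finset.Icc a c, f s = (∑ s ∈ Finset.Icc a b, f s) + ∑ s ∈ Finset.Icc (b+1) c, f s := by
  rw [← Finset.sum_union]
  · congr 1
    ext s
    simp only [Finset.mem_Icc, Finset.mem_union]
    omega
  · rw [Finset.disjoint_left]
    intro s hs1 hs2
    simp only [Finset.mem_Icc] at hs1 hs2
    omega


lemma middle_card (m k : ℕ) (hm : 2 ≤ m) (hk : 1 ≤ k) (h : ℕ) (hh : 2*h = (k+1)*(m+1)) :
    ((layer m (k+1) (h:ℤ)).card : ℤ)
      = (m:ℤ)^k - 2 * ∑ s ∈ Finset.Icc ((k:ℤ)) ((h:ℤ)-m-1), E m k s := by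
  have hm1 : (1:ℕ) ≤ m := by omega
  set H := (h:ℤ) with hH
  set M := (m:ℤ) with hM
  set K := (k:ℤ) with hK
  have hM2 : 2 ≤ M := by rw [hM]; exact_mod_cast hm
  have hK1 : 1 ≤ K := by rw [hK]; exact_mod_cast hk
  have hhZ : 2*H = (K+1)*(M+1) := by
    rw [hH, hM, hK]
    exact_mod_cast hh
  have hexp : (K+1)*(M+1) = K*M + K + M + 1 := by ring
  have hprod : 0 ≤ (K-1)*(M-1) := mul_nonneg (by omega) (by omega)
  have hprodexp : (K-1)*(M-1) = K*M - K - M + 1 := by ring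
  have hKM1 : K*(M+1) = K*M + K := by ring
  -- key linear facts (with K*M as an atom)
  have hKMH : K + M ≤ H := by omega
  have hHKM : H - 1 ≤ K*M := by omega
  -- step 1 : recurrence
  have step1 : ((layer m (k+1) H).card : ℤ) = ∑ j ∈ Finset.Icc (1:ℤ) M, ((layer m k (H - j)).card : ℤ) := by
    rw [layer_succ_card']
    push_cast
    rfl
  -- step W : window re-indexing
  have stepW : ∑ j ∈ Finset.Icc (1:ℤ) M, ((layer m k (H - j)).card : ℤ)
      = ∑ s ∈ Finset.Icc (H - M) (H - 1), ((layer m k s).card : ℤ) := by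
    refine Finset.sum_nbij' (i := fun j => H - j) (j := fun s => H - s) ?_ ?_ ?_ ?_ ?_
    · intro a ha; simp only [Finset.mem_Icc] at *; omega
    · intro a ha; simp only [Finset.mem_Icc] at *; omega
    · intro a ha; omega
    · intro a ha; omega
    · intro a ha; rfl
  -- symmetry for the upper tail
  have stepSym : ∑ s ∈ Finset.Icc H (K*M), ((layer m k s).card : ℤ)
      = ∑ s ∈ Finset.Icc K (H - M - 1), ((layer m k s).card : ℤ) := by
    refine Finset.sum_nbij' (i := fun s => K*(M+1) - s) (j := fun s => K*(M+1) - s) ?_ ?_ ?_ ?_ ?_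
    · intro a ha; simp only [Finset.mem_Icc] at *; omega
    · intro a ha; simp only [Finset.mem_Icc] at *; omega
    · intro a ha; omega
    · intro a ha; omega
    · intro a ha
      congr 1
      rw [hK, hM]
      exact layer_symm m k hm1 a
  -- total
  have stepTot : ∑ s ∈ Finset.Icc K (K*M), ((layer m k s).card : ℤ) = M^k := by
    rw [hK, hM]
    exact_mod_cast layer_total m k
  have split1 := sum_Icc_split (fun s => ((layer m k s).card : ℤ)) K (H - M - 1) (K*M)
    (by omega) (by omega)
  have split2 := sum_Icc_split (fun s => ((layer m k s).card : ℤ)) (H - M - 1 + 1) (H - 1) (K*M)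
    (by omega) (by omega)
  beta_reduce at split1 split2
  rw [show H - M - 1 + 1 = H - M from by ring] at split1 split2
  rw [show H - 1 + 1 = H from by ring] at split2
  rw [split2, stepSym] at split1
  rw [stepTot] at split1
  -- conclude
  have hE : ∑ s ∈ Finset.Icc K (H - M - 1), ((layer m k s).card : ℤ)
      = ∑ s ∈ Finset.Icc K (H - M - 1), E m k s :=
    Finset.sum_congr rfl fun s _ => card_layer_eq_E m hm1 k hk s
  rw [step1, stepW]
  rw [hE] at split1
  rw [show (Finset.Icc ((k:ℤ)) ((h:ℤ)-m-1)) = Finset.Icc K (H - M - 1) from rfl]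
  omega




lemma iChoose_zero_of_neg {a b : ℤ} (hb : b < 0) : iChoose a b = 0 := by
  unfold iChoose
  rw [if_pos (Or.inl hb)]

lemma c_zero_of_lt {k : ℕ} {s : ℤ} (hs : s < k) : c k s = 0 :=
  iChoose_zero_of_neg (by omega)

lemma inner_sum_eq (m n : ℕ) (hm : 2 ≤ m) (hn : 2 ≤ n) (r : ℕ) (hr : n - 1 ≤ r) :
    ∑ i ∈ Finset.range ((r + 1 - n) / (m - 1) + 1),
      (-1 : ℤ) ^ i * ((n - 1).choose i) * iChoose ((r : ℤ) - i * m - 1) ((r : ℤ) - i * m - n + 1)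
    = E m (n-1) (r:ℤ) := by
  have hn1 : ((n - 1 : ℕ) : ℤ) = (n : ℤ) - 1 := by omega
  set q := (r + 1 - n) / (m - 1) with hq
  set R := max (q + 1) (n - 1 + 1) with hR
  have hterm : ∀ i : ℕ,
      (-1 : ℤ) ^ i * ((n - 1).choose i) * iChoose ((r : ℤ) - i * m - 1) ((r : ℤ) - i * m - n + 1)
      = (-1 : ℤ) ^ i * ((n - 1).choose i) * c (n-1) ((r : ℤ) - i * m) := by
    intro i
    congr 1
    show iChoose ((r : ℤ) - i * m - 1) ((r : ℤ) - i * m - n + 1)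
      = iChoose ((r : ℤ) - i * m - 1) ((r : ℤ) - i * m - ((n-1 : ℕ) : ℤ))
    congr 1
    rw [hn1]
    ring
  -- vanishing beyond q
  have hvan : ∀ i : ℕ, q + 1 ≤ i → ((r : ℤ) - i * m - n + 1) < 0 := by
    intro i hi
    have hdd : (m-1) * q + (r + 1 - n) % (m-1) = r + 1 - n := Nat.div_add_mod _ _
    have hmod : (r + 1 - n) % (m-1) < m - 1 := Nat.mod_lt _ (by omega)
    have hmulsucc : (m-1)*(q+1) = (m-1)*q + (m-1) := Nat.mul_succ _ _
    have h1 : r + 1 - n < (m-1)*(q+1) := by omega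
    have h2 : (m-1)*(q+1) ≤ (m-1)*i := Nat.mul_le_mul_left _ hi
    have h3 : (m-1)*i ≤ m*i := Nat.mul_le_mul_right _ (by omega)
    have hfin : r + 1 - n < m * i := by omega
    have hz : ((m*i : ℕ) : ℤ) = (i:ℤ)*(m:ℤ) := by push_cast; ring
    omega
  have step1 : ∑ i ∈ Finset.range (q + 1),
      (-1 : ℤ) ^ i * ((n - 1).choose i) * iChoose ((r : ℤ) - i * m - 1) ((r : ℤ) - i * m - n + 1)
      = ∑ i ∈ Finset.range R,
        (-1 : ℤ) ^ i * ((n - 1).choose i) * c (n-1) ((r : ℤ) - i * m) := by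
    rw [Finset.sum_congr rfl (fun i _ => hterm i)]
    refine Finset.sum_subset (Finset.range_subset_range.mpr (by omega)) ?_
    · intro i hiR hiq
      rw [Finset.mem_range] at hiq
      have hi := hvan i (by omega)
      rw [c_zero_of_lt (by rw [hn1]; omega)]
      ring
  have step2 : E m (n-1) (r:ℤ) = ∑ i ∈ Finset.range R,
      (-1 : ℤ) ^ i * ((n - 1).choose i) * c (n-1) ((r : ℤ) - i * m) := by
    rw [E]
    refine Finset.sum_subset (Finset.range_subset_range.mpr (by omega)) ?_
    · intro i hiR hin
      rw [Finset.mem_range] at hin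
      rw [Nat.choose_eq_zero_of_lt (by omega)]
      push_cast
      ring
  rw [step1, step2]

end SCD

/-- If `n(m+1)` is even then, with `h = n(m+1)/2`, the maximum antichain size
`S(m,n)` in `[m]^n` equals
`m^{n-1} - 2 ∑_{r=n-1}^{h-m-1} ∑_{i=0}^{⌊(r-n+1)/(m-1)⌋}
  (-1)^i C(n-1,i) C(r-im-1, r-im-n+1)`. -/
theorem max_antichain_even_case (m n : ℕ) (hm : 2 ≤ m) (hn : 2 ≤ n)
    (heven : Even (n * (m + 1))) (S : ℕ)
    (hS : IsGreatest
      {k : ℕ | ∃ A : Finset (Fin n → ℕ),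
        A ⊆ Finset.Icc 1 (fun _ => m) ∧
        IsAntichain (· ≤ ·) (A : Set (Fin n → ℕ)) ∧ A.card = k} S) :
    (S : ℤ) =
      (m : ℤ) ^ (n - 1) -
        2 * ∑ r ∈ Finset.Icc (n - 1) (n * (m + 1) / 2 - m - 1),
          ∑ i ∈ Finset.range ((r + 1 - n) / (m - 1) + 1),
            (-1 : ℤ) ^ i * ((n - 1).choose i) *
              iChoose ((r : ℤ) - i * m - 1) ((r : ℤ) - i * m - n + 1) := by
  classical
  obtain ⟨h, hh⟩ := heven
  have hh2 : 2 * h = n * (m + 1) := by omega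
  have hm1 : (1:ℕ) ≤ m := by omega
  have hcube : SCD.cube m n = Finset.Icc 1 (fun _ => m) := rfl
  have hmem : (SCD.layer m n (h:ℤ)).card ∈
      {k : ℕ | ∃ A : Finset (Fin n → ℕ),
        A ⊆ Finset.Icc 1 (fun _ => m) ∧
        IsAntichain (· ≤ ·) (A : Set (Fin n → ℕ)) ∧ A.card = k} := by
    refine ⟨SCD.layer m n (h:ℤ), ?_, ?_, rfl⟩
    · rw [← hcube]
      exact Finset.filter_subset _ _
    · intro x hx y hy hne hle
      rw [Finset.mem_coe, SCD.mem_layer] at hx hy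
      apply hne
      funext i
      by_contra hxi
      have hstrict : (x i : ℤ) < y i :=
        lt_of_le_of_ne (by exact_mod_cast hle i) (by exact_mod_cast hxi)
      have hlt : (∑ j, (x j:ℤ)) < ∑ j, (y j:ℤ) :=
        Finset.sum_lt_sum (fun j _ => by exact_mod_cast hle j)
          ⟨i, Finset.mem_univ i, hstrict⟩
      omega
  have hub : ∀ k ∈ {k : ℕ | ∃ A : Finset (Fin n → ℕ),
      A ⊆ Finset.Icc 1 (fun _ => m) ∧
      IsAntichain (· ≤ ·) (A : Set (Fin n → ℕ)) ∧ A.card = k},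
      k ≤ (SCD.layer m n (h:ℤ)).card := by
    rintro k ⟨A, hsub, hanti, rfl⟩
    have hmaps : ∀ x ∈ A, SCD.G m n x h ∈ SCD.layer m n (h:ℤ) := by
      intro x hx
      have hxc : SCD.InCube m x := SCD.mem_cube.mp (by rw [hcube]; exact hsub hx)
      obtain ⟨hc, hs⟩ := SCD.G_middle m hm1 hh2 x hxc
      rw [SCD.mem_layer]
      refine ⟨hc, ?_⟩
      exact_mod_cast congrArg (Nat.cast : ℕ → ℤ) hs
    calc A.card = (A.image (fun x => SCD.G m n x h)).card := by
          rw [Finset.card_image_of_injOn]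
          intro x hx y hy hxy
          by_contra hne
          rcases SCD.comparable_of_G_eq m hm1 hh2
            (SCD.mem_cube.mp (by rw [hcube]; exact hsub hx))
            (SCD.mem_cube.mp (by rw [hcube]; exact hsub hy)) hxy with hc | hc
          · exact hanti hx hy hne hc
          · exact hanti hy hx (Ne.symm hne) hc
      _ ≤ (SCD.layer m n (h:ℤ)).card := by
          refine Finset.card_le_card ?_
          intro z hz
          rw [Finset.mem_image] at hz
          obtain ⟨x, hx, rfl⟩ := hz
          exact hmaps x hx
  have hSN : S = (SCD.layer m n (h:ℤ)).card := le_antisymm (hub S hS.1) (hS.2 hmem)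
  obtain ⟨k, rfl⟩ : ∃ k, n = k + 1 := ⟨n - 1, by omega⟩
  have hk1 : 1 ≤ k := by omega
  have hmc := SCD.middle_card m k hm hk1 h (by omega)
  rw [hSN, hmc]
  have hkm : m ≤ k*m := Nat.le_mul_of_pos_left m (by omega)
  have hexp : (k+1)*(m+1) = k*m + k + m + 1 := by ring
  have hmh : m + 1 ≤ h := by omega
  have key : ∀ r : ℕ, k ≤ r →
      (∑ i ∈ Finset.range ((r + 1 - (k + 1)) / (m - 1) + 1),
        (-1 : ℤ) ^ i * ((k).choose i) *
          iChoose ((r : ℤ) - i * m - 1) ((r : ℤ) - i * m - ((k:ℤ) + 1) + 1))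
      = SCD.E m k (r:ℤ) := by
    intro r hr
    have := SCD.inner_sum_eq m (k+1) hm hn r (by omega)
    simpa using this
  have hfinal : ∑ s ∈ Finset.Icc ((k:ℤ)) ((h:ℤ) - (m:ℤ) - 1), SCD.E m k s
      = ∑ r ∈ Finset.Icc k ((k + 1) * (m + 1) / 2 - m - 1),
        ∑ i ∈ Finset.range ((r + 1 - (k + 1)) / (m - 1) + 1),
          (-1 : ℤ) ^ i * ((k).choose i) *
            iChoose ((r : ℤ) - i * m - 1) ((r : ℤ) - i * m - ((k:ℤ) + 1) + 1) := by
    rw [show (k + 1) * (m + 1) / 2 - m - 1 = h - m - 1 from by omega]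
    rw [show ((h:ℤ) - (m:ℤ) - 1) = ((h - m - 1 : ℕ) : ℤ) from by omega]
    refine Eq.trans (SCD.sum_Icc_natCast (fun s => SCD.E m k s) k (h - m - 1)).symm ?_
    refine Finset.sum_congr rfl fun r hr => ?_
    rw [Finset.mem_Icc] at hr
    exact (key r hr.1).symm
  rw [hfinal]
  norm_num
end

section
/- The maximum size of an antichain in [m]^3 with componentwise order equals 3m^2/4 if m is even, and (3m^2+1)/4 if m is odd. -/
namespace MaxAC3

/-- 2D chain index of (a,b) in the grid [m]×[m]. -/
def ii (m a b : ℕ) : ℕ := min a (m + 1 - b)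
/-- position of (a,b) along its 2D chain (1-indexed) -/
def pp (m a b : ℕ) : ℕ := a + b - ii m a b
/-- second chain index: position of ((a,b),c) viewed in chain_i × [m]. -/
def jj (m a b c : ℕ) : ℕ := min (pp m a b) (m + 1 - c)

/-- Inverse: 2D position from (j, p). -/
def qq (m j p : ℕ) : ℕ := j + (p - (m + 1 - j))
def cC (m j p : ℕ) : ℕ := min p (m + 1 - j)
def aA (m i j p : ℕ) : ℕ := i + (qq m j p - (m + 1 - i))
def bB (m i j p : ℕ) : ℕ := min (qq m j p) (m + 1 - i)

lemma recon (m a b c : ℕ) (h : 1 ≤ a ∧ a ≤ m ∧ 1 ≤ b ∧ b ≤ m ∧ 1 ≤ c ∧ c ≤ m) :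
    aA m (ii m a b) (jj m a b c) (a + b + c - ii m a b - jj m a b c) = a ∧
    bB m (ii m a b) (jj m a b c) (a + b + c - ii m a b - jj m a b c) = b ∧
    cC m (jj m a b c) (a + b + c - ii m a b - jj m a b c) = c := by
  simp only [aA, bB, cC, qq, ii, jj, pp]
  omega

lemma mono (m i j p p' : ℕ) (h : p ≤ p') :
    aA m i j p ≤ aA m i j p' ∧ bB m i j p ≤ bB m i j p' ∧ cC m j p ≤ cC m j p' := by
  simp only [aA, bB, cC, qq]
  omega

lemma iotaRange (m a b c : ℕ) (h : 1 ≤ a ∧ a ≤ m ∧ 1 ≤ b ∧ b ≤ m ∧ 1 ≤ c ∧ c ≤ m) :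
    1 ≤ ii m a b ∧ ii m a b ≤ m ∧ 1 ≤ jj m a b c ∧ jj m a b c ≤ m ∧
    jj m a b c ≤ 2 * (m - ii m a b) + 1 := by
  simp only [ii, jj, pp]
  omega

lemma mid (m i j : ℕ) (hi : 1 ≤ i) (hi2 : i ≤ m) (hj : 1 ≤ j) (hjm : j ≤ m)
    (hjL : j ≤ 2 * (m - i) + 1) :
    (1 ≤ aA m i j ((3*m+3)/2 - i - j) ∧ aA m i j ((3*m+3)/2 - i - j) ≤ m) ∧
    (1 ≤ bB m i j ((3*m+3)/2 - i - j) ∧ bB m i j ((3*m+3)/2 - i - j) ≤ m) ∧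
    (1 ≤ cC m j ((3*m+3)/2 - i - j) ∧ cC m j ((3*m+3)/2 - i - j) ≤ m) ∧
    aA m i j ((3*m+3)/2 - i - j) + bB m i j ((3*m+3)/2 - i - j)
      + cC m j ((3*m+3)/2 - i - j) = (3*m+3)/2 ∧
    ii m (aA m i j ((3*m+3)/2 - i - j)) (bB m i j ((3*m+3)/2 - i - j)) = i ∧
    jj m (aA m i j ((3*m+3)/2 - i - j)) (bB m i j ((3*m+3)/2 - i - j))
      (cC m j ((3*m+3)/2 - i - j)) = j := by
  simp only [aA, bB, cC, qq, ii, jj, pp]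
  omega

lemma sum_odds (h : ℕ) : ∑ k ∈ Finset.range h, (2 * k + 1) = h * h := by
  induction h with
  | zero => simp
  | succ n ih => rw [Finset.sum_range_succ, ih]; ring

lemma sum_min (m : ℕ) (hm : 0 < m) :
    ∑ i ∈ Finset.Icc 1 m, min m (2 * (m - i) + 1) =
      (if Even m then 3 * m ^ 2 / 4 else (3 * m ^ 2 + 1) / 4) := by
  have h1 : Finset.Icc 1 m = Finset.Ico 1 (m + 1) := (Finset.Ico_add_one_right_eq_Icc (a := 1) (b := m)).symm
  rw [h1, Finset.sum_Ico_eq_sum_range]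
  simp only [Nat.add_sub_cancel]
  have h2 : ∑ k ∈ Finset.range m, min m (2 * (m - (1 + k)) + 1)
      = ∑ k ∈ Finset.range m, min m (2 * k + 1) := by
    rw [← Finset.sum_range_reflect]
    apply Finset.sum_congr rfl
    intro k hk
    simp only [Finset.mem_range] at hk
    congr 2
    omega
  rw [h2]
  set h := (m + 1) / 2 with hh
  clear_value h
  have hhm : h ≤ m := by omega
  have h3 : ∑ k ∈ Finset.range m, min m (2 * k + 1)
      = ∑ k ∈ Finset.range h, min m (2 * k + 1) + ∑ k ∈ Finset.Ico h m, min m (2 * k + 1) := by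
    rw [Finset.range_eq_Ico, ← Finset.sum_Ico_consecutive _ (Nat.zero_le h) hhm,
      ← Finset.range_eq_Ico]
  rw [h3]
  have h4 : ∑ k ∈ Finset.range h, min m (2 * k + 1) = h * h := by
    rw [← sum_odds h]
    apply Finset.sum_congr rfl
    intro k hk
    simp only [Finset.mem_range] at hk
    omega
  have h5 : ∑ k ∈ Finset.Ico h m, min m (2 * k + 1) = (m - h) * m := by
    rw [Finset.sum_congr rfl (fun k hk => ?_), Finset.sum_const, Nat.card_Ico, smul_eq_mul]
    simp only [Finset.mem_Ico] at hk
    omega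
  rw [h4, h5]
  rcases Nat.even_or_odd m with he | ho
  · rw [if_pos he]
    obtain ⟨r, hr⟩ := he
    subst hr
    have hhr : h = r := by omega
    rw [hhr]
    have e1 : r + r - r = r := by omega
    rw [e1]
    have : 3 * (r + r) ^ 2 = (r * r + r * (r + r)) * 4 := by ring
    omega
  · rw [if_neg (Nat.not_even_iff_odd.mpr ho)]
    obtain ⟨r, hr⟩ := ho
    subst hr
    have hhr : h = r + 1 := by omega
    subst hhr
    have e1 : 2 * r + 1 - (r + 1) = r := by omega
    rw [e1]
    have : 3 * (2 * r + 1) ^ 2 + 1 = ((r + 1) * (r + 1) + r * (2 * r + 1)) * 4 := by ring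
    omega

lemma mem_cube {m : ℕ} {x : Fin 3 → ℕ} :
    x ∈ Finset.Icc (1 : Fin 3 → ℕ) (fun _ => m) ↔
      (1 ≤ x 0 ∧ x 0 ≤ m ∧ 1 ≤ x 1 ∧ x 1 ≤ m ∧ 1 ≤ x 2 ∧ x 2 ≤ m) := by
  simp only [Finset.mem_Icc, Pi.le_def, Pi.one_apply]
  constructor
  · rintro ⟨h1, h2⟩
    exact ⟨h1 0, h2 0, h1 1, h2 1, h1 2, h2 2⟩
  · rintro ⟨a1, a2, b1, b2, c1, c2⟩
    refine ⟨fun i => ?_, fun i => ?_⟩ <;> fin_cases i <;> assumption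

lemma eq_of_le_of_sum {x y : Fin 3 → ℕ} (h : x ≤ y)
    (hs : x 0 + x 1 + x 2 = y 0 + y 1 + y 2) : x = y := by
  have h0 : x 0 ≤ y 0 := h 0
  have h1 : x 1 ≤ y 1 := h 1
  have h2 : x 2 ≤ y 2 := h 2
  have e0 : x 0 = y 0 := by omega
  have e1 : x 1 = y 1 := by omega
  have e2 : x 2 = y 2 := by omega
  funext i
  fin_cases i <;> first | exact e0 | exact e1 | exact e2

lemma le_of_rank_le (m : ℕ) {x y : Fin 3 → ℕ}
    (hx : 1 ≤ x 0 ∧ x 0 ≤ m ∧ 1 ≤ x 1 ∧ x 1 ≤ m ∧ 1 ≤ x 2 ∧ x 2 ≤ m)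
    (hy : 1 ≤ y 0 ∧ y 0 ≤ m ∧ 1 ≤ y 1 ∧ y 1 ≤ m ∧ 1 ≤ y 2 ∧ y 2 ≤ m)
    (hi : ii m (x 0) (x 1) = ii m (y 0) (y 1))
    (hj : jj m (x 0) (x 1) (x 2) = jj m (y 0) (y 1) (y 2))
    (hr : x 0 + x 1 + x 2 ≤ y 0 + y 1 + y 2) : x ≤ y := by
  obtain ⟨ra, rb, rc⟩ := recon m (x 0) (x 1) (x 2) hx
  obtain ⟨sa, sb, sc⟩ := recon m (y 0) (y 1) (y 2) hy
  rw [← hi, ← hj] at sa sb sc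
  have hp : (x 0 + x 1 + x 2 - ii m (x 0) (x 1) - jj m (x 0) (x 1) (x 2))
      ≤ (y 0 + y 1 + y 2 - ii m (x 0) (x 1) - jj m (x 0) (x 1) (x 2)) := by omega
  obtain ⟨ma, mb, mc⟩ := mono m (ii m (x 0) (x 1)) (jj m (x 0) (x 1) (x 2)) _ _ hp
  rw [ra, sa] at ma
  rw [rb, sb] at mb
  rw [rc, sc] at mc
  intro i
  fin_cases i <;> assumption

lemma comparable (m : ℕ) {x y : Fin 3 → ℕ}
    (hx : 1 ≤ x 0 ∧ x 0 ≤ m ∧ 1 ≤ x 1 ∧ x 1 ≤ m ∧ 1 ≤ x 2 ∧ x 2 ≤ m)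
    (hy : 1 ≤ y 0 ∧ y 0 ≤ m ∧ 1 ≤ y 1 ∧ y 1 ≤ m ∧ 1 ≤ y 2 ∧ y 2 ≤ m)
    (hi : ii m (x 0) (x 1) = ii m (y 0) (y 1))
    (hj : jj m (x 0) (x 1) (x 2) = jj m (y 0) (y 1) (y 2)) :
    x ≤ y ∨ y ≤ x := by
  rcases le_total (x 0 + x 1 + x 2) (y 0 + y 1 + y 2) with hr | hr
  · exact Or.inl (le_of_rank_le m hx hy hi hj hr)
  · exact Or.inr (le_of_rank_le m hy hx hi.symm hj.symm hr)

/-- The middle-element map: sends x to the element of its chain at the middle rank. -/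
def mu (m : ℕ) (x : Fin 3 → ℕ) : Fin 3 → ℕ :=
  ![aA m (ii m (x 0) (x 1)) (jj m (x 0) (x 1) (x 2))
      ((3*m+3)/2 - ii m (x 0) (x 1) - jj m (x 0) (x 1) (x 2)),
    bB m (ii m (x 0) (x 1)) (jj m (x 0) (x 1) (x 2))
      ((3*m+3)/2 - ii m (x 0) (x 1) - jj m (x 0) (x 1) (x 2)),
    cC m (jj m (x 0) (x 1) (x 2))
      ((3*m+3)/2 - ii m (x 0) (x 1) - jj m (x 0) (x 1) (x 2))]

lemma mu_apply (m : ℕ) (x : Fin 3 → ℕ) :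
    mu m x 0 = aA m (ii m (x 0) (x 1)) (jj m (x 0) (x 1) (x 2))
      ((3*m+3)/2 - ii m (x 0) (x 1) - jj m (x 0) (x 1) (x 2)) ∧
    mu m x 1 = bB m (ii m (x 0) (x 1)) (jj m (x 0) (x 1) (x 2))
      ((3*m+3)/2 - ii m (x 0) (x 1) - jj m (x 0) (x 1) (x 2)) ∧
    mu m x 2 = cC m (jj m (x 0) (x 1) (x 2))
      ((3*m+3)/2 - ii m (x 0) (x 1) - jj m (x 0) (x 1) (x 2)) := by
  refine ⟨rfl, rfl, rfl⟩

/-- mu properties for x in the cube. -/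
lemma mu_spec (m : ℕ) {x : Fin 3 → ℕ}
    (hx : 1 ≤ x 0 ∧ x 0 ≤ m ∧ 1 ≤ x 1 ∧ x 1 ≤ m ∧ 1 ≤ x 2 ∧ x 2 ≤ m) :
    (1 ≤ mu m x 0 ∧ mu m x 0 ≤ m ∧ 1 ≤ mu m x 1 ∧ mu m x 1 ≤ m ∧
      1 ≤ mu m x 2 ∧ mu m x 2 ≤ m) ∧
    mu m x 0 + mu m x 1 + mu m x 2 = (3*m+3)/2 ∧
    ii m (mu m x 0) (mu m x 1) = ii m (x 0) (x 1) ∧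
    jj m (mu m x 0) (mu m x 1) (mu m x 2) = jj m (x 0) (x 1) (x 2) := by
  obtain ⟨r1, r2, r3, r4, r5⟩ := iotaRange m (x 0) (x 1) (x 2) hx
  obtain ⟨⟨a1, a2⟩, ⟨b1, b2⟩, ⟨c1, c2⟩, hsum, hieq, hjeq⟩ :=
    mid m (ii m (x 0) (x 1)) (jj m (x 0) (x 1) (x 2)) r1 r2 r3 r4 r5
  obtain ⟨e0, e1, e2⟩ := mu_apply m x
  rw [e0, e1, e2]
  exact ⟨⟨a1, a2, b1, b2, c1, c2⟩, hsum, hieq, hjeq⟩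

end MaxAC3

open MaxAC3 in
/-- The maximum size of an antichain in `[m]^3` with the componentwise order is
`3m²/4` when `m` is even and `(3m²+1)/4` when `m` is odd. -/
theorem max_antichain_three (m : ℕ) (hm : 0 < m) :
    IsGreatest
      {k : ℕ | ∃ A : Finset (Fin 3 → ℕ),
        A ⊆ Finset.Icc 1 (fun _ => m) ∧
        IsAntichain (· ≤ ·) (A : Set (Fin 3 → ℕ)) ∧ A.card = k}
      (if Even m then 3 * m ^ 2 / 4 else (3 * m ^ 2 + 1) / 4) := by
  set M : Finset (Fin 3 → ℕ) :=
    (Finset.Icc (1 : Fin 3 → ℕ) (fun _ => m)).filter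
      (fun x => x 0 + x 1 + x 2 = (3*m+3)/2) with hM
  have hMsub : M ⊆ Finset.Icc (1 : Fin 3 → ℕ) (fun _ => m) := Finset.filter_subset _ _
  have hMmem : ∀ x, x ∈ M ↔
      ((1 ≤ x 0 ∧ x 0 ≤ m ∧ 1 ≤ x 1 ∧ x 1 ≤ m ∧ 1 ≤ x 2 ∧ x 2 ≤ m) ∧
        x 0 + x 1 + x 2 = (3*m+3)/2) := by
    intro x
    rw [hM, Finset.mem_filter, mem_cube]
  -- M is an antichain
  have hManti : IsAntichain (· ≤ ·) (M : Set (Fin 3 → ℕ)) := by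
    intro x hx y hy hne hle
    rw [Finset.mem_coe, hMmem] at hx hy
    exact hne (eq_of_le_of_sum hle (by omega))
  -- card M
  have hMcard : M.card = (if Even m then 3 * m ^ 2 / 4 else (3 * m ^ 2 + 1) / 4) := by
    rw [← sum_min m hm]
    have hbij : M.card =
        ((Finset.Icc 1 m).sigma (fun i => Finset.Icc 1 (min m (2 * (m - i) + 1)))).card := by
      apply Finset.card_bij
        (i := fun x _ => (⟨ii m (x 0) (x 1), jj m (x 0) (x 1) (x 2)⟩ : Σ _ : ℕ, ℕ))
      · intro x hx
        rw [hMmem] at hx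
        obtain ⟨r1, r2, r3, r4, r5⟩ := iotaRange m (x 0) (x 1) (x 2) hx.1
        simp only [Finset.mem_sigma, Finset.mem_Icc]
        omega
      · intro x hx y hy heq
        rw [hMmem] at hx hy
        simp only [Sigma.mk.inj_iff, heq_eq_eq] at heq
        rcases comparable m hx.1 hy.1 heq.1 heq.2 with h | h
        · exact eq_of_le_of_sum h (by omega)
        · exact (eq_of_le_of_sum h (by omega)).symm
      · rintro ⟨i, j⟩ hb
        simp only [Finset.mem_sigma, Finset.mem_Icc] at hb
        have hi1 : 1 ≤ i := hb.1.1
        have hi2 : i ≤ m := hb.1.2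
        have hj1 : 1 ≤ j := hb.2.1
        have hjm : j ≤ m := by omega
        have hjL : j ≤ 2 * (m - i) + 1 := by omega
        obtain ⟨⟨a1, a2⟩, ⟨b1, b2⟩, ⟨c1, c2⟩, hsum, hieq, hjeq⟩ :=
          mid m i j hi1 hi2 hj1 hjm hjL
        refine ⟨![aA m i j ((3*m+3)/2 - i - j), bB m i j ((3*m+3)/2 - i - j),
            cC m j ((3*m+3)/2 - i - j)], ?_, ?_⟩
        · rw [hMmem]
          simp only [Matrix.cons_val_zero, Matrix.cons_val_one, Matrix.head_cons,
            Matrix.cons_val_two, Matrix.tail_cons]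
          exact ⟨⟨a1, a2, b1, b2, c1, c2⟩, hsum⟩
        · simp only [Matrix.cons_val_zero, Matrix.cons_val_one, Matrix.head_cons,
            Matrix.cons_val_two, Matrix.tail_cons]
          rw [hieq, hjeq]
    rw [hbij, Finset.card_sigma]
    apply Finset.sum_congr rfl
    intro i _
    rw [Nat.card_Icc]
    omega
  constructor
  · exact ⟨M, hMsub, hManti, hMcard⟩
  · rintro k ⟨A, hAsub, hAanti, rfl⟩
    rw [← hMcard]
    apply Finset.card_le_card_of_injOn (mu m)
    · intro x hxA
      have hx := mem_cube.mp (hAsub hxA)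
      obtain ⟨hcube, hsum, _, _⟩ := mu_spec m hx
      rw [Finset.mem_coe, hMmem]
      exact ⟨hcube, hsum⟩
    · intro x hxA y hyA heq
      have hx := mem_cube.mp (hAsub hxA)
      have hy := mem_cube.mp (hAsub hyA)
      obtain ⟨_, _, hix, hjx⟩ := mu_spec m hx
      obtain ⟨_, _, hiy, hjy⟩ := mu_spec m hy
      have hieq : ii m (x 0) (x 1) = ii m (y 0) (y 1) := by
        rw [← hix, ← hiy, heq]
      have hjeq : jj m (x 0) (x 1) (x 2) = jj m (y 0) (y 1) (y 2) := by
        rw [← hjx, ← hjy, heq]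
      rcases comparable m hx hy hieq hjeq with h | h
      · by_contra hne
        exact hAanti hxA hyA hne h
      · by_contra hne
        exact hAanti hyA hxA (Ne.symm hne) h
end

section
/- The maximum size of an antichain in [m]^4 with componentwise order equals (2m^3 + m)/3. -/
open Finset

def psi (m k t : ℕ) : ℕ × ℕ :=
  if t ≤ m - k then (k, t + 1) else (t + 2 * k - m, m + 1 - k)

lemma psi_mem {m k t : ℕ} (h1 : 1 ≤ k) (h2 : k ≤ m) (h3 : t ≤ 2 * (m - k)) :
    1 ≤ (psi m k t).1 ∧ (psi m k t).1 ≤ m ∧ 1 ≤ (psi m k t).2 ∧ (psi m k t).2 ≤ m ∧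
    (psi m k t).1 + (psi m k t).2 = k + 1 + t ∧
    min (psi m k t).1 (m + 1 - (psi m k t).2) = k := by
  unfold psi; split_ifs <;> simp <;> omega

lemma psi_eq {m a b : ℕ} (ha1 : 1 ≤ a) (ha2 : a ≤ m) (hb1 : 1 ≤ b) (hb2 : b ≤ m) :
    psi m (min a (m + 1 - b)) (a + b - min a (m + 1 - b) - 1) = (a, b) := by
  unfold psi; split_ifs <;> (rw [Prod.mk.injEq]; constructor <;> omega)

lemma psi_mono {m k t t' : ℕ} (h1 : 1 ≤ k) (h2 : k ≤ m) (h : t ≤ t')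
    (h3 : t' ≤ 2 * (m - k)) :
    (psi m k t).1 ≤ (psi m k t').1 ∧ (psi m k t).2 ≤ (psi m k t').2 := by
  unfold psi; split_ifs <;> simp <;> omega

def jOf (m a b c d : ℕ) : ℕ :=
  min (a + b - min a (m + 1 - b) - 1)
    (2 * (m - min c (m + 1 - d)) - (c + d - min c (m + 1 - d) - 1))

def mu1 (m a b c d : ℕ) : ℕ :=
  jOf m a b c d + ((m - min a (m + 1 - b)) - (m - min c (m + 1 - d)))

def mu2 (m a b c d : ℕ) : ℕ :=
  (m - min a (m + 1 - b)) + (m - min c (m + 1 - d)) - mu1 m a b c d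

def mid (m a b c d : ℕ) : (ℕ × ℕ) × (ℕ × ℕ) :=
  (psi m (min a (m + 1 - b)) (mu1 m a b c d), psi m (min c (m + 1 - d)) (mu2 m a b c d))

lemma mu_bounds {m a b c d : ℕ} (ha1 : 1 ≤ a) (ha2 : a ≤ m) (hb1 : 1 ≤ b) (hb2 : b ≤ m)
    (hc1 : 1 ≤ c) (hc2 : c ≤ m) (hd1 : 1 ≤ d) (hd2 : d ≤ m) :
    mu1 m a b c d ≤ 2 * (m - min a (m + 1 - b)) ∧
    mu2 m a b c d ≤ 2 * (m - min c (m + 1 - d)) ∧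
    mu1 m a b c d + mu2 m a b c d = (m - min a (m + 1 - b)) + (m - min c (m + 1 - d)) ∧
    min (mu1 m a b c d) (2 * (m - min c (m + 1 - d)) - mu2 m a b c d) = jOf m a b c d := by
  unfold mu2 mu1 jOf; omega

set_option maxHeartbeats 1000000 in
lemma mid_mem {m a b c d : ℕ} (ha1 : 1 ≤ a) (ha2 : a ≤ m) (hb1 : 1 ≤ b) (hb2 : b ≤ m)
    (hc1 : 1 ≤ c) (hc2 : c ≤ m) (hd1 : 1 ≤ d) (hd2 : d ≤ m) :
    (1 ≤ (mid m a b c d).1.1 ∧ (mid m a b c d).1.1 ≤ m ∧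
     1 ≤ (mid m a b c d).1.2 ∧ (mid m a b c d).1.2 ≤ m ∧
     1 ≤ (mid m a b c d).2.1 ∧ (mid m a b c d).2.1 ≤ m ∧
     1 ≤ (mid m a b c d).2.2 ∧ (mid m a b c d).2.2 ≤ m) ∧
    (mid m a b c d).1.1 + (mid m a b c d).1.2 + (mid m a b c d).2.1 + (mid m a b c d).2.2
      = 2 * m + 2 := by
  obtain ⟨hm1, hm2, hm3, -⟩ := mu_bounds ha1 ha2 hb1 hb2 hc1 hc2 hd1 hd2
  have h1 := psi_mem (m := m) (k := min a (m + 1 - b)) (t := mu1 m a b c d)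
    (by omega) (by omega) hm1
  have h2 := psi_mem (m := m) (k := min c (m + 1 - d)) (t := mu2 m a b c d)
    (by omega) (by omega) hm2
  unfold mid
  dsimp only
  refine ⟨⟨h1.1, h1.2.1, h1.2.2.1, h1.2.2.2.1, h2.1, h2.2.1, h2.2.2.1, h2.2.2.2.1⟩, ?_⟩
  have e1 := h1.2.2.2.2.1
  have e2 := h2.2.2.2.2.1
  omega

lemma mid_comp {m a b c d a' b' c' d' : ℕ}
    (ha1 : 1 ≤ a) (ha2 : a ≤ m) (hb1 : 1 ≤ b) (hb2 : b ≤ m)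
    (hc1 : 1 ≤ c) (hc2 : c ≤ m) (hd1 : 1 ≤ d) (hd2 : d ≤ m)
    (ha1' : 1 ≤ a') (ha2' : a' ≤ m) (hb1' : 1 ≤ b') (hb2' : b' ≤ m)
    (hc1' : 1 ≤ c') (hc2' : c' ≤ m) (hd1' : 1 ≤ d') (hd2' : d' ≤ m)
    (H : mid m a b c d = mid m a' b' c' d')
    (hs : a + b + c + d ≤ a' + b' + c' + d') :
    a ≤ a' ∧ b ≤ b' ∧ c ≤ c' ∧ d ≤ d' := by
  have H1 : psi m (min a (m + 1 - b)) (mu1 m a b c d)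
      = psi m (min a' (m + 1 - b')) (mu1 m a' b' c' d') := congrArg Prod.fst H
  have H2 : psi m (min c (m + 1 - d)) (mu2 m a b c d)
      = psi m (min c' (m + 1 - d')) (mu2 m a' b' c' d') := congrArg Prod.snd H
  obtain ⟨B1, B2, B3, B4⟩ := mu_bounds ha1 ha2 hb1 hb2 hc1 hc2 hd1 hd2 (m := m)
  obtain ⟨B1', B2', B3', B4'⟩ := mu_bounds ha1' ha2' hb1' hb2' hc1' hc2' hd1' hd2' (m := m)
  have P1 := psi_mem (m := m) (k := min a (m + 1 - b)) (t := mu1 m a b c d)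
    (by omega) (by omega) B1
  have P1' := psi_mem (m := m) (k := min a' (m + 1 - b')) (t := mu1 m a' b' c' d')
    (by omega) (by omega) B1'
  have P2 := psi_mem (m := m) (k := min c (m + 1 - d)) (t := mu2 m a b c d)
    (by omega) (by omega) B2
  have P2' := psi_mem (m := m) (k := min c' (m + 1 - d')) (t := mu2 m a' b' c' d')
    (by omega) (by omega) B2'
  have K1 : min a (m + 1 - b) = min a' (m + 1 - b') := by
    rw [← P1.2.2.2.2.2, ← P1'.2.2.2.2.2, H1]
  have K2 : min c (m + 1 - d) = min c' (m + 1 - d') := by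
    rw [← P2.2.2.2.2.2, ← P2'.2.2.2.2.2, H2]
  have M1 : mu1 m a b c d = mu1 m a' b' c' d' := by
    have e := P1.2.2.2.2.1
    have e' := P1'.2.2.2.2.1
    rw [H1] at e
    omega
  have M2 : mu2 m a b c d = mu2 m a' b' c' d' := by
    have e := P2.2.2.2.2.1
    have e' := P2'.2.2.2.2.1
    rw [H2] at e
    omega
  have J : jOf m a b c d = jOf m a' b' c' d' := by
    rw [← B4, ← B4', M1, M2, K2]
  -- hook comparability at the level of positions
  have hpq : a + b - min a (m + 1 - b) - 1 ≤ a' + b' - min a' (m + 1 - b') - 1 ∧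
      c + d - min c (m + 1 - d) - 1 ≤ c' + d' - min c' (m + 1 - d') - 1 := by
    unfold jOf at J
    clear H H1 H2 B1 B2 B3 B4 B1' B2' B3' B4' P1 P1' P2 P2' M1 M2
    omega
  -- transfer back via psi
  have E : psi m (min a (m + 1 - b)) (a + b - min a (m + 1 - b) - 1) = (a, b) :=
    psi_eq ha1 ha2 hb1 hb2
  have E' : psi m (min a' (m + 1 - b')) (a' + b' - min a' (m + 1 - b') - 1) = (a', b') :=
    psi_eq ha1' ha2' hb1' hb2'
  have F : psi m (min c (m + 1 - d)) (c + d - min c (m + 1 - d) - 1) = (c, d) :=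
    psi_eq hc1 hc2 hd1 hd2
  have F' : psi m (min c' (m + 1 - d')) (c' + d' - min c' (m + 1 - d') - 1) = (c', d') :=
    psi_eq hc1' hc2' hd1' hd2'
  rw [← K1] at E'
  rw [← K2] at F'
  clear H H1 H2 B1 B2 B3 B4 B1' B2' B3' B4' P1 P1' P2 P2' M1 M2 J hs
  have mono1 := psi_mono (m := m) (k := min a (m + 1 - b)) (by omega) (by omega)
    hpq.1 (by omega)
  have mono2 := psi_mono (m := m) (k := min c (m + 1 - d)) (by omega) (by omega)
    hpq.2 (by omega)
  rw [← K1] at mono1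
  rw [E, E'] at mono1
  rw [← K2] at mono2
  rw [F, F'] at mono2
  exact ⟨mono1.1, mono1.2, mono2.1, mono2.2⟩


lemma sumsq (n : ℕ) : 6 * ∑ i ∈ range (n + 1), i * i = n * (n + 1) * (2 * n + 1) := by
  induction n with
  | zero => simp
  | succ n ih => rw [sum_range_succ, Nat.mul_add, ih]; ring

lemma Ppair_card (m s : ℕ) :
    ((Finset.Icc 1 m ×ˢ Finset.Icc 1 m).filter fun p => p.1 + p.2 = s).card
      = min (s - 1) (2 * m + 1 - s) := by
  have h : ((Finset.Icc 1 m ×ˢ Finset.Icc 1 m).filter fun p => p.1 + p.2 = s).card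
      = (Finset.Icc (max 1 (s - m)) (min m (s - 1))).card := by
    apply Finset.card_nbij' (i := fun p => p.1) (j := fun a => (a, s - a))
    · intro p hp
      simp only [Finset.mem_coe, Finset.mem_filter, Finset.mem_product, Finset.mem_Icc] at *
      omega
    · intro a ha
      simp only [Finset.mem_coe, Finset.mem_filter, Finset.mem_product, Finset.mem_Icc] at *
      omega
    · rintro ⟨x, y⟩ hp
      simp only [Finset.mem_coe, Finset.mem_filter, Finset.mem_product, Finset.mem_Icc,
        Prod.mk.injEq] at *
      exact ⟨trivial, by omega⟩
    · intro a _
      rfl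
  rw [h, Nat.card_Icc]
  omega

lemma mem_box {m : ℕ} {x : Fin 4 → ℕ} :
    x ∈ Finset.Icc (1 : Fin 4 → ℕ) (fun _ => m) ↔ ∀ i, 1 ≤ x i ∧ x i ≤ m := by
  simp only [Finset.mem_Icc, Pi.le_def, Pi.one_apply, ← forall_and]

lemma fiber_card (m s : ℕ) :
    (((Finset.Icc (1 : Fin 4 → ℕ) (fun _ => m)).filter
        fun x => x 0 + x 1 + x 2 + x 3 = 2 * m + 2).filter
      fun x => x 0 + x 1 = s).card
    = min (s - 1) (2 * m + 1 - s) * min (2 * m + 2 - s - 1) (2 * m + 1 - (2 * m + 2 - s)) := by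
  rw [← Ppair_card m s, ← Ppair_card m (2 * m + 2 - s), ← Finset.card_product]
  apply Finset.card_nbij' (i := fun x => ((x 0, x 1), (x 2, x 3)))
    (j := fun P => ![P.1.1, P.1.2, P.2.1, P.2.2])
  · intro x hx
    rw [Finset.mem_coe, Finset.mem_filter, Finset.mem_filter, mem_box] at hx
    obtain ⟨⟨hbox, hsum⟩, hs⟩ := hx
    have h0 := hbox 0; have h1 := hbox 1; have h2 := hbox 2; have h3 := hbox 3
    simp only [Finset.mem_coe, Finset.mem_product, Finset.mem_filter, Finset.mem_Icc]
    omega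
  · rintro ⟨⟨a, b⟩, ⟨c, d⟩⟩ hP
    simp only [Finset.mem_coe, Finset.mem_product, Finset.mem_filter, Finset.mem_Icc] at hP
    rw [Finset.mem_coe, Finset.mem_filter, Finset.mem_filter, mem_box]
    refine ⟨⟨fun i => ?_, ?_⟩, ?_⟩
    · fin_cases i <;> simp <;> omega
    · simp
      omega
    · simp
      omega
  · intro x _
    funext i
    fin_cases i <;> rfl
  · rintro ⟨⟨a, b⟩, ⟨c, d⟩⟩ _
    rfl

lemma card_M (m : ℕ) (hm : 0 < m) :
    ((Finset.Icc (1 : Fin 4 → ℕ) (fun _ => m)).filter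
        fun x => x 0 + x 1 + x 2 + x 3 = 2 * m + 2).card = (2 * m ^ 3 + m) / 3 := by
  have hterm : ∀ s ∈ range (2 * m + 1),
      (((Finset.Icc (1 : Fin 4 → ℕ) (fun _ => m)).filter
        fun x => x 0 + x 1 + x 2 + x 3 = 2 * m + 2).filter fun x => x 0 + x 1 = s).card
      = min (s - 1) (2 * m + 1 - s) * min (s - 1) (2 * m + 1 - s) := by
    intro s hs
    rw [fiber_card]
    simp only [Finset.mem_range] at hs
    congr 1
    omega
  have hfib : ((Finset.Icc (1 : Fin 4 → ℕ) (fun _ => m)).filter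
        fun x => x 0 + x 1 + x 2 + x 3 = 2 * m + 2).card
      = ∑ s ∈ range (2 * m + 1), (((Finset.Icc (1 : Fin 4 → ℕ) (fun _ => m)).filter
        fun x => x 0 + x 1 + x 2 + x 3 = 2 * m + 2).filter fun x => x 0 + x 1 = s).card := by
    apply Finset.card_eq_sum_card_fiberwise
    intro x hx
    rw [Finset.mem_coe, Finset.mem_filter, mem_box] at hx
    have h0 := hx.1 0; have h1 := hx.1 1
    rw [Finset.mem_coe, Finset.mem_range]
    clear hterm
    beta_reduce
    omega
  rw [hfib, Finset.sum_congr rfl hterm]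
  clear hfib hterm
  have split := Finset.sum_range_add
    (fun s => min (s - 1) (2 * m + 1 - s) * min (s - 1) (2 * m + 1 - s)) (m + 1) m
  have hr : m + 1 + m = 2 * m + 1 := by ring
  rw [hr] at split
  rw [split]
  clear split
  have e1 : ∑ i ∈ range (m + 1), min (i - 1) (2 * m + 1 - i) * min (i - 1) (2 * m + 1 - i)
      = ∑ i ∈ range (m + 1), (i - 1) * (i - 1) := by
    apply Finset.sum_congr rfl
    intro i hi
    simp only [Finset.mem_range] at hi
    congr 1 <;> omega
  have e2 : ∑ i ∈ range m, min ((m + 1 + i) - 1) (2 * m + 1 - (m + 1 + i)) *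
        min ((m + 1 + i) - 1) (2 * m + 1 - (m + 1 + i))
      = ∑ i ∈ range m, (m - i) * (m - i) := by
    apply Finset.sum_congr rfl
    intro i hi
    simp only [Finset.mem_range] at hi
    congr 1 <;> omega
  rw [e1, e2]
  clear e1 e2
  have e3 : ∑ i ∈ range (m + 1), (i - 1) * (i - 1) = ∑ i ∈ range m, i * i := by
    rw [Finset.sum_range_succ' (fun i => (i - 1) * (i - 1)) m]
    simp
  have e4 : ∑ i ∈ range m, (m - i) * (m - i) = ∑ i ∈ range m, (i + 1) * (i + 1) := by
    rw [← Finset.sum_range_reflect]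
    apply Finset.sum_congr rfl
    intro i hi
    simp only [Finset.mem_range] at hi
    congr 1 <;> omega
  have e5 : ∑ i ∈ range m, (i + 1) * (i + 1) = ∑ i ∈ range (m + 1), i * i := by
    rw [Finset.sum_range_succ' (fun i => i * i) m]
    simp
  rw [e3, e4, e5]
  clear e3 e4 e5
  obtain ⟨n, rfl⟩ : ∃ n, m = n + 1 := ⟨m - 1, by omega⟩
  have key : 6 * (∑ i ∈ range (n + 1), i * i + ∑ i ∈ range (n + 1 + 1), i * i)
      = 4 * (n + 1) ^ 3 + 2 * (n + 1) := by
    rw [Nat.mul_add, sumsq n, sumsq (n + 1)]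
    ring
  refine (Nat.div_eq_of_eq_mul_left (by norm_num) ?_).symm
  apply Nat.eq_of_mul_eq_mul_left (show 0 < 2 by norm_num)
  calc 2 * (2 * (n + 1) ^ 3 + (n + 1)) = 4 * (n + 1) ^ 3 + 2 * (n + 1) := by ring
    _ = 6 * (∑ i ∈ range (n + 1), i * i + ∑ i ∈ range (n + 1 + 1), i * i) := key.symm
    _ = 2 * ((∑ i ∈ range (n + 1), i * i + ∑ i ∈ range (n + 1 + 1), i * i) * 3) := by ring


/-- the symmetric-chain middle map on `[m]^4`. -/
def phi (m : ℕ) (x : Fin 4 → ℕ) : Fin 4 → ℕ :=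
  ![(mid m (x 0) (x 1) (x 2) (x 3)).1.1, (mid m (x 0) (x 1) (x 2) (x 3)).1.2,
    (mid m (x 0) (x 1) (x 2) (x 3)).2.1, (mid m (x 0) (x 1) (x 2) (x 3)).2.2]

/-- The maximum size of an antichain in `[m]^4` with the componentwise order is
`(2m³ + m)/3`. -/
theorem max_antichain_four (m : ℕ) (hm : 0 < m) :
    IsGreatest
      {k : ℕ | ∃ A : Finset (Fin 4 → ℕ),
        A ⊆ Finset.Icc 1 (fun _ => m) ∧
        IsAntichain (· ≤ ·) (A : Set (Fin 4 → ℕ)) ∧ A.card = k}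
      ((2 * m ^ 3 + m) / 3) := by
  constructor
  · -- the middle layer is an antichain of the right size
    refine ⟨(Finset.Icc (1 : Fin 4 → ℕ) (fun _ => m)).filter
      (fun x => x 0 + x 1 + x 2 + x 3 = 2 * m + 2), Finset.filter_subset _ _, ?_, card_M m hm⟩
    intro x hx y hy hne hle
    apply hne
    rw [Finset.mem_coe, Finset.mem_filter] at hx hy
    have h0 : x 0 ≤ y 0 := hle 0
    have h1 : x 1 ≤ y 1 := hle 1
    have h2 : x 2 ≤ y 2 := hle 2
    have h3 : x 3 ≤ y 3 := hle 3
    have hsx := hx.2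
    have hsy := hy.2
    have e : x 0 = y 0 ∧ x 1 = y 1 ∧ x 2 = y 2 ∧ x 3 = y 3 := by omega
    funext i
    fin_cases i
    exacts [e.1, e.2.1, e.2.2.1, e.2.2.2]
  · -- upper bound
    rintro k ⟨A, hsub, hanti, rfl⟩
    rw [← card_M m hm]
    apply Finset.card_le_card_of_injOn (phi m)
    · -- maps into the middle layer
      intro x hx
      have hb := mem_box.mp (hsub hx)
      have h0 := hb 0; have h1 := hb 1; have h2 := hb 2; have h3 := hb 3
      obtain ⟨hmem, hsum⟩ := mid_mem (m := m) h0.1 h0.2 h1.1 h1.2 h2.1 h2.2 h3.1 h3.2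
      rw [Finset.mem_coe, Finset.mem_filter, mem_box]
      constructor
      · intro i
        fin_cases i
        exacts [⟨hmem.1, hmem.2.1⟩, ⟨hmem.2.2.1, hmem.2.2.2.1⟩,
          ⟨hmem.2.2.2.2.1, hmem.2.2.2.2.2.1⟩, ⟨hmem.2.2.2.2.2.2.1, hmem.2.2.2.2.2.2.2⟩]
      · exact hsum
    · -- injective on the antichain
      intro x hx y hy h
      have hbx := mem_box.mp (hsub hx)
      have hby := mem_box.mp (hsub hy)
      have hx0 := hbx 0; have hx1 := hbx 1; have hx2 := hbx 2; have hx3 := hbx 3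
      have hy0 := hby 0; have hy1 := hby 1; have hy2 := hby 2; have hy3 := hby 3
      have H : mid m (x 0) (x 1) (x 2) (x 3) = mid m (y 0) (y 1) (y 2) (y 3) := by
        have c0 : (mid m (x 0) (x 1) (x 2) (x 3)).1.1
            = (mid m (y 0) (y 1) (y 2) (y 3)).1.1 := congrFun h 0
        have c1 : (mid m (x 0) (x 1) (x 2) (x 3)).1.2
            = (mid m (y 0) (y 1) (y 2) (y 3)).1.2 := congrFun h 1
        have c2 : (mid m (x 0) (x 1) (x 2) (x 3)).2.1
            = (mid m (y 0) (y 1) (y 2) (y 3)).2.1 := congrFun h 2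
        have c3 : (mid m (x 0) (x 1) (x 2) (x 3)).2.2
            = (mid m (y 0) (y 1) (y 2) (y 3)).2.2 := congrFun h 3
        rw [Prod.ext_iff, Prod.ext_iff, Prod.ext_iff]
        exact ⟨⟨c0, c1⟩, c2, c3⟩
      by_contra hne
      rcases le_total (x 0 + x 1 + x 2 + x 3) (y 0 + y 1 + y 2 + y 3) with hc | hc
      · obtain ⟨l0, l1, l2, l3⟩ := mid_comp hx0.1 hx0.2 hx1.1 hx1.2 hx2.1 hx2.2 hx3.1 hx3.2
          hy0.1 hy0.2 hy1.1 hy1.2 hy2.1 hy2.2 hy3.1 hy3.2 H hc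
        have hxy : x ≤ y := by
          intro i
          fin_cases i
          exacts [l0, l1, l2, l3]
        exact hanti (Finset.mem_coe.mpr hx) (Finset.mem_coe.mpr hy) hne hxy
      · obtain ⟨l0, l1, l2, l3⟩ := mid_comp hy0.1 hy0.2 hy1.1 hy1.2 hy2.1 hy2.2 hy3.1 hy3.2
          hx0.1 hx0.2 hx1.1 hx1.2 hx2.1 hx2.2 hx3.1 hx3.2 H.symm hc
        have hyx : y ≤ x := by
          intro i
          fin_cases i
          exacts [l0, l1, l2, l3]
        exact hanti (Finset.mem_coe.mpr hy) (Finset.mem_coe.mpr hx) (Ne.symm hne) hyx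
end

section
/- The sequence (N_k) where N_k is the number of x ∈ ∏_{i=1}^n [m_i] with ∑ x_i = k is symmetric: N_k = N_{n + ∑_i m_i - k} for all k; and it is unimodal, attaining its maximum at k = floor((n + ∑_i m_i)/2). -/
open Finset

private def boxCount (n : ℕ) (m : Fin n → ℕ) (k : ℤ) : ℕ :=
  ((Finset.Icc (1 : Fin n → ℕ) m).filter (fun x => (∑ i, (x i : ℤ)) = k)).card

/-- symmetric about `t/2` and increasing up to `t/2`. -/
private def Good (f : ℤ → ℕ) (t : ℤ) : Prop :=
  (∀ k, f k = f (t - k)) ∧ (∀ k l : ℤ, k ≤ l → 2 * l ≤ t → f k ≤ f l)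

private lemma good_conv {f : ℤ → ℕ} {t : ℤ} (hf : Good f t) (m : ℕ) :
    Good (fun k => ∑ j ∈ Finset.range m, f (k - 1 - (j : ℤ))) (t + m + 1) := by
  obtain ⟨hsym, hmono⟩ := hf
  have key : ∀ l : ℤ, 2 * l ≤ t + m - 1 →
      (∑ j ∈ Finset.range m, f (l - 1 - (j : ℤ))) ≤
      ∑ j ∈ Finset.range m, f (l + 1 - 1 - (j : ℤ)) := by
    intro l hl
    have h1 : (∑ j ∈ Finset.range (m + 1), f (l - (j : ℤ)))
        = (∑ j ∈ Finset.range m, f (l - (j : ℤ))) + f (l - m) := by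
      rw [Finset.sum_range_succ]
    have h2 : (∑ j ∈ Finset.range (m + 1), f (l - (j : ℤ)))
        = (∑ j ∈ Finset.range m, f (l - 1 - (j : ℤ))) + f l := by
      rw [Finset.sum_range_succ']
      congr 1
      · exact Finset.sum_congr rfl fun j _ => by push_cast; ring_nf
      · simp
    have h3 : f (l - m) ≤ f l := by
      rcases le_or_gt (2 * l) t with h | h
      · exact hmono _ _ (by omega) h
      · rw [hsym l]
        exact hmono _ _ (by omega) (by omega)
    have h4 : (∑ j ∈ Finset.range m, f (l + 1 - 1 - (j : ℤ)))
        = ∑ j ∈ Finset.range m, f (l - (j : ℤ)) := by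
      exact Finset.sum_congr rfl fun j _ => by ring_nf
    omega
  constructor
  · intro k
    simp only
    have : ∀ j ∈ Finset.range m, f (t + m + 1 - k - 1 - ((m - 1 - j : ℕ) : ℤ))
        = f (k - 1 - (j : ℤ)) := by
      intro j hj
      rw [Finset.mem_range] at hj
      have : (((m - 1 - j : ℕ)) : ℤ) = (m : ℤ) - 1 - j := by omega
      rw [this]
      have : t + m + 1 - k - 1 - ((m : ℤ) - 1 - j) = t - (k - 1 - j) := by ring
      rw [this, ← hsym]
    calc ∑ j ∈ Finset.range m, f (k - 1 - (j : ℤ))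
        = ∑ j ∈ Finset.range m, f (t + m + 1 - k - 1 - ((m - 1 - j : ℕ) : ℤ)) :=
          (Finset.sum_congr rfl this).symm
      _ = ∑ j ∈ Finset.range m, f (t + m + 1 - k - 1 - (j : ℤ)) :=
          Finset.sum_range_reflect (fun j => f (t + m + 1 - k - 1 - (j : ℤ))) m
  · intro k l hkl
    simp only
    refine Int.le_induction (motive := fun l _ => 2 * l ≤ t + (m : ℤ) + 1 →
      (∑ j ∈ Finset.range m, f (k - 1 - (j : ℤ))) ≤
        ∑ j ∈ Finset.range m, f (l - 1 - (j : ℤ))) ?_ ?_ l hkl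
    · intro _; exact le_refl _
    · intro l hkl ih hl
      exact (ih (by omega)).trans (key l (by omega))

private lemma boxCount_succ (n : ℕ) (m : Fin (n + 1) → ℕ) (k : ℤ) :
    boxCount (n + 1) m k =
      ∑ j ∈ Finset.range (m (Fin.last n)),
        boxCount n (fun i => m i.castSucc) (k - 1 - (j : ℤ)) := by
  unfold boxCount
  rw [Finset.card_eq_sum_card_fiberwise
    (f := fun x : Fin (n+1) → ℕ => x (Fin.last n) - 1)
    (t := Finset.range (m (Fin.last n)))]
  · refine Finset.sum_congr rfl fun j hj => ?_
    rw [Finset.mem_range] at hj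
    refine Finset.card_nbij' (fun x => fun i : Fin n => x i.castSucc)
      (fun y => Fin.snoc y (j + 1)) ?_ ?_ ?_ ?_
    · intro x hx
      simp only [Finset.mem_coe, Finset.mem_filter, Finset.mem_Icc, Pi.le_def] at hx ⊢
      obtain ⟨⟨⟨h1, h2⟩, hs⟩, hlast⟩ := hx
      have hxl : x (Fin.last n) = j + 1 := by have := h1 (Fin.last n); simp at this; omega
      refine ⟨⟨fun i => h1 _, fun i => h2 _⟩, ?_⟩
      rw [Fin.sum_univ_castSucc (f := fun i => (x i : ℤ))] at hs
      rw [hxl] at hs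
      push_cast at hs ⊢
      linarith
    · intro y hy
      simp only [Finset.mem_coe, Finset.mem_filter, Finset.mem_Icc, Pi.le_def] at hy ⊢
      obtain ⟨⟨h1, h2⟩, hs⟩ := hy
      refine ⟨⟨⟨fun i => ?_, fun i => ?_⟩, ?_⟩, ?_⟩
      · induction i using Fin.lastCases with
        | last => simp only [Pi.one_apply, Fin.snoc_last]; omega
        | cast i => simpa only [Pi.one_apply, Fin.snoc_castSucc] using h1 i
      · induction i using Fin.lastCases with
        | last => simp only [Fin.snoc_last]; omega
        | cast i => simpa only [Fin.snoc_castSucc] using h2 i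
      · rw [Fin.sum_univ_castSucc (f := fun i => ((Fin.snoc y (j+1) : Fin (n+1) → ℕ) i : ℤ))]
        simp only [Fin.snoc_castSucc, Fin.snoc_last]
        push_cast
        linarith
      · simp
    · intro x hx
      simp only [Finset.mem_coe, Finset.mem_filter, Finset.mem_Icc, Pi.le_def] at hx
      obtain ⟨⟨⟨h1, h2⟩, hs⟩, hlast⟩ := hx
      have hxl : x (Fin.last n) = j + 1 := by have := h1 (Fin.last n); simp at this; omega
      funext i
      induction i using Fin.lastCases with
      | last => simp [hxl]
      | cast i => simp [Fin.snoc_castSucc]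
    · intro y hy
      funext i
      simp [Fin.snoc_castSucc]
  · intro x hx
    simp only [Finset.mem_coe, Finset.mem_filter, Finset.mem_Icc, Pi.le_def] at hx
    obtain ⟨⟨h1, h2⟩, hs⟩ := hx
    have := h1 (Fin.last n); have := h2 (Fin.last n)
    rw [Finset.mem_coe, Finset.mem_range]
    have h1' := h1 (Fin.last n)
    simp at h1'
    show x (Fin.last n) - 1 < m (Fin.last n)
    omega

private lemma good_boxCount : ∀ (n : ℕ) (m : Fin n → ℕ),
    Good (boxCount n m) ((n : ℤ) + ∑ i, (m i : ℤ)) := by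
  intro n
  induction n with
  | zero =>
    intro m
    have hm1 : m = 1 := Subsingleton.elim _ _
    subst hm1
    have hb : ∀ k : ℤ, boxCount 0 1 k = if k = 0 then 1 else 0 := by
      intro k
      simp only [boxCount, Finset.Icc_self, Finset.filter_singleton,
        Finset.univ_eq_empty, Finset.sum_empty, eq_comm (a := (0 : ℤ))]
      split_ifs <;> simp
    constructor
    · intro k
      rw [hb, hb]
      simp only [Nat.cast_zero, Finset.univ_eq_empty, Finset.sum_empty]
      by_cases h : k = 0 <;> simp [h] <;> omega
    · intro k l hkl hl
      rw [hb, hb]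
      simp only [Nat.cast_zero, Finset.univ_eq_empty, Finset.sum_empty] at hl
      by_cases h : k = 0
      · have : l = 0 := by omega
        simp [h, this]
      · simp [h]
  | succ n ih =>
    intro m
    have h := good_conv (ih (fun i => m i.castSucc)) (m (Fin.last n))
    have e : boxCount (n + 1) m = fun k =>
        ∑ j ∈ Finset.range (m (Fin.last n)),
          boxCount n (fun i => m i.castSucc) (k - 1 - (j : ℤ)) :=
      funext fun k => boxCount_succ n m k
    rw [e]
    have ht : ((n : ℤ) + ∑ i : Fin n, ((m (Fin.castSucc i) : ℕ) : ℤ)) + (m (Fin.last n)) + 1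
        = ((n + 1 : ℕ) : ℤ) + ∑ i, (m i : ℤ) := by
      rw [Fin.sum_univ_castSucc (f := fun i => (m i : ℤ))]
      push_cast
      ring
    rw [← ht]
    exact h

/-- The sequence `N k` counting points of the box `∏_i [m i]` with coordinate sum
`k` is symmetric (`N k = N (n + ∑ m i - k)`) and unimodal with maximum attained
at `k = ⌊(n + ∑ m i)/2⌋`. -/
theorem layer_counts_symmetric_unimodal (n : ℕ) (hn : 0 < n) (m : Fin n → ℕ)
    (hm : ∀ i, 0 < m i) :
    (∀ k : ℤ,
      ((Finset.Icc (1 : Fin n → ℕ) m).filter (fun x => (∑ i, (x i : ℤ)) = k)).card =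
      ((Finset.Icc (1 : Fin n → ℕ) m).filter
        (fun x => (∑ i, (x i : ℤ)) = (n : ℤ) + (∑ i, (m i : ℤ)) - k)).card) ∧
    (∀ k l : ℤ, k ≤ l → l ≤ (((n + ∑ i, m i) / 2 : ℕ) : ℤ) →
      ((Finset.Icc (1 : Fin n → ℕ) m).filter (fun x => (∑ i, (x i : ℤ)) = k)).card ≤
      ((Finset.Icc (1 : Fin n → ℕ) m).filter (fun x => (∑ i, (x i : ℤ)) = l)).card) ∧
    (∀ k l : ℤ, (((n + ∑ i, m i) / 2 : ℕ) : ℤ) ≤ k → k ≤ l →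
      ((Finset.Icc (1 : Fin n → ℕ) m).filter (fun x => (∑ i, (x i : ℤ)) = l)).card ≤
      ((Finset.Icc (1 : Fin n → ℕ) m).filter (fun x => (∑ i, (x i : ℤ)) = k)).card) := by
  obtain ⟨hsym, hmono⟩ := good_boxCount n m
  have hts : ((n : ℤ) + ∑ i, (m i : ℤ)) = ((n + ∑ i, m i : ℕ) : ℤ) := by push_cast; ring
  refine ⟨fun k => hsym k, fun k l hkl hl => ?_, fun k l hk hkl => ?_⟩
  · exact hmono k l hkl (by rw [hts]; omega)
  · -- decreasing side
    set t : ℕ := n + ∑ i, m i with htdef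
    rcases le_or_gt ((t : ℤ)) (2 * k) with h | h
    · calc boxCount n m l = boxCount n m ((n : ℤ) + ∑ i, (m i : ℤ) - l) := hsym l
        _ ≤ boxCount n m ((n : ℤ) + ∑ i, (m i : ℤ) - k) :=
            hmono _ _ (by omega) (by rw [hts]; omega)
        _ = boxCount n m k := (hsym k).symm
    · -- then t = 2k+1
      have h2 : (t : ℤ) = 2 * k + 1 := by omega
      rcases eq_or_lt_of_le hkl with rfl | hlt
      · exact le_refl _
      · calc boxCount n m l = boxCount n m ((n : ℤ) + ∑ i, (m i : ℤ) - l) := hsym l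
          _ ≤ boxCount n m k := hmono _ _ (by rw [hts] at *; omega) (by omega)
end

section
/- For n = 5, the maximum size of an antichain in [m]^5 satisfies S(m,5)/m^4 → 115/192 as m → ∞. -/
open Filter

/-- The maximum size of an antichain in `[m]^n` with the componentwise order. -/
noncomputable def maxAntichainSize (m n : ℕ) : ℕ :=
  sSup {k : ℕ | ∃ A : Finset (Fin n → ℕ),
    A ⊆ Finset.Icc 1 (fun _ => m) ∧
    IsAntichain (· ≤ ·) (A : Set (Fin n → ℕ)) ∧ A.card = k}

open Finset

def mybox (s n : ℕ) : Finset (Fin n → ℕ) := Finset.Icc 0 (fun _ => s)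

lemma mem_mybox {s n : ℕ} {x : Fin n → ℕ} : x ∈ mybox s n ↔ ∀ i, x i ≤ s := by
  simp [mybox, Finset.mem_Icc, Pi.le_def]

lemma sum_snoc {n : ℕ} (p : Fin n → ℕ) (u : ℕ) :
    ∑ i, Fin.snoc p u i = (∑ i, p i) + u := by
  rw [Fin.sum_univ_castSucc]; simp

lemma snoc_mem_mybox {s n : ℕ} {p : Fin n → ℕ} {u : ℕ} (hp : p ∈ mybox s n) (hu : u ≤ s) :
    Fin.snoc p u ∈ mybox s (n+1) := by
  rw [mem_mybox] at hp ⊢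
  intro i
  induction i using Fin.lastCases with
  | last => simpa using hu
  | cast i => simpa using hp i

lemma init_mem_mybox {s n : ℕ} {x : Fin (n+1) → ℕ} (hx : x ∈ mybox s (n+1)) :
    Fin.init x ∈ mybox s n := by
  rw [mem_mybox] at hx ⊢
  intro i; exact hx _

lemma snoc_le_snoc' {n : ℕ} {p q : Fin n → ℕ} {u v : ℕ} (h : p ≤ q) (huv : u ≤ v) :
    (Fin.snoc p u : Fin (n+1) → ℕ) ≤ Fin.snoc q v := by
  intro i
  induction i using Fin.lastCases with
  | last => simpa using huv
  | cast i => simpa using h i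

/-- `θ` encodes a symmetric chain decomposition of the box `[0,s]^n`:
`θ x d` is the element at depth `d` of the chain through `x`. -/
def IsSCD (s n : ℕ) (θ : (Fin n → ℕ) → ℕ → (Fin n → ℕ)) : Prop :=
  ∀ x ∈ mybox s n,
    2 * (∑ i, θ x 0 i) ≤ n * s ∧
    (∀ d, d + 2 * (∑ i, θ x 0 i) ≤ n * s →
       θ x d ∈ mybox s n ∧ (∑ i, θ x d i) = (∑ i, θ x 0 i) + d ∧ θ (θ x d) = θ x) ∧
    (∀ d e, d ≤ e → e + 2 * (∑ i, θ x 0 i) ≤ n * s → θ x d ≤ θ x e) ∧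
    (∑ i, θ x 0 i) ≤ (∑ i, x i) ∧ (∑ i, x i) + (∑ i, θ x 0 i) ≤ n * s ∧
    θ x ((∑ i, x i) - (∑ i, θ x 0 i)) = x


/-- depth of the new chain in the peeling construction -/
def scdT (s n : ℕ) (θ : (Fin n → ℕ) → ℕ → (Fin n → ℕ)) (x : Fin (n+1) → ℕ) : ℕ :=
  min ((∑ i, Fin.init x i) - (∑ i, θ (Fin.init x) 0 i)) (s - x (Fin.last n))

/-- one step of the symmetric chain decomposition construction -/
def scdStep (s n : ℕ) (θ : (Fin n → ℕ) → ℕ → (Fin n → ℕ)) (x : Fin (n+1) → ℕ) (d : ℕ) :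
    Fin (n+1) → ℕ :=
  if d ≤ s - scdT s n θ x then Fin.snoc (θ (Fin.init x) (scdT s n θ x)) d
  else Fin.snoc (θ (Fin.init x) (scdT s n θ x + (d - (s - scdT s n θ x)))) (s - scdT s n θ x)

lemma scdStep_isSCD (s n : ℕ) (θ : (Fin n → ℕ) → ℕ → (Fin n → ℕ)) (hθ : IsSCD s n θ) :
    IsSCD s (n+1) (scdStep s n θ) := by
  intro x hx
  set x' := Fin.init x with hx'def
  set j := x (Fin.last n) with hjdef
  have hx' : x' ∈ mybox s n := init_mem_mybox hx
  have hj : j ≤ s := mem_mybox.1 hx _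
  obtain ⟨hr2, hvalid, hmono, hrle, hub, hself⟩ := hθ x' hx'
  set r' := ∑ i, θ x' 0 i with hr'def
  set S' := ∑ i, x' i with hS'def
  set t := scdT s n θ x with htdef
  have htmin : t = min (S' - r') (s - j) := rfl
  have ht1 : t ≤ S' - r' := by rw [htmin]; exact min_le_left _ _
  have ht2 : t ≤ s - j := by rw [htmin]; exact min_le_right _ _
  have htor : t = S' - r' ∨ t = s - j := by rw [htmin]; exact min_choice _ _
  have hts : t ≤ s := le_trans ht2 (Nat.sub_le _ _)
  have htv : t + 2 * r' ≤ n * s := by omega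
  have hsumx : ∑ i, x i = S' + j := by
    rw [hS'def, hjdef, hx'def, Fin.sum_univ_castSucc]
    simp [Fin.init]
  obtain ⟨htmem, htsum, htcoh⟩ := hvalid t htv
  have hns1 : (n+1) * s = n * s + s := by ring
  have hstep : ∀ y d, scdStep s n θ y d =
      if d ≤ s - scdT s n θ y then Fin.snoc (θ (Fin.init y) (scdT s n θ y)) d
      else Fin.snoc (θ (Fin.init y) (scdT s n θ y + (d - (s - scdT s n θ y))))
        (s - scdT s n θ y) := fun _ _ => rfl
  have hzero : scdStep s n θ x 0 = Fin.snoc (θ x' t) 0 := by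
    rw [hstep, if_pos (Nat.zero_le _), ← hx'def, ← htdef]
  have hr0 : ∑ i, scdStep s n θ x 0 i = r' + t := by
    rw [hzero, sum_snoc, htsum]; omega
  rw [hr0]
  -- validity of depth-d elements, their sums, and coherence
  have hkey : ∀ d, d + 2 * (r' + t) ≤ (n+1) * s →
      scdStep s n θ x d ∈ mybox s (n+1) ∧ (∑ i, scdStep s n θ x d i) = (r' + t) + d ∧
      scdStep s n θ (scdStep s n θ x d) = scdStep s n θ x := by
    intro d hd
    by_cases hc : d ≤ s - t
    · have hxd : scdStep s n θ x d = Fin.snoc (θ x' t) d := by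
        rw [hstep, ← hx'def, ← htdef, if_pos hc]
      have hmem : scdStep s n θ x d ∈ mybox s (n+1) := by
        rw [hxd]; exact snoc_mem_mybox htmem (by omega)
      have hsum : (∑ i, scdStep s n θ x d i) = (r' + t) + d := by
        rw [hxd, sum_snoc, htsum]
      refine ⟨hmem, hsum, ?_⟩
      -- coherence
      have hinit : Fin.init (scdStep s n θ x d) = θ x' t := by rw [hxd, Fin.init_snoc]
      have hlast : (scdStep s n θ x d) (Fin.last n) = d := by rw [hxd, Fin.snoc_last]
      have hTy : scdT s n θ (scdStep s n θ x d) = t := by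
        rw [scdT, hinit, hlast, htcoh, htsum, ← hr'def]
        have : r' + t - r' = t := by omega
        rw [this]
        have : t ≤ s - d := by omega
        omega
      funext e
      rw [hstep (scdStep s n θ x d) e, hinit, hTy, htcoh, hstep x e, ← hx'def, ← htdef]
    · push_neg at hc
      set a' := t + (d - (s - t)) with ha'def
      have ha'v : a' + 2 * r' ≤ n * s := by omega
      obtain ⟨hm2, hs2, hc2⟩ := hvalid a' ha'v
      have hxd : scdStep s n θ x d = Fin.snoc (θ x' a') (s - t) := by
        rw [hstep, ← hx'def, ← htdef, if_neg (by omega), ← ha'def]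
      have hmem : scdStep s n θ x d ∈ mybox s (n+1) := by
        rw [hxd]; exact snoc_mem_mybox hm2 (by omega)
      have hsum : (∑ i, scdStep s n θ x d i) = (r' + t) + d := by
        rw [hxd, sum_snoc, hs2]; omega
      refine ⟨hmem, hsum, ?_⟩
      have hinit : Fin.init (scdStep s n θ x d) = θ x' a' := by rw [hxd, Fin.init_snoc]
      have hlast : (scdStep s n θ x d) (Fin.last n) = s - t := by rw [hxd, Fin.snoc_last]
      have hTy : scdT s n θ (scdStep s n θ x d) = t := by
        rw [scdT, hinit, hlast, hc2, hs2, ← hr'def]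
        have h1 : r' + a' - r' = a' := by omega
        have h2 : s - (s - t) = t := by omega
        rw [h1, h2]
        omega
      funext e
      rw [hstep (scdStep s n θ x d) e, hinit, hTy, hc2, hstep x e, ← hx'def, ← htdef]
  refine ⟨by omega, hkey, ?_, ?_, ?_, ?_⟩
  · -- monotone
    intro d e hde hev
    by_cases hcd : d ≤ s - t
    · by_cases hce : e ≤ s - t
      · rw [hstep, hstep, ← hx'def, ← htdef, if_pos hcd, if_pos hce]
        exact snoc_le_snoc' (le_refl _) hde
      · rw [hstep, hstep, ← hx'def, ← htdef, if_pos hcd, if_neg hce]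
        push_neg at hce
        refine snoc_le_snoc' (hmono t (t + (e - (s - t))) (by omega) (by omega)) (by omega)
    · have hce : ¬ e ≤ s - t := by omega
      rw [hstep, hstep, ← hx'def, ← htdef, if_neg hcd, if_neg hce]
      push_neg at hcd hce
      refine snoc_le_snoc' (hmono _ _ (by omega) (by omega)) (le_refl _)
  · rw [hsumx]; omega
  · rw [hsumx]; omega
  · -- self-membership
    rw [hsumx]
    by_cases hcase : (S' + j) - (r' + t) ≤ s - t
    · have h1 : t = S' - r' := by omega
      have h2 : (S' + j) - (r' + t) = j := by omega
      rw [hstep, ← hx'def, ← htdef, if_pos hcase, h2, h1, hself, hjdef, hx'def]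
      exact Fin.snoc_init_self x
    · have h1 : t = s - j := by
        rcases htor with h | h
        · exfalso; apply hcase; omega
        · exact h
      have h2 : t + ((S' + j) - (r' + t) - (s - t)) = S' - r' := by omega
      have h3 : s - t = j := by omega
      rw [hstep, ← hx'def, ← htdef, if_neg hcase, h2, h3, hself, hjdef, hx'def]
      exact Fin.snoc_init_self x

lemma exists_scd (s : ℕ) : ∀ n, ∃ θ, IsSCD s n θ := by
  intro n
  induction n with
  | zero =>
    refine ⟨fun x _ => x, ?_⟩
    intro x hx
    have hx0 : ∀ y : Fin 0 → ℕ, ∑ i, y i = 0 := fun y => by simp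
    refine ⟨by simp [hx0], fun d hd => ⟨hx, by simp [hx0] at hd ⊢; omega, rfl⟩,
      fun d e _ _ => le_refl _, by simp [hx0], by simp [hx0], by simp [hx0]⟩
  | succ n ih =>
    obtain ⟨θ, hθ⟩ := ih
    exact ⟨scdStep s n θ, scdStep_isSCD s n θ hθ⟩


/-- middle layer of the box -/
def mymid (s n : ℕ) : Finset (Fin n → ℕ) :=
  (mybox s n).filter (fun x => ∑ i, x i = (n * s) / 2)

lemma mymid_isAntichain (s n : ℕ) :
    IsAntichain (· ≤ ·) ((mymid s n : Finset (Fin n → ℕ)) : Set (Fin n → ℕ)) := by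
  intro x hx y hy hne hle
  simp only [Finset.coe_filter, mymid, Set.mem_setOf_eq, Finset.mem_coe] at hx hy
  apply hne
  by_contra hne'
  have hex : ∃ i, x i ≠ y i := by
    by_contra hall
    push_neg at hall
    exact hne' (funext hall)
  obtain ⟨i, hi⟩ := hex
  have hlt : x i < y i := lt_of_le_of_ne (hle i) hi
  have : ∑ i, x i < ∑ i, y i :=
    Finset.sum_lt_sum (fun i _ => hle i) ⟨i, Finset.mem_univ i, hlt⟩
  omega

lemma antichain_card_le (s n : ℕ) (A : Finset (Fin n → ℕ)) (hA : A ⊆ mybox s n)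
    (hanti : IsAntichain (· ≤ ·) ((A : Finset (Fin n → ℕ)) : Set (Fin n → ℕ))) :
    A.card ≤ (mymid s n).card := by
  obtain ⟨θ, hθ⟩ := exists_scd s n
  have hq : 2 * ((n * s) / 2) ≤ n * s ∧ n * s ≤ 2 * ((n * s) / 2) + 1 := by
    omega
  set q := (n * s) / 2 with hqdef
  set φ : (Fin n → ℕ) → (Fin n → ℕ) := fun x => θ x (q - ∑ i, θ x 0 i) with hφdef
  have hmid : ∀ x ∈ mybox s n, φ x ∈ mymid s n := by
    intro x hx
    obtain ⟨hr2, hvalid, hmono, hrle, hub, hself⟩ := hθ x hx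
    obtain ⟨hm, hs, hc⟩ := hvalid (q - ∑ i, θ x 0 i) (by omega)
    rw [mymid, Finset.mem_filter]
    refine ⟨hm, ?_⟩
    rw [hφdef]
    simp only []
    omega
  have hcomp : ∀ x ∈ mybox s n, ∀ y ∈ mybox s n, φ x = φ y → x ≤ y ∨ y ≤ x := by
    intro x hx y hy hxy
    obtain ⟨hr2x, hvalidx, hmonox, hrlex, hubx, hselfx⟩ := hθ x hx
    obtain ⟨hr2y, hvalidy, hmonoy, hrley, huby, hselfy⟩ := hθ y hy
    obtain ⟨hmx, hsx, hcx⟩ := hvalidx (q - ∑ i, θ x 0 i) (by omega)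
    obtain ⟨hmy, hsy, hcy⟩ := hvalidy (q - ∑ i, θ y 0 i) (by omega)
    have hθeq : θ x = θ y := by
      rw [← hcx, ← hcy]
      exact congrArg θ hxy
    have hreq : (∑ i, θ x 0 i) = (∑ i, θ y 0 i) := by rw [hθeq]
    rcases le_total (∑ i, x i) (∑ i, y i) with hst | hst
    · left
      calc x = θ x ((∑ i, x i) - (∑ i, θ x 0 i)) := hselfx.symm
        _ ≤ θ x ((∑ i, y i) - (∑ i, θ x 0 i)) := by
            apply hmonox _ _ (by omega) (by omega)
        _ = y := by rw [hθeq, ← hreq]; rw [← hreq] at hselfy; exact hselfy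
    · right
      calc y = θ y ((∑ i, y i) - (∑ i, θ y 0 i)) := hselfy.symm
        _ ≤ θ y ((∑ i, x i) - (∑ i, θ y 0 i)) := by
            apply hmonoy _ _ (by omega) (by omega)
        _ = x := by rw [← hθeq, hreq]; rw [hreq] at hselfx; exact hselfx
  apply Finset.card_le_card_of_injOn φ (fun a ha => hmid a (hA ha))
  intro a ha b hb hab
  by_contra hne
  rcases hcomp a (hA ha) b (hA hb) hab with h | h
  · exact hanti ha hb hne h
  · exact hanti hb ha (Ne.symm hne) h

lemma maxAntichainSize_eq (m n : ℕ) (hm : 1 ≤ m) :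
    maxAntichainSize m n = (mymid (m-1) n).card := by
  classical
  set s := m - 1 with hsdef
  have hms : m = s + 1 := by omega
  -- membership in the upper box
  have hmem_box : ∀ x : Fin n → ℕ, x ∈ (Finset.Icc 1 (fun _ => m) : Finset (Fin n → ℕ)) ↔
      ∀ i, 1 ≤ x i ∧ x i ≤ m := by
    intro x
    rw [Finset.mem_Icc]
    constructor
    · intro ⟨h1, h2⟩ i; exact ⟨h1 i, h2 i⟩
    · intro h; exact ⟨fun i => (h i).1, fun i => (h i).2⟩
  -- every antichain has card at most the middle layer size
  have hub : ∀ k ∈ {k : ℕ | ∃ A : Finset (Fin n → ℕ),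
      A ⊆ Finset.Icc 1 (fun _ => m) ∧
      IsAntichain (· ≤ ·) (A : Set (Fin n → ℕ)) ∧ A.card = k}, k ≤ (mymid s n).card := by
    rintro k ⟨A, hsub, hanti, rfl⟩
    set down : (Fin n → ℕ) → (Fin n → ℕ) := fun x i => x i - 1 with hdown
    have hdowninj : Set.InjOn down A := by
      intro a ha b hb hab
      funext i
      have ha1 := ((hmem_box a).1 (hsub ha)) i
      have hb1 := ((hmem_box b).1 (hsub hb)) i
      have := congrFun hab i
      simp only [hdown] at this
      omega
    have hA' : A.image down ⊆ mybox s n := by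
      intro y hy
      obtain ⟨a, ha, rfl⟩ := Finset.mem_image.1 hy
      rw [mem_mybox]
      intro i
      have := ((hmem_box a).1 (hsub ha)) i
      simp only [hdown]
      omega
    have hanti' : IsAntichain (· ≤ ·) ((A.image down : Finset (Fin n → ℕ)) : Set (Fin n → ℕ)) := by
      intro a' ha' b' hb' hne hle
      simp only [Finset.coe_image, Set.mem_image, Finset.mem_coe] at ha' hb'
      obtain ⟨a, ha, rfl⟩ := ha'
      obtain ⟨b, hb, rfl⟩ := hb'
      have hne2 : a ≠ b := fun h => hne (by rw [h])
      apply hanti ha hb hne2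
      rw [Pi.le_def] at hle ⊢
      intro i
      have ha1 := ((hmem_box a).1 (hsub ha)) i
      have hb1 := ((hmem_box b).1 (hsub hb)) i
      have := hle i
      simp only [hdown] at this
      omega
    have := antichain_card_le s n (A.image down) hA' hanti'
    rwa [Finset.card_image_of_injOn hdowninj] at this
  -- the shifted middle layer is an antichain in the box
  have hmemmid : (mymid s n).card ∈ {k : ℕ | ∃ A : Finset (Fin n → ℕ),
      A ⊆ Finset.Icc 1 (fun _ => m) ∧
      IsAntichain (· ≤ ·) (A : Set (Fin n → ℕ)) ∧ A.card = k} := by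
    set up : (Fin n → ℕ) → (Fin n → ℕ) := fun x i => x i + 1 with hup
    have hupinj : Function.Injective up := by
      intro a b hab
      funext i
      have := congrFun hab i
      simp only [hup] at this
      omega
    refine ⟨(mymid s n).image up, ?_, ?_, Finset.card_image_of_injective _ hupinj⟩
    · intro y hy
      obtain ⟨a, ha, rfl⟩ := Finset.mem_image.1 hy
      rw [hmem_box]
      intro i
      have := mem_mybox.1 (Finset.mem_of_mem_filter a ha) i
      simp only [hup]
      omega
    · intro a' ha' b' hb' hne hle
      simp only [Finset.coe_image, Set.mem_image, Finset.mem_coe] at ha' hb'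
      obtain ⟨a, ha, rfl⟩ := ha'
      obtain ⟨b, hb, rfl⟩ := hb'
      have hne2 : a ≠ b := fun h => hne (by rw [h])
      apply mymid_isAntichain s n (Finset.mem_coe.2 ha) (Finset.mem_coe.2 hb) hne2
      rw [Pi.le_def] at hle ⊢
      intro i
      have := hle i
      simp only [hup] at this
      omega
  apply le_antisymm
  · exact csSup_le ⟨(mymid s n).card, hmemmid⟩ hub
  · exact le_csSup ⟨(mymid s n).card, hub⟩ hmemmid

/-! ### Counting: stars and bars -/

def Dset (q n : ℕ) : Finset (Fin n → ℕ) := (mybox q n).filter (fun x => ∑ i, x i = q)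

lemma mem_Dset {q n : ℕ} {x : Fin n → ℕ} : x ∈ Dset q n ↔ ∑ i, x i = q := by
  rw [Dset, Finset.mem_filter, mem_mybox]
  constructor
  · exact fun h => h.2
  · intro h
    refine ⟨fun i => ?_, h⟩
    rw [← h]
    exact Finset.single_le_sum (fun i _ => Nat.zero_le _) (Finset.mem_univ i)

lemma sum_range_add_choose (n : ℕ) : ∀ k, ∑ l ∈ Finset.range (k+1), (l + n).choose n
    = (k + n + 1).choose (n+1) := by
  intro k
  induction k with
  | zero => simp
  | succ k ih =>
    rw [Finset.sum_range_succ, ih]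
    have h1 : k + 1 + n + 1 = (k + n + 1) + 1 := by ring
    have h2 : k + 1 + n = k + n + 1 := by ring
    rw [h1, h2, Nat.choose_succ_succ (k + n + 1) n]
    simp only [Nat.succ_eq_add_one]
    omega

lemma card_Dset : ∀ n k, (Dset k (n+1)).card = (k + n).choose n := by
  intro n
  induction n with
  | zero =>
    intro k
    have : Dset k 1 = {fun _ => k} := by
      ext x
      rw [mem_Dset, Finset.mem_singleton]
      constructor
      · intro h
        funext i
        rw [← h, Fin.sum_univ_one]
        congr
        exact Subsingleton.elim _ _
      · intro h; rw [h, Fin.sum_univ_one]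
    rw [this]
    simp
  | succ n ih =>
    intro k
    have hfib : (Dset k (n+2)).card =
        ∑ j ∈ Finset.range (k+1), ((Dset k (n+2)).filter (fun x => x (Fin.last (n+1)) = j)).card := by
      apply Finset.card_eq_sum_card_fiberwise
      intro x hx
      simp only [Finset.mem_coe, Finset.mem_range]
      have := mem_Dset.1 hx
      have : x (Fin.last (n+1)) ≤ k := by
        rw [← this]
        exact Finset.single_le_sum (fun i _ => Nat.zero_le _) (Finset.mem_univ _)
      omega
    have hfibcard : ∀ j ∈ Finset.range (k+1),
        ((Dset k (n+2)).filter (fun x => x (Fin.last (n+1)) = j)).card = (Dset (k - j) (n+1)).card := by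
      intro j hj
      rw [Finset.mem_range] at hj
      clear hfib
      apply Finset.card_bij' (fun x _ => Fin.init x) (fun y _ => Fin.snoc y j)
      case hi =>
        intro x hx
        simp only [Finset.mem_filter, mem_Dset] at hx
        obtain ⟨hsum, hlast⟩ := hx
        rw [Fin.sum_univ_castSucc] at hsum
        have heq : ∑ i : Fin (n+1), Fin.init x i = ∑ i : Fin (n+1), x i.castSucc :=
          Finset.sum_congr rfl (fun i _ => rfl)
        have : ∑ i : Fin (n+1), Fin.init x i = k - j := by
          rw [heq]
          omega
        exact mem_Dset.2 this
      case hj =>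
        intro y hy
        rw [mem_Dset] at hy
        rw [Finset.mem_filter]
        constructor
        · rw [mem_Dset, sum_snoc, hy]
          omega
        · simp
      case left_inv =>
        intro x hx
        simp only [Finset.mem_filter] at hx
        rw [← hx.2]
        exact Fin.snoc_init_self x
      case right_inv =>
        intro y hy
        simp
    rw [hfib, Finset.sum_congr rfl hfibcard]
    have : ∀ j ∈ Finset.range (k+1), (Dset (k - j) (n+1)).card = ((k - j) + n).choose n :=
      fun j _ => ih (k - j)
    rw [Finset.sum_congr rfl this, ← Finset.sum_range_reflect]
    have : ∀ j ∈ Finset.range (k+1), ((k - (k + 1 - 1 - j)) + n).choose n = (j + n).choose n := by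
      intro j hj
      rw [Finset.mem_range] at hj
      clear hfib
      congr 2
      omega
    rw [Finset.sum_congr rfl this, sum_range_add_choose]
    congr 1

/-! ### Inclusion-exclusion -/

lemma card_shifted (q s n : ℕ) (T : Finset (Fin n)) (h : T.card * (s+1) ≤ q) :
    ((Dset q n).filter (fun x => ∀ i ∈ T, s+1 ≤ x i)).card = (Dset (q - T.card * (s+1)) n).card := by
  classical
  have hsumc : ∀ (T : Finset (Fin n)), (∑ i, if i ∈ T then s+1 else 0) = T.card * (s+1) := by
    intro T
    rw [Finset.sum_ite_mem, Finset.univ_inter, Finset.sum_const, smul_eq_mul]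
  apply Finset.card_bij' (fun x _ => fun i => x i - (if i ∈ T then s+1 else 0))
    (fun y _ => fun i => y i + (if i ∈ T then s+1 else 0))
  case hi =>
    intro x hx
    simp only [Finset.mem_filter, mem_Dset] at hx
    obtain ⟨hsum, hT⟩ := hx
    rw [mem_Dset]
    rw [Finset.sum_tsub_distrib]
    · rw [hsum, hsumc]
    · intro i _
      by_cases hiT : i ∈ T
      · simp only [if_pos hiT]
        exact hT i hiT
      · simp only [if_neg hiT]
        exact Nat.zero_le _
  case hj =>
    intro y hy
    rw [mem_Dset] at hy
    simp only [Finset.mem_filter, mem_Dset]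
    constructor
    · rw [Finset.sum_add_distrib, hy, hsumc]
      omega
    · intro i hiT
      simp only [if_pos hiT]
      omega
  case left_inv =>
    intro x hx
    simp only [Finset.mem_filter, mem_Dset] at hx
    funext i
    by_cases hiT : i ∈ T
    · simp only [if_pos hiT]
      have := hx.2 i hiT
      omega
    · simp only [if_neg hiT]
      omega
  case right_inv =>
    intro y hy
    funext i
    simp only []
    omega

lemma card_shifted_empty (q s n : ℕ) (T : Finset (Fin n)) (h : q < T.card * (s+1)) :
    ((Dset q n).filter (fun x => ∀ i ∈ T, s+1 ≤ x i)).card = 0 := by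
  rw [Finset.card_eq_zero]
  apply Finset.eq_empty_of_forall_notMem
  intro x hx
  simp only [Finset.mem_filter, mem_Dset] at hx
  obtain ⟨hsum, hT⟩ := hx
  have h1 : T.card * (s+1) = ∑ i ∈ T, (s+1) := by
    rw [Finset.sum_const, smul_eq_mul]
  have h2 : ∑ i ∈ T, (s+1) ≤ ∑ i ∈ T, x i := Finset.sum_le_sum hT
  have h3 : ∑ i ∈ T, x i ≤ ∑ i, x i :=
    Finset.sum_le_sum_of_subset (Finset.subset_univ T)
  omega

lemma inclusion_exclusion (s q n : ℕ) :
    ((((Dset q n).filter (fun x => ∀ i, x i ≤ s)).card : ℤ)) =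
      ∑ j ∈ Finset.range (n+1), (-1:ℤ)^j * (n.choose j) *
        (if j * (s+1) ≤ q then ((Dset (q - j*(s+1)) n).card : ℤ) else 0) := by
  classical
  -- Step 1: write the count as a sum of indicators over the full solution set
  have step1 : (((Dset q n).filter (fun x => ∀ i, x i ≤ s)).card : ℤ) =
      ∑ x ∈ Dset q n, (if (Finset.univ.filter (fun i => s+1 ≤ x i)) = ∅ then (1:ℤ) else 0) := by
    rw [Finset.card_filter]
    push_cast
    apply Finset.sum_congr rfl
    intro x _
    congr 1
    simp only [eq_iff_iff]
    rw [Finset.filter_eq_empty_iff]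
    constructor
    · intro h i _
      have := h i
      omega
    · intro h i
      have := h (Finset.mem_univ i)
      omega
  rw [step1]
  -- Step 2: the indicator as an alternating sum over subsets of the bad set
  have step2 : ∀ x : Fin n → ℕ,
      (if (Finset.univ.filter (fun i => s+1 ≤ x i)) = ∅ then (1:ℤ) else 0) =
      ∑ T ∈ (Finset.univ.filter (fun i => s+1 ≤ x i)).powerset, (-1:ℤ)^T.card := by
    intro x
    rw [Finset.sum_powerset_neg_one_pow_card]
  rw [Finset.sum_congr rfl (fun x _ => step2 x)]
  -- Step 3: extend the inner sum over all subsets of univ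
  have step3 : ∀ x : Fin n → ℕ,
      (∑ T ∈ (Finset.univ.filter (fun i => s+1 ≤ x i)).powerset, (-1:ℤ)^T.card) =
      ∑ T ∈ (Finset.univ : Finset (Fin n)).powerset,
        (if T ⊆ Finset.univ.filter (fun i => s+1 ≤ x i) then (-1:ℤ)^T.card else 0) := by
    intro x
    rw [← Finset.sum_filter]
    congr 1
    ext T
    simp only [Finset.mem_filter, Finset.mem_powerset]
    constructor
    · intro h; exact ⟨Finset.subset_univ T, h⟩
    · intro h; exact h.2
  rw [Finset.sum_congr rfl (fun x _ => step3 x)]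
  rw [Finset.sum_comm]
  -- Step 4: inner sums computed via the shifted counts
  have step4 : ∀ T ∈ (Finset.univ : Finset (Fin n)).powerset,
      (∑ x ∈ Dset q n,
        (if T ⊆ Finset.univ.filter (fun i => s+1 ≤ x i) then (-1:ℤ)^T.card else 0)) =
      (-1:ℤ)^T.card *
        (if T.card * (s+1) ≤ q then ((Dset (q - T.card*(s+1)) n).card : ℤ) else 0) := by
    intro T _
    have hsubiff : ∀ x : Fin n → ℕ,
        (T ⊆ Finset.univ.filter (fun i => s+1 ≤ x i)) ↔ (∀ i ∈ T, s+1 ≤ x i) := by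
      intro x
      constructor
      · intro h i hi
        have := h hi
        rw [Finset.mem_filter] at this
        exact this.2
      · intro h i hi
        rw [Finset.mem_filter]
        exact ⟨Finset.mem_univ i, h i hi⟩
    calc ∑ x ∈ Dset q n,
          (if T ⊆ Finset.univ.filter (fun i => s+1 ≤ x i) then (-1:ℤ)^T.card else 0)
        = ∑ x ∈ (Dset q n).filter (fun x => ∀ i ∈ T, s+1 ≤ x i), (-1:ℤ)^T.card := by
          rw [Finset.sum_filter]
          apply Finset.sum_congr rfl
          intro x _
          congr 1
          simp only [eq_iff_iff]
          exact hsubiff x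
      _ = ((((Dset q n).filter (fun x => ∀ i ∈ T, s+1 ≤ x i)).card : ℤ)) * (-1:ℤ)^T.card := by
          rw [Finset.sum_const, nsmul_eq_mul]
      _ = (-1:ℤ)^T.card *
            (if T.card * (s+1) ≤ q then ((Dset (q - T.card*(s+1)) n).card : ℤ) else 0) := by
          rw [mul_comm]
          congr 1
          by_cases h : T.card * (s+1) ≤ q
          · rw [if_pos h, card_shifted q s n T h]
          · rw [if_neg h, card_shifted_empty q s n T (not_le.mp h)]
            simp
  rw [Finset.sum_congr rfl step4]
  -- Step 5: group by cardinality
  rw [Finset.powerset_card_biUnion, Finset.sum_biUnion ((Finset.pairwise_disjoint_powersetCard _).set_pairwise _)]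
  rw [Finset.card_fin n]
  apply Finset.sum_congr rfl
  intro j hj
  have hconst : ∀ T ∈ Finset.powersetCard j (Finset.univ : Finset (Fin n)),
      (-1:ℤ)^T.card *
        (if T.card * (s+1) ≤ q then ((Dset (q - T.card*(s+1)) n).card : ℤ) else 0) =
      (-1:ℤ)^j * (if j * (s+1) ≤ q then ((Dset (q - j*(s+1)) n).card : ℤ) else 0) := by
    intro T hT
    have := (Finset.mem_powersetCard.1 hT).2
    rw [this]
  rw [Finset.sum_congr rfl hconst, Finset.sum_const, Finset.card_powersetCard,
    Finset.card_fin n, nsmul_eq_mul]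
  ring

/-! ### Explicit formulas for the middle layer of `[0,s]^5` -/

lemma midcard_odd (u : ℕ) (hu : 2 ≤ u) :
    (((mymid (2*u) 5).card : ℤ)) =
      ((5*u+4).choose 4 : ℤ) - 5 * ((3*u+3).choose 4 : ℤ) + 10 * ((u+2).choose 4 : ℤ) := by
  have hmid : mymid (2*u) 5 = (Dset (5*u) 5).filter (fun x => ∀ i, x i ≤ 2*u) := by
    ext x
    simp only [mymid, Finset.mem_filter, mem_mybox, mem_Dset]
    have hq : (5 * (2*u))/2 = 5*u := by omega
    rw [hq]
    tauto
  rw [hmid, inclusion_exclusion (2*u) (5*u) 5]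
  rw [Finset.sum_range_succ, Finset.sum_range_succ, Finset.sum_range_succ,
      Finset.sum_range_succ, Finset.sum_range_succ, Finset.sum_range_succ,
      Finset.sum_range_zero]
  rw [if_pos (by omega : 0*(2*u+1) ≤ 5*u), if_pos (by omega : 1*(2*u+1) ≤ 5*u),
      if_pos (by omega : 2*(2*u+1) ≤ 5*u), if_neg (by omega : ¬ 3*(2*u+1) ≤ 5*u),
      if_neg (by omega : ¬ 4*(2*u+1) ≤ 5*u), if_neg (by omega : ¬ 5*(2*u+1) ≤ 5*u)]
  have e0 : 5*u - 0*(2*u+1) = 5*u := by omega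
  have e1 : 5*u - 1*(2*u+1) = 3*u-1 := by omega
  have e2 : 5*u - 2*(2*u+1) = u-2 := by omega
  rw [e0, e1, e2, card_Dset 4 (5*u), card_Dset 4 (3*u-1), card_Dset 4 (u-2)]
  have f1 : 3*u-1+4 = 3*u+3 := by omega
  have f2 : u-2+4 = u+2 := by omega
  rw [f1, f2]
  norm_num [Nat.choose]
  ring

lemma midcard_even (u : ℕ) (hu : 2 ≤ u) :
    (((mymid (2*u+1) 5).card : ℤ)) =
      ((5*u+6).choose 4 : ℤ) - 5 * ((3*u+4).choose 4 : ℤ) + 10 * ((u+2).choose 4 : ℤ) := by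
  have hmid : mymid (2*u+1) 5 = (Dset (5*u+2) 5).filter (fun x => ∀ i, x i ≤ 2*u+1) := by
    ext x
    simp only [mymid, Finset.mem_filter, mem_mybox, mem_Dset]
    have hq : (5 * (2*u+1))/2 = 5*u+2 := by omega
    rw [hq]
    tauto
  rw [hmid, inclusion_exclusion (2*u+1) (5*u+2) 5]
  rw [Finset.sum_range_succ, Finset.sum_range_succ, Finset.sum_range_succ,
      Finset.sum_range_succ, Finset.sum_range_succ, Finset.sum_range_succ,
      Finset.sum_range_zero]
  rw [if_pos (by omega : 0*(2*u+1+1) ≤ 5*u+2), if_pos (by omega : 1*(2*u+1+1) ≤ 5*u+2),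
      if_pos (by omega : 2*(2*u+1+1) ≤ 5*u+2), if_neg (by omega : ¬ 3*(2*u+1+1) ≤ 5*u+2),
      if_neg (by omega : ¬ 4*(2*u+1+1) ≤ 5*u+2), if_neg (by omega : ¬ 5*(2*u+1+1) ≤ 5*u+2)]
  have e0 : 5*u+2 - 0*(2*u+1+1) = 5*u+2 := by omega
  have e1 : 5*u+2 - 1*(2*u+1+1) = 3*u := by omega
  have e2 : 5*u+2 - 2*(2*u+1+1) = u-2 := by omega
  rw [e0, e1, e2, card_Dset 4 (5*u+2), card_Dset 4 (3*u), card_Dset 4 (u-2)]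
  have f0 : 5*u+2+4 = 5*u+6 := by omega
  have f1 : 3*u+4 = 3*u+4 := rfl
  have f2 : u-2+4 = u+2 := by omega
  rw [f0, f2]
  norm_num [Nat.choose]
  ring

/-! ### The limit -/

lemma choose4_mul (x : ℕ) : (x+4).choose 4 * 24 = (x+1)*(x+2)*(x+3)*(x+4) := by
  have hd : Nat.factorial 4 ∣ (x+4).descFactorial 4 := Nat.factorial_dvd_descFactorial _ _
  have h24 : Nat.factorial 4 = 24 := rfl
  rw [Nat.choose_eq_descFactorial_div_factorial, h24]
  rw [h24] at hd
  rw [Nat.div_mul_cancel hd]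
  simp only [Nat.descFactorial_succ, Nat.descFactorial_zero, mul_one, Nat.sub_zero]
  rw [show x+4-3 = x+1 from by omega, show x+4-2 = x+2 from by omega,
    show x+4-1 = x+3 from by omega]
  ring

lemma choose4_cast (x : ℕ) :
    (((x+4).choose 4 : ℕ) : ℝ) = ((x:ℝ)+1)*((x:ℝ)+2)*((x:ℝ)+3)*((x:ℝ)+4)/24 := by
  rw [eq_div_iff (by norm_num : (24:ℝ) ≠ 0)]
  exact_mod_cast congrArg (Nat.cast : ℕ → ℝ) (choose4_mul x)

noncomputable def Godd : ℝ → ℝ := fun v =>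
  ((5+v)*(5+2*v)*(5+3*v)*(5+4*v) - 15*(3+v)*(3+2*v)*(3+3*v)
    + 10*(1-v)*(1+v)*(1+2*v)) / (24*(2+v)^4)

noncomputable def Geven : ℝ → ℝ := fun v =>
  ((5+3*v)*(5+4*v)*(5+5*v)*(5+6*v) - 5*(3+v)*(3+2*v)*(3+3*v)*(3+4*v)
    + 10*(1-v)*(1+v)*(1+2*v)) / (24*(2+2*v)^4)

lemma tendsto_Godd :
    Filter.Tendsto (fun u : ℕ => Godd (1/(u:ℝ))) Filter.atTop (nhds (115/192)) := by
  have h0 : ContinuousAt Godd 0 := by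
    apply ContinuousAt.div
    · fun_prop
    · fun_prop
    · norm_num
  have hval : Godd 0 = 115/192 := by norm_num [Godd]
  have := h0.tendsto.comp tendsto_one_div_atTop_nhds_zero_nat
  rwa [hval] at this

lemma tendsto_Geven :
    Filter.Tendsto (fun u : ℕ => Geven (1/(u:ℝ))) Filter.atTop (nhds (115/192)) := by
  have h0 : ContinuousAt Geven 0 := by
    apply ContinuousAt.div
    · fun_prop
    · fun_prop
    · norm_num
  have hval : Geven 0 = 115/192 := by norm_num [Geven]
  have := h0.tendsto.comp tendsto_one_div_atTop_nhds_zero_nat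
  rwa [hval] at this

lemma tendsto_odd :
    Filter.Tendsto (fun u : ℕ => ((mymid (2*u) 5).card : ℝ) / (((2*u+1 : ℕ)):ℝ)^4)
      Filter.atTop (nhds (115/192)) := by
  apply tendsto_Godd.congr'
  filter_upwards [Filter.eventually_ge_atTop 2] with u hu
  have hu0 : (u:ℝ) ≠ 0 := Nat.cast_ne_zero.mpr (by omega)
  have hc := midcard_odd u hu
  have hcr : ((mymid (2*u) 5).card : ℝ)
      = (((5*u+4).choose 4 : ℕ) : ℝ) - 5*(((3*u+3).choose 4 : ℕ):ℝ)
        + 10*(((u+2).choose 4 : ℕ):ℝ) := by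
    exact_mod_cast congrArg (Int.cast : ℤ → ℝ) hc
  have e1 : 3*u+3 = (3*u-1)+4 := by omega
  have e2 : u+2 = (u-2)+4 := by omega
  rw [hcr, e1, e2, choose4_cast (5*u), choose4_cast (3*u-1), choose4_cast (u-2),
    Nat.cast_sub (show 1 ≤ 3*u by omega), Nat.cast_sub (show 2 ≤ u by omega)]
  push_cast
  rw [Godd]
  have h2 : (2*(u:ℝ)+1) ≠ 0 := by positivity
  field_simp
  ring

lemma tendsto_even :
    Filter.Tendsto (fun u : ℕ => ((mymid (2*u+1) 5).card : ℝ) / (((2*u+2 : ℕ)):ℝ)^4)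
      Filter.atTop (nhds (115/192)) := by
  apply tendsto_Geven.congr'
  filter_upwards [Filter.eventually_ge_atTop 2] with u hu
  have hu0 : (u:ℝ) ≠ 0 := Nat.cast_ne_zero.mpr (by omega)
  have hc := midcard_even u hu
  have hcr : ((mymid (2*u+1) 5).card : ℝ)
      = (((5*u+6).choose 4 : ℕ) : ℝ) - 5*(((3*u+4).choose 4 : ℕ):ℝ)
        + 10*(((u+2).choose 4 : ℕ):ℝ) := by
    exact_mod_cast congrArg (Int.cast : ℤ → ℝ) hc
  have e0 : 5*u+6 = (5*u+2)+4 := by omega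
  have e1 : 3*u+4 = (3*u)+4 := rfl
  have e2 : u+2 = (u-2)+4 := by omega
  rw [hcr, e0, e2, choose4_cast (5*u+2), choose4_cast (3*u), choose4_cast (u-2),
    Nat.cast_sub (show 2 ≤ u by omega)]
  push_cast
  rw [Geven]
  have h2 : (2*(u:ℝ)+2) ≠ 0 := by positivity
  field_simp
  ring

lemma tendsto_parity (f : ℕ → ℝ) (c : ℝ)
    (h1 : Filter.Tendsto (fun u => f (2*u+1)) Filter.atTop (nhds c))
    (h2 : Filter.Tendsto (fun u => f (2*u+2)) Filter.atTop (nhds c)) :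
    Filter.Tendsto f Filter.atTop (nhds c) := by
  rw [Metric.tendsto_atTop] at h1 h2 ⊢
  intro ε hε
  obtain ⟨N1, hN1⟩ := h1 ε hε
  obtain ⟨N2, hN2⟩ := h2 ε hε
  refine ⟨2*N1 + 2*N2 + 1, fun n hn => ?_⟩
  rcases Nat.even_or_odd n with ⟨u, hu⟩ | ⟨u, hu⟩
  · have hn2 : n = 2*(u-1)+2 := by omega
    rw [hn2]
    exact hN2 (u-1) (by omega)
  · have hn2 : n = 2*u+1 := by omega
    rw [hn2]
    exact hN1 u (by omega)

/-- `S(m,5)/m⁴ → 115/192` as `m → ∞`. -/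
theorem max_antichain_five_limit :
    Tendsto (fun m : ℕ => (maxAntichainSize m 5 : ℝ) / (m : ℝ) ^ 4) atTop
      (nhds (115 / 192)) := by
  apply tendsto_parity
  · have hodd : ∀ u : ℕ, maxAntichainSize (2*u+1) 5 = (mymid (2*u) 5).card := by
      intro u
      rw [maxAntichainSize_eq (2*u+1) 5 (by omega)]
      congr 1
    have heq : ∀ u : ℕ, ((mymid (2*u) 5).card : ℝ) / (((2*u+1:ℕ)):ℝ)^4
        = (maxAntichainSize (2*u+1) 5 : ℝ) / (((2*u+1:ℕ)):ℝ)^4 := by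
      intro u
      rw [hodd u]
    exact Filter.Tendsto.congr heq tendsto_odd
  · have heven : ∀ u : ℕ, maxAntichainSize (2*u+2) 5 = (mymid (2*u+1) 5).card := by
      intro u
      rw [maxAntichainSize_eq (2*u+2) 5 (by omega)]
      congr 1
    have heq : ∀ u : ℕ, ((mymid (2*u+1) 5).card : ℝ) / (((2*u+2:ℕ)):ℝ)^4
        = (maxAntichainSize (2*u+2) 5 : ℝ) / (((2*u+2:ℕ)):ℝ)^4 := by
      intro u
      rw [heven u]
    exact Filter.Tendsto.congr heq tendsto_even
end
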